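/- arXiv:0704.2250 — 6 statements merged into one kernel-verified Lean document; each statement's English description precedes it below -/
import Mathlib

section
/- Let J be the set of Laurent polynomials f ∈ Z[x^{±1}, y_1^{±1}, …, y_n^{±1}] invariant under the group W generated by all permutations of the y_j and all sign inversions y_j ↦ y_j^{-1}, such that x·∂f/∂x + y_j·∂f/∂y_j lies in the ideal generated by (y_j − x) for each j = 1,…,n. Set u = x + x^{-1} and v_j = y_j + y_j^{-1}. Then J decomposes as a direct sum J = J⁺ ⊕ J⁻, where J⁻ = { x·∏_{j=1}^n (u − v_j)·g : g ∈ Z[u, v_1, …, v_n]^{S_n} } and J⁺ = { f ∈ Z[u, v_1, …, v_n]^{S_n} : u·∂f/∂u + v_j·∂f/∂v_j ∈ (u − v_j) for all j }. -/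
namespace Stmt2

variable (n : ℕ)

/-- the Laurent polynomial ring `ℤ[x^{±1}, y₁^{±1}, …, y_n^{±1}]`. -/
abbrev A (n : ℕ) := AddMonoidAlgebra ℤ (ℤ × (Fin n → ℤ))

noncomputable def X : A n := AddMonoidAlgebra.single (1, 0) 1
noncomputable def Y (j : Fin n) : A n := AddMonoidAlgebra.single (0, Pi.single j 1) 1
/-- `u = x + x⁻¹`. -/
noncomputable def u : A n :=
  AddMonoidAlgebra.single (1, 0) 1 + AddMonoidAlgebra.single (-1, 0) 1
/-- `v_j = y_j + y_j⁻¹`. -/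
noncomputable def v (j : Fin n) : A n :=
  AddMonoidAlgebra.single (0, Pi.single j 1) 1 + AddMonoidAlgebra.single (0, -Pi.single j 1) 1

/-- permutation of the `y` variables on exponents. -/
def permE (σ : Equiv.Perm (Fin n)) : (ℤ × (Fin n → ℤ)) ≃ (ℤ × (Fin n → ℤ)) :=
  Equiv.prodCongr (Equiv.refl ℤ) (Equiv.arrowCongr σ (Equiv.refl ℤ))

/-- inversion `y_j ↦ y_j⁻¹` on exponents. -/
def flipE (j : Fin n) : (ℤ × (Fin n → ℤ)) ≃ (ℤ × (Fin n → ℤ)) :=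
  Function.Involutive.toPerm (fun m => (m.1, Function.update m.2 j (-(m.2 j))))
    (by
      intro m
      refine Prod.ext rfl ?_
      funext i
      by_cases h : i = j
      · subst h; simp
      · simp [Function.update_of_ne h])

/-- the Euler operator `x∂/∂x + y_j∂/∂y_j`. -/
noncomputable def D (j : Fin n) (f : A n) : A n :=
  Finsupp.sum f.coeff fun m c => AddMonoidAlgebra.single m ((m.1 + m.2 j) * c)

/-- membership in the ring `ℤ[u, v₁, …, v_n]^{S_n}` together with a witnessing
symmetric polynomial. -/
def IsSym (p : MvPolynomial (Option (Fin n)) ℤ) : Prop :=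
  ∀ σ : Equiv.Perm (Fin n), MvPolynomial.rename (Option.map σ) p = p

/-- the ring `J = J(C(n))`. -/
def J : Set (A n) :=
  {f | (∀ σ : Equiv.Perm (Fin n), Finsupp.equivMapDomain (permE n σ) f.coeff = f.coeff) ∧
       (∀ j : Fin n, Finsupp.equivMapDomain (flipE n j) f.coeff = f.coeff) ∧
       (∀ j : Fin n, D n j f ∈ Ideal.span {Y n j - X n})}

/-- `J⁻ = x·∏_j (u − v_j)·ℤ[u,v]^{S_n}`. -/
noncomputable def Jminus : Set (A n) :=
  {f | ∃ p : MvPolynomial (Option (Fin n)) ℤ, IsSym n p ∧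
        f = X n * (∏ j : Fin n, (u n - v n j)) *
          MvPolynomial.aeval (fun o : Option (Fin n) => o.elim (u n) (v n)) p}

/-- `J⁺ = {f ∈ ℤ[u,v]^{S_n} : u∂f/∂u + v_j∂f/∂v_j ∈ (u − v_j) for all j}`. -/
noncomputable def Jplus : Set (A n) :=
  {f | ∃ p : MvPolynomial (Option (Fin n)) ℤ, IsSym n p ∧
        f = MvPolynomial.aeval (fun o : Option (Fin n) => o.elim (u n) (v n)) p ∧
        ∀ j : Fin n,
          MvPolynomial.X none * MvPolynomial.pderiv none p +
            MvPolynomial.X (some j) * MvPolynomial.pderiv (some j) p ∈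
          Ideal.span {(MvPolynomial.X none - MvPolynomial.X (some j) :
            MvPolynomial (Option (Fin n)) ℤ)}}

/-! ### Auxiliary setup -/

open AddMonoidAlgebra

abbrev T (n : ℕ) := MvPolynomial (Option (Fin n)) ℤ

noncomputable def Phi : T n →ₐ[ℤ] A n :=
  MvPolynomial.aeval (fun o : Option (Fin n) => o.elim (u n) (v n))

noncomputable def X' : A n := AddMonoidAlgebra.single (-1, 0) 1
noncomputable def Y' (j : Fin n) : A n := AddMonoidAlgebra.single (0, -Pi.single j 1) 1

lemma u_def : u n = X n + X' n := rfl
lemma v_def (j : Fin n) : v n j = Y n j + Y' n j := rfl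

lemma X_mul_X' : X n * X' n = 1 := by
  rw [X, X', AddMonoidAlgebra.single_mul_single, one_mul, AddMonoidAlgebra.one_def]
  congr 1

lemma X_sq : X n * X n = u n * X n - 1 := by
  rw [u_def, add_mul, mul_comm (X' n) (X n), X_mul_X']; ring

/-- additive versions of the exponent equivalences -/
def permA (σ : Equiv.Perm (Fin n)) : (ℤ × (Fin n → ℤ)) ≃+ (ℤ × (Fin n → ℤ)) :=
  { permE n σ with map_add' := fun _ _ => rfl }

lemma flipE_apply (j : Fin n) (m : ℤ × (Fin n → ℤ)) :
    flipE n j m = (m.1, Function.update m.2 j (-(m.2 j))) := rfl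

def flipA (j : Fin n) : (ℤ × (Fin n → ℤ)) ≃+ (ℤ × (Fin n → ℤ)) :=
  { flipE n j with
    map_add' := by
      intro a b
      refine Prod.ext rfl ?_
      show Function.update (a.2 + b.2) j (-((a.2 + b.2) j)) =
        Function.update a.2 j (-(a.2 j)) + Function.update b.2 j (-(b.2 j))
      funext i
      by_cases h : i = j
      · subst h; simp; ring
      · simp [Function.update_of_ne h] }

def negA : (ℤ × (Fin n → ℤ)) ≃+ (ℤ × (Fin n → ℤ)) :=
  (AddEquiv.neg ℤ).prodCongr (AddEquiv.refl _)

lemma permA_apply (σ : Equiv.Perm (Fin n)) (m : ℤ × (Fin n → ℤ)) :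
    permA n σ m = (m.1, fun i => m.2 (σ.symm i)) := rfl

lemma flipA_apply (j : Fin n) (m : ℤ × (Fin n → ℤ)) :
    flipA n j m = (m.1, Function.update m.2 j (-(m.2 j))) := rfl

lemma negA_apply (m : ℤ × (Fin n → ℤ)) : negA n m = (-m.1, m.2) := rfl

lemma emd_perm (σ : Equiv.Perm (Fin n)) (f : A n) :
    Finsupp.equivMapDomain (permE n σ) f.coeff = (AddMonoidAlgebra.domCongr ℤ ℤ (permA n σ) f).coeff := by
  ext m
  rw [Finsupp.equivMapDomain_apply, AddMonoidAlgebra.coeff_domCongr]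
  rfl

lemma emd_flip (j : Fin n) (f : A n) :
    Finsupp.equivMapDomain (flipE n j) f.coeff = (AddMonoidAlgebra.domCongr ℤ ℤ (flipA n j) f).coeff := by
  ext m
  rw [Finsupp.equivMapDomain_apply, AddMonoidAlgebra.coeff_domCongr]
  rfl

/-! ### action of the equivalences on generators -/

noncomputable abbrev dc (e : (ℤ × (Fin n → ℤ)) ≃+ (ℤ × (Fin n → ℤ))) : A n ≃ₐ[ℤ] A n :=
  AddMonoidAlgebra.domCongr ℤ ℤ e

lemma dc_single (e : (ℤ × (Fin n → ℤ)) ≃+ (ℤ × (Fin n → ℤ))) (m : ℤ × (Fin n → ℤ)) (c : ℤ) :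
    dc n e (AddMonoidAlgebra.single m c) = AddMonoidAlgebra.single (e m) c :=
  AddMonoidAlgebra.domCongr_single e m c

lemma dc_perm_X (σ : Equiv.Perm (Fin n)) : dc n (permA n σ) (X n) = X n := by
  rw [X, dc_single]; rfl

lemma dc_perm_X' (σ : Equiv.Perm (Fin n)) : dc n (permA n σ) (X' n) = X' n := by
  rw [X', dc_single]; rfl

lemma dc_perm_u (σ : Equiv.Perm (Fin n)) : dc n (permA n σ) (u n) = u n := by
  rw [u_def, map_add, dc_perm_X, dc_perm_X']

lemma perm_single_aux (σ : Equiv.Perm (Fin n)) (j : Fin n) (c : ℤ) :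
    (fun i => (Pi.single j c : Fin n → ℤ) (σ.symm i)) = (Pi.single (σ j) c : Fin n → ℤ) := by
  funext i
  simp only [Pi.single_apply]
  by_cases h : i = σ j
  · rw [if_pos (by rw [h]; simp), if_pos h]
  · rw [if_neg (by intro hc; apply h; rw [← hc]; simp), if_neg h]

lemma dc_perm_v (σ : Equiv.Perm (Fin n)) (j : Fin n) : dc n (permA n σ) (v n j) = v n (σ j) := by
  rw [v, map_add, dc_single, dc_single, v]
  congr 2
  · exact Prod.ext rfl (perm_single_aux n σ j 1)
  · refine Prod.ext rfl ?_
    show (fun i => (-Pi.single j 1 : Fin n → ℤ) (σ.symm i)) = -Pi.single (σ j) 1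
    have := perm_single_aux n σ j (-1 : ℤ)
    simp only [Pi.single_neg] at this ⊢
    exact this

lemma dc_perm_Phi (σ : Equiv.Perm (Fin n)) (p : T n) :
    dc n (permA n σ) (Phi n p) = Phi n (MvPolynomial.rename (Option.map σ) p) := by
  have h : ((dc n (permA n σ)).toAlgHom.comp (Phi n)) =
      (Phi n).comp (MvPolynomial.rename (Option.map σ)) := by
    apply MvPolynomial.algHom_ext
    intro o
    cases o with
    | none => simp [Phi, dc_perm_u]
    | some i => simp [Phi, dc_perm_v]
  exact AlgHom.congr_fun h p

lemma dc_flip_X (j : Fin n) : dc n (flipA n j) (X n) = X n := by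
  rw [X, dc_single]
  congr 1
  refine Prod.ext rfl ?_
  show Function.update (0 : Fin n → ℤ) j (-(0:ℤ)) = 0
  simp

lemma dc_flip_X' (j : Fin n) : dc n (flipA n j) (X' n) = X' n := by
  rw [X', dc_single]
  congr 1
  refine Prod.ext rfl ?_
  show Function.update (0 : Fin n → ℤ) j (-(0:ℤ)) = 0
  simp

lemma dc_flip_u (j : Fin n) : dc n (flipA n j) (u n) = u n := by
  rw [u_def, map_add, dc_flip_X, dc_flip_X']

lemma update_single_self (j : Fin n) (c : ℤ) :
    Function.update (Pi.single j c : Fin n → ℤ) j (-((Pi.single j c : Fin n → ℤ) j)) =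
      Pi.single j (-c) := by
  funext i
  by_cases h : i = j
  · subst h; simp
  · simp [Function.update_of_ne h, Pi.single_apply, h]

lemma dc_flip_Y_self (j : Fin n) : dc n (flipA n j) (Y n j) = Y' n j := by
  rw [Y, Y', dc_single]
  congr 1
  refine Prod.ext rfl ?_
  show Function.update (Pi.single j 1 : Fin n → ℤ) j (-((Pi.single j 1 : Fin n → ℤ) j)) =
    -Pi.single j 1
  rw [update_single_self]
  simp [Pi.single_neg]

lemma dc_flip_Y'_self (j : Fin n) : dc n (flipA n j) (Y' n j) = Y n j := by
  rw [Y, Y', dc_single]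
  congr 1
  refine Prod.ext rfl ?_
  show Function.update (-Pi.single j 1 : Fin n → ℤ) j (-((-Pi.single j 1 : Fin n → ℤ) j)) =
    Pi.single j 1
  have := update_single_self n j (-1 : ℤ)
  simp only [Pi.single_neg, neg_neg] at this ⊢
  rw [this]

lemma dc_flip_v (j i : Fin n) : dc n (flipA n j) (v n i) = v n i := by
  by_cases h : i = j
  · subst h
    rw [v_def, map_add, dc_flip_Y_self, dc_flip_Y'_self, add_comm]
  · rw [v, map_add, dc_single, dc_single]
    have hz : (Pi.single i 1 : Fin n → ℤ) j = 0 := by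
      rw [Pi.single_apply, if_neg (fun (hc : j = i) => h hc.symm)]
    have h1 : flipA n j (0, Pi.single i 1) = ((0:ℤ), (Pi.single i 1 : Fin n → ℤ)) := by
      refine Prod.ext rfl ?_
      show Function.update (Pi.single i 1 : Fin n → ℤ) j (-((Pi.single i 1 : Fin n → ℤ) j)) = _
      rw [hz, neg_zero, ← hz, Function.update_eq_self]
    have h2 : flipA n j (0, -Pi.single i 1) = ((0:ℤ), (-Pi.single i 1 : Fin n → ℤ)) := by
      refine Prod.ext rfl ?_
      show Function.update (-Pi.single i 1 : Fin n → ℤ) j (-((-Pi.single i 1 : Fin n → ℤ) j)) = _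
      have hz2 : (-Pi.single i 1 : Fin n → ℤ) j = 0 := by rw [Pi.neg_apply, hz, neg_zero]
      rw [hz2, neg_zero, ← hz2, Function.update_eq_self]
    rw [h1, h2]

lemma dc_flip_Phi (j : Fin n) (p : T n) : dc n (flipA n j) (Phi n p) = Phi n p := by
  have h : ((dc n (flipA n j)).toAlgHom.comp (Phi n)) = Phi n := by
    apply MvPolynomial.algHom_ext
    intro o
    cases o with
    | none => simp [Phi, dc_flip_u]
    | some i => simp [Phi, dc_flip_v]
  exact AlgHom.congr_fun h p

lemma dc_neg_X : dc n (negA n) (X n) = X' n := by rw [X, X', dc_single]; rfl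

lemma dc_neg_X' : dc n (negA n) (X' n) = X n := by
  have h : (negA n) (-1, 0) = ((1:ℤ), (0 : Fin n → ℤ)) := Prod.ext (by norm_num [negA_apply]) rfl
  rw [X', dc_single, h, X]

lemma dc_neg_u : dc n (negA n) (u n) = u n := by
  rw [u_def, map_add, dc_neg_X, dc_neg_X', add_comm]

lemma dc_neg_v (i : Fin n) : dc n (negA n) (v n i) = v n i := by
  have h1 : (negA n) (0, Pi.single i 1) = ((0:ℤ), (Pi.single i 1 : Fin n → ℤ)) :=
    Prod.ext (by norm_num [negA_apply]) rfl
  have h2 : (negA n) (0, -Pi.single i 1) = ((0:ℤ), (-Pi.single i 1 : Fin n → ℤ)) :=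
    Prod.ext (by norm_num [negA_apply]) rfl
  rw [v, map_add, dc_single, dc_single, h1, h2]

lemma dc_neg_Phi (p : T n) : dc n (negA n) (Phi n p) = Phi n p := by
  have h : ((dc n (negA n)).toAlgHom.comp (Phi n)) = Phi n := by
    apply MvPolynomial.algHom_ext
    intro o
    cases o with
    | none => simp [Phi, dc_neg_u]
    | some i => simp [Phi, dc_neg_v]
  exact AlgHom.congr_fun h p

/-! ### the evaluation `y_j ↦ x` -/

def collapse (j : Fin n) : Option (Fin n) → Option (Fin n) := fun o =>
  match o with
  | none => none
  | some i => if i = j then none else some i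

def eAdd (j : Fin n) : (ℤ × (Fin n → ℤ)) →+ (ℤ × (Fin n → ℤ)) where
  toFun m := (m.1 + m.2 j, Function.update m.2 j 0)
  map_zero' := by
    refine Prod.ext (by simp) ?_
    show Function.update (0 : Fin n → ℤ) j 0 = 0
    simp
  map_add' a b := by
    refine Prod.ext ?_ ?_
    · show (a.1 + b.1) + (a.2 + b.2) j = (a.1 + a.2 j) + (b.1 + b.2 j)
      show (a.1 + b.1) + (a.2 j + b.2 j) = _
      ring
    · show Function.update (a.2 + b.2) j 0 =
        Function.update a.2 j 0 + Function.update b.2 j 0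
      funext i
      by_cases h : i = j
      · subst h; simp
      · simp [Function.update_of_ne h]

lemma eAdd_apply (j : Fin n) (m : ℤ × (Fin n → ℤ)) :
    eAdd n j m = (m.1 + m.2 j, Function.update m.2 j 0) := rfl

noncomputable def eps (j : Fin n) : A n →ₐ[ℤ] A n :=
  AddMonoidAlgebra.mapDomainAlgHom ℤ ℤ (eAdd n j)

lemma eps_single (j : Fin n) (m : ℤ × (Fin n → ℤ)) (c : ℤ) :
    eps n j (AddMonoidAlgebra.single m c) = AddMonoidAlgebra.single (eAdd n j m) c := by
  show AddMonoidAlgebra.mapDomain (eAdd n j) (AddMonoidAlgebra.single m c) = _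
  exact AddMonoidAlgebra.mapDomain_single

lemma eAdd_X (j : Fin n) : eAdd n j ((1:ℤ), (0 : Fin n → ℤ)) = (1, 0) := by
  refine Prod.ext (by rw [eAdd_apply]; simp) ?_
  show Function.update (0 : Fin n → ℤ) j 0 = 0
  simp

lemma eAdd_X' (j : Fin n) : eAdd n j ((-1:ℤ), (0 : Fin n → ℤ)) = (-1, 0) := by
  refine Prod.ext (by rw [eAdd_apply]; simp) ?_
  show Function.update (0 : Fin n → ℤ) j 0 = 0
  simp

lemma update_single_zero (j : Fin n) (c : ℤ) :
    Function.update (Pi.single j c : Fin n → ℤ) j 0 = 0 := by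
  funext i
  by_cases h : i = j
  · subst h; simp
  · simp [Function.update_of_ne h, Pi.single_apply, h]

lemma eAdd_Y_self (j : Fin n) : eAdd n j ((0:ℤ), (Pi.single j 1 : Fin n → ℤ)) = (1, 0) := by
  refine Prod.ext (by rw [eAdd_apply]; simp) ?_
  exact update_single_zero n j 1

lemma eAdd_Y'_self (j : Fin n) : eAdd n j ((0:ℤ), (-Pi.single j 1 : Fin n → ℤ)) = (-1, 0) := by
  refine Prod.ext (by rw [eAdd_apply]; simp) ?_
  show Function.update (-Pi.single j 1 : Fin n → ℤ) j 0 = 0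
  have := update_single_zero n j (-1 : ℤ)
  rwa [Pi.single_neg] at this

lemma eps_X (j : Fin n) : eps n j (X n) = X n := by
  rw [X, eps_single, eAdd_X]

lemma eps_X' (j : Fin n) : eps n j (X' n) = X' n := by
  rw [X', eps_single, eAdd_X']

lemma eps_u (j : Fin n) : eps n j (u n) = u n := by
  rw [u_def, map_add, eps_X, eps_X']

lemma eps_Y_self (j : Fin n) : eps n j (Y n j) = X n := by
  rw [Y, X, eps_single, eAdd_Y_self]

lemma eps_Y'_self (j : Fin n) : eps n j (Y' n j) = X' n := by
  rw [Y', X', eps_single, eAdd_Y'_self]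

lemma eps_v_self (j : Fin n) : eps n j (v n j) = u n := by
  rw [v_def, map_add, eps_Y_self, eps_Y'_self, u_def]

lemma eps_v_ne (j i : Fin n) (h : i ≠ j) : eps n j (v n i) = v n i := by
  have hz : (Pi.single i 1 : Fin n → ℤ) j = 0 := by
    rw [Pi.single_apply, if_neg (fun (hc : j = i) => h hc.symm)]
  have h1 : eAdd n j ((0:ℤ), (Pi.single i 1 : Fin n → ℤ)) = (0, Pi.single i 1) := by
    refine Prod.ext (by rw [eAdd_apply]; simp [hz]) ?_
    show Function.update (Pi.single i 1 : Fin n → ℤ) j 0 = Pi.single i 1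
    rw [← hz, Function.update_eq_self]
  have h2 : eAdd n j ((0:ℤ), (-Pi.single i 1 : Fin n → ℤ)) = (0, -Pi.single i 1) := by
    have hz2 : (-Pi.single i 1 : Fin n → ℤ) j = 0 := by rw [Pi.neg_apply, hz, neg_zero]
    refine Prod.ext (by rw [eAdd_apply]; simp [hz2]) ?_
    show Function.update (-Pi.single i 1 : Fin n → ℤ) j 0 = -Pi.single i 1
    rw [← hz2, Function.update_eq_self]
  rw [v, map_add, eps_single, eps_single, h1, h2]

lemma eps_Phi (j : Fin n) (p : T n) :
    eps n j (Phi n p) = Phi n (MvPolynomial.rename (collapse n j) p) := by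
  have h : ((eps n j).comp (Phi n)) = (Phi n).comp (MvPolynomial.rename (collapse n j)) := by
    apply MvPolynomial.algHom_ext
    intro o
    cases o with
    | none => simp [Phi, collapse, eps_u]
    | some i =>
      by_cases hij : i = j
      · subst hij
        simp [Phi, collapse, eps_v_self]
      · simp [Phi, collapse, hij, eps_v_ne n j i hij]
  exact AlgHom.congr_fun h p

/-! ### the Euler operator -/

lemma D_single (j : Fin n) (m : ℤ × (Fin n → ℤ)) (c : ℤ) :
    D n j (AddMonoidAlgebra.single m c) = AddMonoidAlgebra.single m ((m.1 + m.2 j) * c) := by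
  unfold D
  rw [AddMonoidAlgebra.coeff_single]
  exact Finsupp.sum_single_index (by simp)

lemma D_zero (j : Fin n) : D n j 0 = 0 := by
  unfold D
  rw [AddMonoidAlgebra.coeff_zero]
  exact Finsupp.sum_zero_index

lemma D_add (j : Fin n) (f g : A n) : D n j (f + g) = D n j f + D n j g := by
  unfold D
  rw [AddMonoidAlgebra.coeff_add]
  exact Finsupp.sum_add_index' (fun m => by simp) (fun m c1 c2 => by rw [mul_add]; exact AddMonoidAlgebra.single_add _ _ _)

lemma D_sub (j : Fin n) (f g : A n) : D n j (f - g) = D n j f - D n j g := by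
  have := (AddMonoidHom.mk' (D n j) (D_add n j)).map_sub f g
  exact this

lemma D_smul (j : Fin n) (c : ℤ) (f : A n) : D n j (c • f) = c • D n j f := by
  have := (AddMonoidHom.mk' (D n j) (D_add n j)).map_zsmul c f
  exact this

lemma D_mul (j : Fin n) (f g : A n) : D n j (f * g) = D n j f * g + f * D n j g := by
  induction f using AddMonoidAlgebra.induction_linear with
  | zero => simp [D_zero]
  | add f1 f2 h1 h2 =>
    rw [add_mul, D_add, D_add, h1, h2, add_mul]
    ring
  | single m c =>
    induction g using AddMonoidAlgebra.induction_linear with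
    | zero => simp [D_zero]
    | add g1 g2 h1 h2 =>
      rw [mul_add, D_add, D_add, h1, h2, mul_add]
      ring
    | single m' c' =>
      show D n j (AddMonoidAlgebra.single m c * AddMonoidAlgebra.single m' c') = _
      rw [AddMonoidAlgebra.single_mul_single, D_single, D_single, D_single,
        AddMonoidAlgebra.single_mul_single, AddMonoidAlgebra.single_mul_single,
        ← AddMonoidAlgebra.single_add]
      congr 1
      show ((m.1 + m'.1) + (m.2 j + m'.2 j)) * (c * c') = _
      ring

lemma D_X (j : Fin n) : D n j (X n) = X n := by
  rw [X, D_single]; norm_num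

lemma D_X' (j : Fin n) : D n j (X' n) = -X' n := by
  rw [X', D_single]; norm_num

lemma D_u (j : Fin n) : D n j (u n) = X n - X' n := by
  rw [u_def, D_add, D_X, D_X']; ring

lemma D_Y_self (j : Fin n) : D n j (Y n j) = Y n j := by
  rw [Y, D_single]; norm_num

lemma D_Y'_self (j : Fin n) : D n j (Y' n j) = -Y' n j := by
  rw [Y', D_single]
  show AddMonoidAlgebra.single _ ((0 + (-Pi.single j 1 : Fin n → ℤ) j) * 1) = _
  simp [Finsupp.single_neg]

lemma D_v_self (j : Fin n) : D n j (v n j) = Y n j - Y' n j := by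
  rw [v_def, D_add, D_Y_self, D_Y'_self]; ring

lemma D_v_ne (j i : Fin n) (h : i ≠ j) : D n j (v n i) = 0 := by
  have hz : (Pi.single i 1 : Fin n → ℤ) j = 0 := by
    rw [Pi.single_apply, if_neg (fun (hc : j = i) => h hc.symm)]
  have hz2 : (-Pi.single i 1 : Fin n → ℤ) j = 0 := by rw [Pi.neg_apply, hz, neg_zero]
  rw [v, D_add, D_single, D_single]
  show AddMonoidAlgebra.single _ ((0 + (Pi.single i 1 : Fin n → ℤ) j) * 1) +
    AddMonoidAlgebra.single _ ((0 + (-Pi.single i 1 : Fin n → ℤ) j) * 1) = 0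
  rw [hz, hz2]
  simp

lemma D_one (j : Fin n) : D n j 1 = 0 := by
  rw [AddMonoidAlgebra.one_def, D_single]
  show AddMonoidAlgebra.single _ (((0:ℤ) + (0 : Fin n → ℤ) j) * 1) = 0
  simp

lemma D_algebraMap (j : Fin n) (c : ℤ) : D n j (algebraMap ℤ (A n) c) = 0 := by
  have : algebraMap ℤ (A n) c = c • (1 : A n) := by
    rw [Algebra.algebraMap_eq_smul_one]
  rw [this, D_smul, D_one, smul_zero]

lemma D_Phi (j : Fin n) (p : T n) :
    D n j (Phi n p) = Phi n (MvPolynomial.pderiv none p) * (X n - X' n) +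
      Phi n (MvPolynomial.pderiv (some j) p) * (Y n j - Y' n j) := by
  induction p using MvPolynomial.induction_on with
  | C a =>
    rw [show (Phi n) (MvPolynomial.C a) = algebraMap ℤ (A n) a by simp [Phi], D_algebraMap]
    simp
  | add p q hp hq =>
    rw [map_add, D_add, hp, hq, map_add, map_add, map_add, map_add]
    ring
  | mul_X p o hp =>
    cases o with
    | none =>
      have e1 : MvPolynomial.pderiv (none : Option (Fin n)) (p * MvPolynomial.X none) =
          MvPolynomial.pderiv none p * MvPolynomial.X none + p := by
        rw [MvPolynomial.pderiv_mul, MvPolynomial.pderiv_X_self, mul_one]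
      have e2 : MvPolynomial.pderiv (some j) (p * MvPolynomial.X (none : Option (Fin n))) =
          MvPolynomial.pderiv (some j) p * MvPolynomial.X none := by
        rw [MvPolynomial.pderiv_mul, MvPolynomial.pderiv_X_of_ne (by simp), mul_zero, add_zero]
      have e3 : (Phi n) (MvPolynomial.X (none : Option (Fin n))) = u n := by simp [Phi]
      rw [map_mul, D_mul, hp, e1, e2, map_add, map_mul, map_mul, e3, D_u]
      ring
    | some i =>
      have e3 : (Phi n) (MvPolynomial.X (some i)) = v n i := by simp [Phi]
      have e2 : MvPolynomial.pderiv (none : Option (Fin n)) (p * MvPolynomial.X (some i)) =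
          MvPolynomial.pderiv none p * MvPolynomial.X (some i) := by
        rw [MvPolynomial.pderiv_mul, MvPolynomial.pderiv_X_of_ne (by simp), mul_zero, add_zero]
      by_cases hij : i = j
      · subst hij
        have e1 : MvPolynomial.pderiv (some i) (p * MvPolynomial.X (some i)) =
            MvPolynomial.pderiv (some i) p * MvPolynomial.X (some i) + p := by
          rw [MvPolynomial.pderiv_mul, MvPolynomial.pderiv_X_self, mul_one]
        rw [map_mul, D_mul, hp, e1, e2, map_add, map_mul, map_mul, e3, D_v_self]
        ring
      · have e1 : MvPolynomial.pderiv (some j) (p * MvPolynomial.X (some i)) =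
            MvPolynomial.pderiv (some j) p * MvPolynomial.X (some i) := by
          rw [MvPolynomial.pderiv_mul,
            MvPolynomial.pderiv_X_of_ne (by simp only [ne_eq, Option.some.injEq]; exact hij),
            mul_zero, add_zero]
        rw [map_mul, D_mul, hp, e1, e2, map_mul, map_mul, e3, D_v_ne n j i hij]
        ring

lemma eps_D (j : Fin n) (f : A n) : eps n j (D n j f) = D n j (eps n j f) := by
  induction f using AddMonoidAlgebra.induction_linear with
  | zero => rw [D_zero, map_zero, D_zero]
  | add f g hf hg => rw [D_add, map_add, map_add, D_add, hf, hg]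
  | single m c =>
    show eps n j (D n j (AddMonoidAlgebra.single m c)) = D n j (eps n j (AddMonoidAlgebra.single m c))
    rw [D_single, eps_single, eps_single, D_single]
    congr 1
    rw [eAdd_apply]
    show (m.1 + m.2 j) * c = ((m.1 + m.2 j) + Function.update m.2 j 0 j) * c
    simp

/-! ### nonvanishing and kernel of the evaluations -/

example : NoZeroDivisors (A 0) := inferInstance

lemma pi_single_add (j : Fin n) (a b : ℤ) :
    (Pi.single j a : Fin n → ℤ) + Pi.single j b = Pi.single j (a + b) := by
  funext i
  by_cases h : i = j
  · subst h; simp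
  · simp [Pi.single_apply, h]

lemma pair_ne : ((-1:ℤ), (0:Fin n → ℤ)) ≠ ((1:ℤ), 0) := by
  intro h
  have := congrArg Prod.fst h
  norm_num at this

lemma Xdiff_ne_zero : X n - X' n ≠ 0 := by
  intro h
  have h1 : (X n - X' n).coeff ((1:ℤ), (0:Fin n → ℤ)) = 1 := by
    rw [AddMonoidAlgebra.coeff_sub, Finsupp.sub_apply]
    show (Finsupp.single ((1:ℤ), (0:Fin n → ℤ)) (1:ℤ)) (1, 0) -
      (Finsupp.single ((-1:ℤ), (0:Fin n → ℤ)) (1:ℤ)) (1, 0) = 1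
    rw [Finsupp.single_eq_same, Finsupp.single_eq_of_ne (pair_ne n).symm, sub_zero]
  rw [h] at h1
  simp at h1

lemma uv_ne_zero (j : Fin n) : u n - v n j ≠ 0 := by
  intro h
  have h1 : (u n - v n j).coeff ((1:ℤ), (0:Fin n → ℤ)) = 1 := by
    rw [AddMonoidAlgebra.coeff_sub, Finsupp.sub_apply, u, v, AddMonoidAlgebra.coeff_add,
      AddMonoidAlgebra.coeff_add, Finsupp.add_apply, Finsupp.add_apply]
    have e1 : (Finsupp.single ((1:ℤ), (0:Fin n → ℤ)) (1:ℤ)) ((1:ℤ), (0:Fin n → ℤ)) = 1 :=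
      Finsupp.single_eq_same
    have e2 : (Finsupp.single ((-1:ℤ), (0:Fin n → ℤ)) (1:ℤ)) ((1:ℤ), (0:Fin n → ℤ)) = 0 :=
      Finsupp.single_eq_of_ne (pair_ne n).symm
    have e3 : (Finsupp.single ((0:ℤ), (Pi.single j 1 : Fin n → ℤ)) (1:ℤ))
        ((1:ℤ), (0:Fin n → ℤ)) = 0 :=
      Finsupp.single_eq_of_ne (fun hc => by have := congrArg Prod.fst hc; norm_num at this)
    have e4 : (Finsupp.single ((0:ℤ), (-Pi.single j 1 : Fin n → ℤ)) (1:ℤ))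
        ((1:ℤ), (0:Fin n → ℤ)) = 0 :=
      Finsupp.single_eq_of_ne (fun hc => by have := congrArg Prod.fst hc; norm_num at this)
    show (Finsupp.single ((1:ℤ), (0:Fin n → ℤ)) (1:ℤ)) ((1:ℤ), (0:Fin n → ℤ)) +
        (Finsupp.single ((-1:ℤ), (0:Fin n → ℤ)) (1:ℤ)) ((1:ℤ), (0:Fin n → ℤ)) -
        ((Finsupp.single ((0:ℤ), (Pi.single j 1 : Fin n → ℤ)) (1:ℤ)) ((1:ℤ), (0:Fin n → ℤ)) +
         (Finsupp.single ((0:ℤ), (-Pi.single j 1 : Fin n → ℤ)) (1:ℤ)) ((1:ℤ), (0:Fin n → ℤ))) = 1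
    rw [e1, e2, e3, e4]
    norm_num
  rw [h] at h1
  simp at h1

lemma mem_span_nat (j : Fin n) (N : ℕ) :
    (AddMonoidAlgebra.single ((0:ℤ), (Pi.single j (N:ℤ) : Fin n → ℤ)) 1 : A n) -
      AddMonoidAlgebra.single (((N:ℤ)), (0:Fin n → ℤ)) 1 ∈ Ideal.span {Y n j - X n} := by
  induction N with
  | zero =>
    have : (Pi.single j ((0:ℕ):ℤ) : Fin n → ℤ) = 0 := by
      funext i; simp [Pi.single_apply]
    rw [this]
    norm_num
  | succ N ih =>
    have a1 : (AddMonoidAlgebra.single ((0:ℤ), (Pi.single j (N:ℤ) : Fin n → ℤ)) 1 : A n) * Y n j =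
        AddMonoidAlgebra.single ((0:ℤ), (Pi.single j ((N:ℕ)+1:ℤ) : Fin n → ℤ)) 1 := by
      rw [Y, AddMonoidAlgebra.single_mul_single, mul_one]
      congr 1
      refine Prod.ext (by norm_num) ?_
      show (Pi.single j (N:ℤ) : Fin n → ℤ) + Pi.single j 1 = _
      rw [pi_single_add]
    have a2 : (AddMonoidAlgebra.single (((N:ℤ)), (0:Fin n → ℤ)) 1 : A n) * Y n j =
        AddMonoidAlgebra.single (((N:ℤ)), (Pi.single j 1 : Fin n → ℤ)) 1 := by
      rw [Y, AddMonoidAlgebra.single_mul_single, mul_one]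
      congr 1
      exact Prod.ext (by norm_num) (by show (0:Fin n → ℤ) + Pi.single j 1 = _; simp)
    have a3 : (AddMonoidAlgebra.single (((N:ℤ)), (0:Fin n → ℤ)) 1 : A n) * X n =
        AddMonoidAlgebra.single (((N:ℕ)+1:ℤ), (0:Fin n → ℤ)) 1 := by
      rw [X, AddMonoidAlgebra.single_mul_single, mul_one]
      congr 1
    have key : (AddMonoidAlgebra.single ((0:ℤ), (Pi.single j ((N:ℕ)+1:ℤ) : Fin n → ℤ)) 1 : A n) -
        AddMonoidAlgebra.single (((N:ℕ)+1:ℤ), (0:Fin n → ℤ)) 1 =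
        ((AddMonoidAlgebra.single ((0:ℤ), (Pi.single j (N:ℤ) : Fin n → ℤ)) 1 : A n) -
          AddMonoidAlgebra.single (((N:ℤ)), (0:Fin n → ℤ)) 1) * Y n j +
        (AddMonoidAlgebra.single (((N:ℤ)), (0:Fin n → ℤ)) 1 : A n) * (Y n j - X n) := by
      rw [sub_mul, mul_sub, a1, a2, a3]
      ring
    push_cast
    rw [key]
    exact add_mem (Ideal.mul_mem_right _ _ ih)
      (Ideal.mul_mem_left _ _ (Ideal.subset_span (Set.mem_singleton _)))

lemma mem_span_int (j : Fin n) (k : ℤ) :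
    (AddMonoidAlgebra.single ((0:ℤ), (Pi.single j k : Fin n → ℤ)) 1 : A n) -
      AddMonoidAlgebra.single ((k:ℤ), (0:Fin n → ℤ)) 1 ∈ Ideal.span {Y n j - X n} := by
  obtain ⟨N, hN | hN⟩ := Int.eq_nat_or_neg k
  · subst hN; exact mem_span_nat n j N
  · subst hN
    have P1 : (AddMonoidAlgebra.single ((0:ℤ), (Pi.single j (-(N:ℤ)) : Fin n → ℤ)) 1 : A n) *
        AddMonoidAlgebra.single ((-(N:ℤ)), (0:Fin n → ℤ)) 1 *
        AddMonoidAlgebra.single ((0:ℤ), (Pi.single j (N:ℤ) : Fin n → ℤ)) 1 =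
        AddMonoidAlgebra.single ((-(N:ℤ)), (0:Fin n → ℤ)) 1 := by
      rw [AddMonoidAlgebra.single_mul_single, AddMonoidAlgebra.single_mul_single,
        mul_one, mul_one]
      congr 1
      refine Prod.ext (by norm_num) ?_
      show (Pi.single j (-(N:ℤ)) : Fin n → ℤ) + 0 + Pi.single j (N:ℤ) = 0
      rw [add_zero, pi_single_add]
      simp
    have P2 : (AddMonoidAlgebra.single ((0:ℤ), (Pi.single j (-(N:ℤ)) : Fin n → ℤ)) 1 : A n) *
        AddMonoidAlgebra.single ((-(N:ℤ)), (0:Fin n → ℤ)) 1 *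
        AddMonoidAlgebra.single (((N:ℤ)), (0:Fin n → ℤ)) 1 =
        AddMonoidAlgebra.single ((0:ℤ), (Pi.single j (-(N:ℤ)) : Fin n → ℤ)) 1 := by
      rw [AddMonoidAlgebra.single_mul_single, AddMonoidAlgebra.single_mul_single,
        mul_one, mul_one]
      congr 1
      refine Prod.ext (by norm_num) ?_
      show (Pi.single j (-(N:ℤ)) : Fin n → ℤ) + 0 + 0 = Pi.single j (-(N:ℤ))
      simp
    have key : (AddMonoidAlgebra.single ((0:ℤ), (Pi.single j (-(N:ℤ)) : Fin n → ℤ)) 1 : A n) -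
        AddMonoidAlgebra.single ((-(N:ℤ)), (0:Fin n → ℤ)) 1 =
        -((AddMonoidAlgebra.single ((0:ℤ), (Pi.single j (-(N:ℤ)) : Fin n → ℤ)) 1 : A n) *
          AddMonoidAlgebra.single ((-(N:ℤ)), (0:Fin n → ℤ)) 1 *
          ((AddMonoidAlgebra.single ((0:ℤ), (Pi.single j (N:ℤ) : Fin n → ℤ)) 1 : A n) -
            AddMonoidAlgebra.single (((N:ℤ)), (0:Fin n → ℤ)) 1)) := by
      rw [mul_sub, P1, P2]
      ring
    rw [key]
    exact neg_mem (Ideal.mul_mem_left _ _ (mem_span_nat n j N))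

lemma sub_eps_mem (j : Fin n) (f : A n) : f - eps n j f ∈ Ideal.span {Y n j - X n} := by
  have main : ∀ f : A n,
      (AddMonoidHom.id (A n) - (eps n j).toLinearMap.toAddMonoidHom) f ∈
        Ideal.span {Y n j - X n} := by
    intro f
    induction f using AddMonoidAlgebra.induction_linear with
    | zero => rw [map_zero]; exact zero_mem _
    | add f g hf hg => rw [map_add]; exact add_mem hf hg
    | single m c =>
      show (AddMonoidAlgebra.single m c : A n) - eps n j (AddMonoidAlgebra.single m c) ∈ _
      have E1 : ((m.1, Function.update m.2 j 0) : ℤ × (Fin n → ℤ)) +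
          ((0:ℤ), (Pi.single j (m.2 j) : Fin n → ℤ)) = m := by
        refine Prod.ext (by norm_num) ?_
        show Function.update m.2 j 0 + Pi.single j (m.2 j) = m.2
        funext i
        by_cases h : i = j
        · subst h; simp
        · simp [Function.update_of_ne h, Pi.single_apply, h]
      have E2 : ((m.1, Function.update m.2 j 0) : ℤ × (Fin n → ℤ)) +
          ((m.2 j : ℤ), (0 : Fin n → ℤ)) = eAdd n j m := by
        rw [eAdd_apply]
        exact Prod.ext rfl (by show Function.update m.2 j 0 + 0 = _; simp)
      have key : (AddMonoidAlgebra.single m c : A n) - eps n j (AddMonoidAlgebra.single m c) =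
          AddMonoidAlgebra.single ((m.1, Function.update m.2 j 0) : ℤ × (Fin n → ℤ)) c *
            ((AddMonoidAlgebra.single ((0:ℤ), (Pi.single j (m.2 j) : Fin n → ℤ)) 1 : A n) -
              AddMonoidAlgebra.single ((m.2 j : ℤ), (0:Fin n → ℤ)) 1) := by
        rw [eps_single, mul_sub, AddMonoidAlgebra.single_mul_single,
          AddMonoidAlgebra.single_mul_single, E1, E2]
        simp
      rw [key]
      exact Ideal.mul_mem_left _ _ (mem_span_int n j (m.2 j))
  exact main f

lemma span_eq_ker (j : Fin n) (f : A n) :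
    f ∈ Ideal.span {Y n j - X n} ↔ eps n j f = 0 := by
  constructor
  · intro hf
    rw [Ideal.mem_span_singleton'] at hf
    obtain ⟨c, hc⟩ := hf
    rw [← hc, map_mul, map_sub, eps_Y_self, eps_X, sub_self, mul_zero]
  · intro h0
    have := sub_eps_mem n j f
    rwa [h0, sub_zero] at this

/-! ### MvPolynomial side lemmas -/

lemma TX_ne (j : Fin n) : (MvPolynomial.X none - MvPolynomial.X (some j) : T n) ≠ 0 := by
  intro h
  have h1 : MvPolynomial.coeff (Finsupp.single (none : Option (Fin n)) 1)
      (MvPolynomial.X none - MvPolynomial.X (some j) : T n) = 1 := by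
    rw [MvPolynomial.coeff_sub, MvPolynomial.coeff_X, MvPolynomial.coeff_X']
    rw [if_neg (show ¬ (Finsupp.single (some j) 1 = Finsupp.single (none : Option (Fin n)) 1) from fun hc => by
      have := congrArg (fun g => g (none : Option (Fin n))) hc
      simp [Finsupp.single_apply] at this)]
    norm_num
  rw [h] at h1
  simp at h1

lemma collapse_none (j : Fin n) : collapse n j none = none := rfl
lemma collapse_some_self (j : Fin n) : collapse n j (some j) = none := by simp [collapse]
lemma collapse_some_ne (j i : Fin n) (h : i ≠ j) : collapse n j (some i) = some i := by
  simp [collapse, h]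

lemma collapse_ne_some (j : Fin n) (o : Option (Fin n)) : collapse n j o ≠ some j := by
  cases o with
  | none => simp [collapse]
  | some i =>
    by_cases h : i = j
    · subst h; simp [collapse]
    · simp [collapse, h]

lemma sub_collapse_mem (j : Fin n) (r : T n) :
    r - MvPolynomial.rename (collapse n j) r ∈
      Ideal.span {(MvPolynomial.X none - MvPolynomial.X (some j) : T n)} := by
  induction r using MvPolynomial.induction_on with
  | C a => rw [MvPolynomial.rename_C, sub_self]; exact zero_mem _
  | add p q hp hq =>
    have e : (p + q) - MvPolynomial.rename (collapse n j) (p + q) =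
        (p - MvPolynomial.rename (collapse n j) p) +
        (q - MvPolynomial.rename (collapse n j) q) := by
      rw [map_add]; ring
    rw [e]; exact add_mem hp hq
  | mul_X p o hp =>
    have e : p * MvPolynomial.X o - MvPolynomial.rename (collapse n j) (p * MvPolynomial.X o) =
        (p - MvPolynomial.rename (collapse n j) p) * MvPolynomial.X o +
        MvPolynomial.rename (collapse n j) p *
          (MvPolynomial.X o - MvPolynomial.X (collapse n j o)) := by
      rw [map_mul, MvPolynomial.rename_X]; ring
    rw [e]
    refine add_mem (Ideal.mul_mem_right _ _ hp) (Ideal.mul_mem_left _ _ ?_)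
    cases o with
    | none => rw [collapse_none, sub_self]; exact zero_mem _
    | some i =>
      by_cases h : i = j
      · rw [h, collapse_some_self]
        have : (MvPolynomial.X (some j) - MvPolynomial.X none : T n) =
            -(MvPolynomial.X none - MvPolynomial.X (some j)) := by ring
        rw [this]
        exact neg_mem (Ideal.subset_span (Set.mem_singleton _))
      · rw [collapse_some_ne n j i h, sub_self]; exact zero_mem _

lemma collapse_of_span (j : Fin n) (w : T n)
    (hw : w ∈ Ideal.span {(MvPolynomial.X none - MvPolynomial.X (some j) : T n)}) :
    MvPolynomial.rename (collapse n j) w = 0 := by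
  rw [Ideal.mem_span_singleton'] at hw
  obtain ⟨c, hc⟩ := hw
  rw [← hc, map_mul, map_sub, MvPolynomial.rename_X, MvPolynomial.rename_X,
    collapse_none, collapse_some_self, sub_self, mul_zero]

lemma span_of_collapse (j : Fin n) (w : T n)
    (h : MvPolynomial.rename (collapse n j) w = 0) :
    w ∈ Ideal.span {(MvPolynomial.X none - MvPolynomial.X (some j) : T n)} := by
  have := sub_collapse_mem n j w
  rwa [h, sub_zero] at this

lemma pderiv_collapse_some (j : Fin n) (r : T n) :
    MvPolynomial.pderiv (some j) (MvPolynomial.rename (collapse n j) r) = 0 := by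
  induction r using MvPolynomial.induction_on with
  | C a => rw [MvPolynomial.rename_C, MvPolynomial.pderiv_C]
  | add p q hp hq => rw [map_add, map_add, hp, hq, add_zero]
  | mul_X p o hp =>
    rw [map_mul, MvPolynomial.rename_X, MvPolynomial.pderiv_mul, hp, zero_mul,
      MvPolynomial.pderiv_X_of_ne (collapse_ne_some n j o), mul_zero, add_zero]

lemma pderiv_collapse_none (j : Fin n) (r : T n) :
    MvPolynomial.pderiv none (MvPolynomial.rename (collapse n j) r) =
      MvPolynomial.rename (collapse n j)
        (MvPolynomial.pderiv none r + MvPolynomial.pderiv (some j) r) := by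
  induction r using MvPolynomial.induction_on with
  | C a => simp [MvPolynomial.rename_C]
  | add p q hp hq =>
    simp only [map_add]
    rw [hp, hq]
    simp only [map_add]
    ring
  | mul_X p o hp =>
    cases o with
    | none =>
      simp only [map_mul, MvPolynomial.rename_X, MvPolynomial.pderiv_mul, map_add,
        collapse_none, MvPolynomial.pderiv_X_self,
        MvPolynomial.pderiv_X_of_ne (show (none : Option (Fin n)) ≠ some j by simp)]
      rw [hp]
      simp only [map_add, map_one, map_zero, mul_one, mul_zero, add_zero]
      try ring
    | some i =>
      by_cases h : i = j
      · rw [h]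
        simp only [map_mul, MvPolynomial.rename_X, MvPolynomial.pderiv_mul, map_add,
          collapse_some_self, MvPolynomial.pderiv_X_self,
          MvPolynomial.pderiv_X_of_ne (show (some j : Option (Fin n)) ≠ none by simp)]
        rw [hp]
        simp only [map_add, map_one, map_zero, mul_one, mul_zero, add_zero]
        try ring
      · simp only [map_mul, MvPolynomial.rename_X, MvPolynomial.pderiv_mul, map_add,
          collapse_some_ne n j i h,
          MvPolynomial.pderiv_X_of_ne (show (some i : Option (Fin n)) ≠ none by simp),
          MvPolynomial.pderiv_X_of_ne (show (some i : Option (Fin n)) ≠ some j by simp [h])]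
        rw [hp]
        simp only [map_add, map_one, map_zero, mul_one, mul_zero, add_zero]
        try ring

noncomputable abbrev E0 (n : ℕ) := MvPolynomial.optionEquivLeft ℤ (Fin n)

lemma E0_pderiv (r : T n) :
    E0 n (MvPolynomial.pderiv none r) = Polynomial.derivative (E0 n r) := by
  induction r using MvPolynomial.induction_on with
  | C a =>
    rw [MvPolynomial.pderiv_C, map_zero, MvPolynomial.optionEquivLeft_C,
      Polynomial.derivative_C]
  | add p q hp hq => rw [map_add, map_add, hp, hq, map_add, Polynomial.derivative_add]
  | mul_X p o hp =>
    cases o with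
    | none =>
      simp only [MvPolynomial.pderiv_mul, map_add, map_mul, MvPolynomial.pderiv_X_self,
        MvPolynomial.optionEquivLeft_X_none, map_one, Polynomial.derivative_mul,
        Polynomial.derivative_X]
      rw [hp]
      try ring
    | some i =>
      simp only [MvPolynomial.pderiv_mul, map_add, map_mul,
        MvPolynomial.pderiv_X_of_ne (show (some i : Option (Fin n)) ≠ none by simp),
        MvPolynomial.optionEquivLeft_X_some, map_zero, Polynomial.derivative_mul,
        Polynomial.derivative_C]
      rw [hp]
      try ring

lemma ode_zero (g : Polynomial (MvPolynomial (Fin n) ℤ))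
    (h : (Polynomial.X ^ 2 - 4) * Polynomial.derivative g + Polynomial.X * g = 0) :
    g = 0 := by
  by_contra hg
  have hc : g.coeff g.natDegree ≠ 0 := by
    rw [← Polynomial.leadingCoeff]
    exact Polynomial.leadingCoeff_ne_zero.mpr hg
  set d := g.natDegree with hd
  have h1 := congrArg (fun q => Polynomial.coeff q (d + 1)) h
  simp only [Polynomial.coeff_add, Polynomial.coeff_zero] at h1
  have hXg : (Polynomial.X * g).coeff (d + 1) = g.coeff d := Polynomial.coeff_X_mul g d
  have hsplit : ((Polynomial.X ^ 2 - 4) * Polynomial.derivative g).coeff (d + 1) =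
      (Polynomial.X ^ 2 * Polynomial.derivative g).coeff (d + 1) -
      ((4 : Polynomial (MvPolynomial (Fin n) ℤ)) * Polynomial.derivative g).coeff (d + 1) := by
    rw [show (Polynomial.X ^ 2 - 4) * Polynomial.derivative g =
      Polynomial.X ^ 2 * Polynomial.derivative g - 4 * Polynomial.derivative g by ring,
      Polynomial.coeff_sub]
  have h4 : ((4 : Polynomial (MvPolynomial (Fin n) ℤ)) * Polynomial.derivative g).coeff (d + 1) =
      4 * (Polynomial.derivative g).coeff (d + 1) := by
    rw [show (4 : Polynomial (MvPolynomial (Fin n) ℤ)) = Polynomial.C 4 from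
      (map_ofNat Polynomial.C 4).symm, Polynomial.coeff_C_mul]
  have hder_big : (Polynomial.derivative g).coeff (d + 1) = 0 := by
    rw [Polynomial.coeff_derivative, Polynomial.coeff_eq_zero_of_natDegree_lt (by omega),
      zero_mul]
  rcases Nat.eq_zero_or_pos d with h0 | hpos
  · have hder0 : Polynomial.derivative g = 0 := by
      rw [show g = Polynomial.C (g.coeff 0) from
        Polynomial.eq_C_of_natDegree_eq_zero (by rw [← hd, h0])]
      exact Polynomial.derivative_C
    rw [hder0, mul_zero, Polynomial.coeff_zero, zero_add, hXg] at h1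
    exact hc h1
  · have e1 : (Polynomial.X ^ 2 * Polynomial.derivative g).coeff (d + 1) =
        (Polynomial.derivative g).coeff (d - 1) := by
      rw [show d + 1 = (d - 1) + 2 by omega]
      exact Polynomial.coeff_X_pow_mul (Polynomial.derivative g) 2 (d - 1)
    have e2 : (Polynomial.derivative g).coeff (d - 1) =
        g.coeff d * (((d - 1 : ℕ) : MvPolynomial (Fin n) ℤ) + 1) := by
      rw [Polynomial.coeff_derivative, show (d - 1) + 1 = d by omega]
    have key : g.coeff d * ((((d - 1 : ℕ) : MvPolynomial (Fin n) ℤ) + 1) + 1) = 0 := by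
      rw [mul_add, mul_one]
      rw [hsplit, h4, hder_big, mul_zero, sub_zero, e1, e2, hXg] at h1
      exact h1
    have hcast : ((((d - 1 : ℕ) : MvPolynomial (Fin n) ℤ) + 1) + 1) ≠ 0 := by
      have e : ((((d - 1 : ℕ) : MvPolynomial (Fin n) ℤ) + 1) + 1) =
          ((d - 1 + 2 : ℕ) : MvPolynomial (Fin n) ℤ) := by
        push_cast
        ring
      rw [e]
      exact Nat.cast_ne_zero.mpr (by omega)
    rcases mul_eq_zero.mp key with hzz | hzz
    · exact hc hzz
    · exact hcast hzz

/-! ### divisibility by the product -/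

lemma prod_dvd_of_collapse (s : Finset (Fin n)) (q : T n)
    (h : ∀ j ∈ s, MvPolynomial.rename (collapse n j) q = 0) :
    (∏ j ∈ s, (MvPolynomial.X none - MvPolynomial.X (some j) : T n)) ∣ q := by
  classical
  induction s using Finset.induction_on generalizing q with
  | empty => simpa using one_dvd q
  | @insert j s hj ih =>
    have hdvd : (MvPolynomial.X none - MvPolynomial.X (some j) : T n) ∣ q := by
      rw [← Ideal.mem_span_singleton]
      exact span_of_collapse n j q (h j (Finset.mem_insert_self j s))
    obtain ⟨g, hg⟩ := hdvd
    have hgs : ∀ i ∈ s, MvPolynomial.rename (collapse n i) g = 0 := by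
      intro i hi
      have hij : j ≠ i := fun hc => hj (hc ▸ hi)
      have h0 := h i (Finset.mem_insert_of_mem hi)
      rw [hg, map_mul, map_sub, MvPolynomial.rename_X, MvPolynomial.rename_X,
        collapse_none, collapse_some_ne n i j hij] at h0
      exact (mul_eq_zero.mp h0).resolve_left (TX_ne n j)
    rw [Finset.prod_insert hj, hg]
    exact mul_dvd_mul_left _ (ih g hgs)

/-! ### support bounds and injectivity of `Phi` -/

def Bd (s : ℤ × (Fin n → ℤ)) (f : A n) : Prop := ∀ m ∈ f.coeff.support, m ≤ s

lemma Bd_mul (s t : ℤ × (Fin n → ℤ)) (f g : A n) (hf : Bd n s f) (hg : Bd n t g) :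
    Bd n (s + t) (f * g) := by
  intro m hm
  classical
  have hmm := AddMonoidAlgebra.support_coeff_mul_subset f g hm
  rw [Finset.mem_add] at hmm
  obtain ⟨a, ha, b, hb, rfl⟩ := hmm
  exact add_le_add (hf a ha) (hg b hb)

lemma coeff_top (s t : ℤ × (Fin n → ℤ)) (f g : A n) (hf : Bd n s f) (hg : Bd n t g) :
    (f * g).coeff (s + t) = f.coeff s * g.coeff t := by
  classical
  rw [AddMonoidAlgebra.coeff_mul]
  have hinner : ∀ a₁ (b₁ : ℤ), a₁ ∈ f.coeff.support → a₁ ≠ s →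
      (Finsupp.sum g.coeff fun a₂ b₂ => if a₁ + a₂ = s + t then b₁ * b₂ else 0) = 0 := by
    intro a₁ b₁ ha hne
    apply Finset.sum_eq_zero
    intro a₂ ha₂
    have hcond : ¬(a₁ + a₂ = s + t) := by
      intro hc
      apply hne
      have h1 : a₁ ≤ s := hf a₁ ha
      have h2 : a₂ ≤ t := hg a₂ ha₂
      have hs : s ≤ a₁ := by
        have h3 := add_le_add_right h2 a₁
        rw [hc] at h3
        have h4 : s + t ≤ a₁ + t := by
          calc s + t ≤ a₁ + a₂ := by rw [hc]
          _ ≤ a₁ + t := add_le_add_right h2 a₁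
        exact le_of_add_le_add_right h4
      exact le_antisymm h1 hs
    show (if a₁ + a₂ = s + t then b₁ * g.coeff a₂ else 0) = 0
    rw [if_neg hcond]
  show (∑ a₁ ∈ f.coeff.support, Finsupp.sum g.coeff fun a₂ b₂ =>
      if a₁ + a₂ = s + t then f.coeff a₁ * b₂ else 0) = f.coeff s * g.coeff t
  by_cases hsm : s ∈ f.coeff.support
  · rw [Finset.sum_eq_single_of_mem s hsm (fun b hb hbs => hinner b (f.coeff b) hb hbs)]
    show (∑ a₂ ∈ g.coeff.support, if s + a₂ = s + t then f.coeff s * g.coeff a₂ else 0) = f.coeff s * g.coeff t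
    by_cases htm : t ∈ g.coeff.support
    · rw [Finset.sum_eq_single_of_mem t htm ?_]
      · show (if s + t = s + t then f.coeff s * g.coeff t else 0) = f.coeff s * g.coeff t
        rw [if_pos rfl]
      · intro b hb hbt
        show (if s + b = s + t then f.coeff s * g.coeff b else 0) = 0
        rw [if_neg (fun hc => hbt (add_left_cancel hc))]
    · rw [Finset.sum_eq_zero ?_]
      · rw [Finsupp.notMem_support_iff.mp htm, mul_zero]
      · intro b hb
        show (if s + b = s + t then f.coeff s * g.coeff b else 0) = 0
        rw [if_neg (fun hc => htm (((add_left_cancel hc : b = t)) ▸ hb))]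
  · rw [Finset.sum_eq_zero, Finsupp.notMem_support_iff.mp hsm, zero_mul]
    intro a₁ ha₁
    exact hinner a₁ (f.coeff a₁) ha₁ (fun hc => hsm (hc ▸ ha₁))

def ed (o : Option (Fin n)) : ℤ × (Fin n → ℤ) :=
  o.elim ((1:ℤ), 0) (fun j => ((0:ℤ), Pi.single j 1))

lemma mem_support_pair {m1 m2 m : ℤ × (Fin n → ℤ)}
    (hm : m ∈ (AddMonoidAlgebra.single m1 (1:ℤ) + AddMonoidAlgebra.single m2 1 : A n).coeff.support) :
    m = m1 ∨ m = m2 := by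
  classical
  rw [AddMonoidAlgebra.coeff_add, AddMonoidAlgebra.coeff_single, AddMonoidAlgebra.coeff_single] at hm
  have h2 := Finsupp.support_add hm
  rw [Finset.mem_union] at h2
  rcases h2 with h | h
  · exact Or.inl (Finset.mem_singleton.mp (Finsupp.support_single_subset h))
  · exact Or.inr (Finset.mem_singleton.mp (Finsupp.support_single_subset h))

lemma Bd_one : Bd n 0 (1 : A n) ∧ (1 : A n).coeff 0 = 1 := by
  constructor
  · intro m hm
    rw [AddMonoidAlgebra.one_def] at hm
    have h := Finsupp.support_single_subset hm
    rw [Finset.mem_singleton] at h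
    exact h.le
  · rw [AddMonoidAlgebra.one_def]
    exact Finsupp.single_eq_same

lemma neg_single_le (j : Fin n) : (-Pi.single j 1 : Fin n → ℤ) ≤ Pi.single j 1 := by
  intro i
  by_cases h : i = j
  · subst h; simp
  · simp [Pi.single_apply, h]

lemma Bd_gen (o : Option (Fin n)) :
    Bd n (ed n o) (Phi n (MvPolynomial.X o)) ∧ (Phi n (MvPolynomial.X o)).coeff (ed n o) = 1 := by
  cases o with
  | none =>
    have hPhi : Phi n (MvPolynomial.X none) = u n := by simp [Phi]
    rw [hPhi]
    show Bd n ((1:ℤ), (0:Fin n → ℤ)) (u n) ∧ (u n).coeff ((1:ℤ), (0:Fin n → ℤ)) = 1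
    constructor
    · intro m hm
      rw [u] at hm
      rcases mem_support_pair n hm with rfl | rfl
      · exact le_refl _
      · exact Prod.le_def.mpr ⟨by norm_num, le_refl _⟩
    · rw [u, AddMonoidAlgebra.coeff_add, Finsupp.add_apply]
      show (Finsupp.single ((1:ℤ), (0:Fin n → ℤ)) (1:ℤ)) ((1:ℤ), (0:Fin n → ℤ)) +
        (Finsupp.single ((-1:ℤ), (0:Fin n → ℤ)) (1:ℤ)) ((1:ℤ), (0:Fin n → ℤ)) = 1
      rw [Finsupp.single_eq_same, Finsupp.single_eq_of_ne (pair_ne n).symm, add_zero]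
  | some j =>
    have hPhi : Phi n (MvPolynomial.X (some j)) = v n j := by simp [Phi]
    rw [hPhi]
    show Bd n ((0:ℤ), (Pi.single j 1 : Fin n → ℤ)) (v n j) ∧
      (v n j).coeff ((0:ℤ), (Pi.single j 1 : Fin n → ℤ)) = 1
    constructor
    · intro m hm
      rw [v] at hm
      rcases mem_support_pair n hm with rfl | rfl
      · exact le_refl _
      · exact Prod.le_def.mpr ⟨le_refl _, neg_single_le n j⟩
    · rw [v, AddMonoidAlgebra.coeff_add, Finsupp.add_apply]
      show (Finsupp.single ((0:ℤ), (Pi.single j 1 : Fin n → ℤ)) (1:ℤ))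
          ((0:ℤ), (Pi.single j 1 : Fin n → ℤ)) +
        (Finsupp.single ((0:ℤ), (-Pi.single j 1 : Fin n → ℤ)) (1:ℤ))
          ((0:ℤ), (Pi.single j 1 : Fin n → ℤ)) = 1
      rw [Finsupp.single_eq_same, Finsupp.single_eq_of_ne (fun hc => by
        have h1 := congrFun (congrArg Prod.snd hc) j
        simp at h1), add_zero]

lemma Bd_pow (o : Option (Fin n)) (k : ℕ) :
    Bd n (k • ed n o) (Phi n (MvPolynomial.X o) ^ k) ∧
      (Phi n (MvPolynomial.X o) ^ k).coeff (k • ed n o) = 1 := by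
  induction k with
  | zero =>
    rw [pow_zero, zero_smul]
    exact Bd_one n
  | succ k ih =>
    have hgen := Bd_gen n o
    constructor
    · rw [pow_succ, succ_nsmul]
      exact Bd_mul n _ _ _ _ ih.1 hgen.1
    · rw [pow_succ, succ_nsmul, coeff_top n _ _ _ _ ih.1 hgen.1, ih.2, hgen.2, one_mul]

def Iv (μ : Option (Fin n) →₀ ℕ) : ℤ × (Fin n → ℤ) :=
  ((μ none : ℤ), fun j => (μ (some j) : ℤ))

lemma Iv_add (μ ν : Option (Fin n) →₀ ℕ) : Iv n (μ + ν) = Iv n μ + Iv n ν := by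
  refine Prod.ext ?_ ?_
  · show (((μ + ν) none : ℕ) : ℤ) = ((μ none : ℕ) : ℤ) + ((ν none : ℕ) : ℤ)
    rw [Finsupp.add_apply]
    push_cast
    ring
  · funext i
    show (((μ + ν) (some i) : ℕ) : ℤ) = ((μ (some i) : ℕ) : ℤ) + ((ν (some i) : ℕ) : ℤ)
    rw [Finsupp.add_apply]
    push_cast
    ring

lemma Iv_single (o : Option (Fin n)) (k : ℕ) : Iv n (Finsupp.single o k) = k • ed n o := by
  cases o with
  | none =>
    refine Prod.ext ?_ ?_
    · show ((Finsupp.single (none : Option (Fin n)) k none : ℕ) : ℤ) = (k • ((1:ℤ), (0:Fin n → ℤ))).1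
      rw [Finsupp.single_eq_same]
      show (k : ℤ) = k • (1:ℤ)
      simp
    · funext i
      show ((Finsupp.single (none : Option (Fin n)) k (some i) : ℕ) : ℤ) =
        (k • ((1:ℤ), (0:Fin n → ℤ))).2 i
      rw [Finsupp.single_eq_of_ne (by simp)]
      simp
  | some j =>
    refine Prod.ext ?_ ?_
    · show ((Finsupp.single (some j) k none : ℕ) : ℤ) =
        (k • ((0:ℤ), (Pi.single j 1 : Fin n → ℤ))).1
      rw [Finsupp.single_eq_of_ne (by simp)]
      simp
    · funext i
      show ((Finsupp.single (some j) k (some i) : ℕ) : ℤ) =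
        (k • ((0:ℤ), (Pi.single j 1 : Fin n → ℤ))).2 i
      by_cases h : i = j
      · subst h
        rw [Finsupp.single_eq_same]
        show (k : ℤ) = (k • (Pi.single i 1 : Fin n → ℤ)) i
        simp
      · rw [Finsupp.single_eq_of_ne (by simp [h])]
        show (0:ℤ) = (k • (Pi.single j 1 : Fin n → ℤ)) i
        simp [Pi.single_apply, h]

lemma Bd_monomial (μ : Option (Fin n) →₀ ℕ) (c : ℤ) :
    Bd n (Iv n μ) (Phi n (MvPolynomial.monomial μ c)) ∧
      (Phi n (MvPolynomial.monomial μ c)).coeff (Iv n μ) = c := by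
  have main : ∀ μ : Option (Fin n) →₀ ℕ,
      Bd n (Iv n μ) (Phi n (MvPolynomial.monomial μ 1)) ∧
      (Phi n (MvPolynomial.monomial μ 1)).coeff (Iv n μ) = 1 := by
    intro μ
    induction μ using Finsupp.induction with
    | zero =>
      have h1 : (MvPolynomial.monomial (0 : Option (Fin n) →₀ ℕ)) (1:ℤ) = 1 := by
        rw [← MvPolynomial.C_apply, MvPolynomial.C_1]
      have h2 : Iv n 0 = 0 := by
        refine Prod.ext (by show ((0:ℕ):ℤ) = 0; simp) ?_
        funext i
        show ((0:ℕ):ℤ) = 0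
        simp
      rw [h1, h2, map_one]
      exact Bd_one n
    | single_add o k μ' ho hk ih =>
      have hmon : MvPolynomial.monomial (Finsupp.single o k + μ') (1:ℤ) =
          MvPolynomial.X o ^ k * MvPolynomial.monomial μ' 1 := by
        rw [MvPolynomial.X_pow_eq_monomial, MvPolynomial.monomial_mul, one_mul]
      rw [hmon, map_mul, map_pow, Iv_add, Iv_single]
      constructor
      · exact Bd_mul n _ _ _ _ (Bd_pow n o k).1 ih.1
      · rw [coeff_top n _ _ _ _ (Bd_pow n o k).1 ih.1, (Bd_pow n o k).2, ih.2, one_mul]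
  have hc : (MvPolynomial.monomial μ) c = MvPolynomial.C c * MvPolynomial.monomial μ 1 := by
    rw [MvPolynomial.C_mul_monomial, mul_one]
  have hC : Phi n (MvPolynomial.C c) = algebraMap ℤ (A n) c := by simp [Phi]
  have hsm : Phi n (MvPolynomial.monomial μ c) = c • Phi n (MvPolynomial.monomial μ 1) := by
    rw [hc, map_mul, hC, ← Algebra.smul_def]
  rw [hsm]
  constructor
  · intro m hm
    exact (main μ).1 m (Finsupp.support_smul hm)
  · rw [AddMonoidAlgebra.coeff_smul_apply, (main μ).2, smul_eq_mul, mul_one]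

lemma Phi_zero (p : T n) (hp : Phi n p = 0) : p = 0 := by
  by_contra hne
  obtain ⟨μ0, hμ0, hmax⟩ : ∃ μ0 ∈ p.support, ∀ x ∈ p.support, ¬ μ0 < x := by
    obtain ⟨μ0, hm⟩ := Finset.exists_maximal (MvPolynomial.support_nonempty.mpr hne)
    exact ⟨μ0, hm.1, fun x hx hlt => (lt_iff_le_not_ge.mp hlt).2 (hm.2 hx hlt.le)⟩
  have hco : (Phi n p).coeff (Iv n μ0) = MvPolynomial.coeff μ0 p := by
    conv_lhs => rw [← MvPolynomial.support_sum_monomial_coeff p]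
    rw [map_sum, AddMonoidAlgebra.coeff_sum, Finset.sum_apply']
    rw [Finset.sum_eq_single_of_mem μ0 hμ0 ?_]
    · exact (Bd_monomial n μ0 (MvPolynomial.coeff μ0 p)).2
    · intro μ hμ hne2
      by_contra hnz
      have hmem : Iv n μ0 ∈ (Phi n (MvPolynomial.monomial μ (MvPolynomial.coeff μ p))).coeff.support :=
        Finsupp.mem_support_iff.mpr hnz
      have hle : Iv n μ0 ≤ Iv n μ := (Bd_monomial n μ (MvPolynomial.coeff μ p)).1 _ hmem
      have hle2 : μ0 ≤ μ := by
        rw [Finsupp.le_def]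
        intro o
        cases o with
        | none =>
          have h1 : ((μ0 none : ℕ) : ℤ) ≤ ((μ none : ℕ) : ℤ) := (Prod.le_def.mp hle).1
          exact_mod_cast h1
        | some i =>
          have h1 : ((μ0 (some i) : ℕ) : ℤ) ≤ ((μ (some i) : ℕ) : ℤ) := (Prod.le_def.mp hle).2 i
          exact_mod_cast h1
      rcases lt_or_eq_of_le hle2 with hlt | heq
      · exact hmax μ hμ hlt
      · exact hne2 heq.symm
  rw [hp] at hco
  have hz : MvPolynomial.coeff μ0 p = 0 := by
    rw [← hco]
    rfl
  exact (MvPolynomial.mem_support_iff.mp hμ0) hz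

lemma Phi_inj {p q : T n} (h : Phi n p = Phi n q) : p = q := by
  have h0 := Phi_zero n (p - q) (by rw [map_sub, h, sub_self])
  have := sub_eq_zero.mp h0
  exact this

lemma pq_zero (P Q : T n) (h : Phi n P + X n * Phi n Q = 0) : P = 0 ∧ Q = 0 := by
  have h2 := congrArg (dc n (negA n)) h
  rw [map_add, map_mul, dc_neg_Phi, dc_neg_Phi, dc_neg_X, map_zero] at h2
  have hsub : (X n - X' n) * Phi n Q = 0 := by
    calc (X n - X' n) * Phi n Q
        = (Phi n P + X n * Phi n Q) - (Phi n P + X' n * Phi n Q) := by ring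
      _ = 0 := by rw [h, h2, sub_zero]
  rcases mul_eq_zero.mp hsub with hz | hz
  · exact absurd hz (Xdiff_ne_zero n)
  · have hQ : Q = 0 := Phi_zero n Q hz
    have hP : P = 0 := by
      apply Phi_zero n P
      rw [hQ, map_zero, mul_zero, add_zero] at h
      exact h
    exact ⟨hP, hQ⟩

lemma xfixed_cancel (sA tA : A n) (hs : dc n (negA n) sA = sA) (ht : dc n (negA n) tA = tA)
    (h : X n * tA = sA) : tA = 0 ∧ sA = 0 := by
  have h2 := congrArg (dc n (negA n)) h
  rw [map_mul, dc_neg_X, ht, hs] at h2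
  have h3 : (X n - X' n) * tA = 0 := by rw [sub_mul, h, h2, sub_self]
  rcases mul_eq_zero.mp h3 with hz | hz
  · exact absurd hz (Xdiff_ne_zero n)
  · exact ⟨hz, by rw [← h, hz, mul_zero]⟩

/-! ### the subring `ℤ[u,v][x]` -/

def BS : Set (A n) := {f | ∃ P Q : T n, f = Phi n P + X n * Phi n Q}

lemma BS_zero : (0 : A n) ∈ BS n := ⟨0, 0, by simp⟩

lemma BS_one : (1 : A n) ∈ BS n := ⟨1, 0, by simp⟩

lemma BS_add {f g : A n} (hf : f ∈ BS n) (hg : g ∈ BS n) : f + g ∈ BS n := by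
  obtain ⟨P, Q, rfl⟩ := hf
  obtain ⟨P', Q', rfl⟩ := hg
  exact ⟨P + P', Q + Q', by rw [map_add, map_add]; ring⟩

lemma BS_smul (c : ℤ) {f : A n} (hf : f ∈ BS n) : c • f ∈ BS n := by
  obtain ⟨P, Q, rfl⟩ := hf
  refine ⟨MvPolynomial.C c * P, MvPolynomial.C c * Q, ?_⟩
  have hC : Phi n (MvPolynomial.C c) = algebraMap ℤ (A n) c := by simp [Phi]
  rw [map_mul, map_mul, hC, smul_add, Algebra.smul_def, Algebra.smul_def]
  ring

lemma BS_neg {f : A n} (hf : f ∈ BS n) : -f ∈ BS n := by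
  have := BS_smul n (-1) hf
  rwa [neg_one_smul] at this

lemma BS_sub {f g : A n} (hf : f ∈ BS n) (hg : g ∈ BS n) : f - g ∈ BS n := by
  have := BS_add n hf (BS_neg n hg)
  rwa [← sub_eq_add_neg] at this

lemma BS_mul {f g : A n} (hf : f ∈ BS n) (hg : g ∈ BS n) : f * g ∈ BS n := by
  obtain ⟨P, Q, rfl⟩ := hf
  obtain ⟨P', Q', rfl⟩ := hg
  refine ⟨P * P' - Q * Q', P * Q' + P' * Q + MvPolynomial.X none * (Q * Q'), ?_⟩
  have hu : Phi n (MvPolynomial.X none) = u n := by simp [Phi]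
  simp only [map_sub, map_add, map_mul, hu]
  linear_combination (Phi n Q * Phi n Q') * X_sq n

lemma BS_X : X n ∈ BS n := ⟨0, 1, by simp⟩

lemma BS_u : u n ∈ BS n := ⟨MvPolynomial.X none, 0, by simp [Phi]⟩

lemma BS_v (j : Fin n) : v n j ∈ BS n := ⟨MvPolynomial.X (some j), 0, by simp [Phi]⟩

lemma BS_X' : X' n ∈ BS n := by
  have h := BS_sub n (BS_u n) (BS_X n)
  have e : u n - X n = X' n := by rw [u_def]; ring
  rwa [e] at h

lemma BS_pow {f : A n} (hf : f ∈ BS n) (k : ℕ) : f ^ k ∈ BS n := by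
  induction k with
  | zero => rw [pow_zero]; exact BS_one n
  | succ k ih => rw [pow_succ]; exact BS_mul n ih hf

lemma X_pow (N : ℕ) : X n ^ N = AddMonoidAlgebra.single (((N:ℤ)), (0:Fin n → ℤ)) 1 := by
  rw [X, AddMonoidAlgebra.single_pow, one_pow]
  congr 1
  refine Prod.ext ?_ ?_
  · show N • (1:ℤ) = (N:ℤ)
    simp
  · show N • (0 : Fin n → ℤ) = 0
    simp

lemma X'_pow (N : ℕ) : X' n ^ N = AddMonoidAlgebra.single ((-(N:ℤ)), (0:Fin n → ℤ)) 1 := by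
  rw [X', AddMonoidAlgebra.single_pow, one_pow]
  congr 1
  refine Prod.ext ?_ ?_
  · show N • (-1:ℤ) = -(N:ℤ)
    simp
  · show N • (0 : Fin n → ℤ) = 0
    simp

lemma BS_Xz (a : ℤ) : (AddMonoidAlgebra.single ((a:ℤ), (0:Fin n → ℤ)) 1 : A n) ∈ BS n := by
  obtain ⟨N, hN | hN⟩ := Int.eq_nat_or_neg a
  · subst hN
    rw [← X_pow]
    exact BS_pow n (BS_X n) N
  · subst hN
    rw [← X'_pow]
    exact BS_pow n (BS_X' n) N

lemma sing_mul_sing (j : Fin n) (a b : ℤ) :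
    (AddMonoidAlgebra.single ((0:ℤ), (Pi.single j a : Fin n → ℤ)) (1:ℤ) : A n) *
      AddMonoidAlgebra.single ((0:ℤ), (Pi.single j b : Fin n → ℤ)) 1 =
      AddMonoidAlgebra.single ((0:ℤ), (Pi.single j (a+b) : Fin n → ℤ)) 1 := by
  rw [AddMonoidAlgebra.single_mul_single, mul_one]
  congr 1
  refine Prod.ext (by norm_num) ?_
  show (Pi.single j a : Fin n → ℤ) + Pi.single j b = _
  rw [pi_single_add]

lemma v_eq_sing (j : Fin n) :
    v n j = AddMonoidAlgebra.single ((0:ℤ), (Pi.single j (1:ℤ) : Fin n → ℤ)) 1 +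
      AddMonoidAlgebra.single ((0:ℤ), (Pi.single j (-1:ℤ) : Fin n → ℤ)) 1 := by
  rw [v]
  congr 3
  rw [Pi.single_neg]

/-- the Dickson elements `y^N + y^{-N}` -/
noncomputable def wD (j : Fin n) (N : ℕ) : A n :=
  AddMonoidAlgebra.single ((0:ℤ), (Pi.single j ((N:ℤ)) : Fin n → ℤ)) 1 +
    AddMonoidAlgebra.single ((0:ℤ), (Pi.single j (-(N:ℤ)) : Fin n → ℤ)) 1

lemma wD_key (j : Fin n) (N : ℕ) : wD n j (N+2) = v n j * wD n j (N+1) - wD n j N := by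
  rw [wD, wD, wD, v_eq_sing, add_mul, mul_add, mul_add, sing_mul_sing, sing_mul_sing,
    sing_mul_sing, sing_mul_sing]
  have c1 : (1:ℤ) + ((N+1:ℕ):ℤ) = ((N+2:ℕ):ℤ) := by push_cast; ring
  have c2 : (1:ℤ) + (-((N+1:ℕ):ℤ)) = -((N:ℕ):ℤ) := by push_cast; ring
  have c3 : (-1:ℤ) + ((N+1:ℕ):ℤ) = ((N:ℕ):ℤ) := by push_cast; ring
  have c4 : (-1:ℤ) + (-((N+1:ℕ):ℤ)) = -((N+2:ℕ):ℤ) := by push_cast; ring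
  rw [c1, c2, c3, c4]
  ring

lemma BS_wD (j : Fin n) (N : ℕ) : wD n j N ∈ BS n := by
  have main : ∀ N : ℕ, wD n j N ∈ BS n ∧ wD n j (N+1) ∈ BS n := by
    intro N
    induction N with
    | zero =>
      constructor
      · have s0 : (AddMonoidAlgebra.single ((0:ℤ),
            (Pi.single j (((0:ℕ):ℤ)) : Fin n → ℤ)) 1 : A n) = 1 := by
          rw [AddMonoidAlgebra.one_def]
          congr 1
          exact Prod.ext rfl (by funext i; simp [Pi.single_apply])
        have e : wD n j 0 = 1 + 1 := by
          rw [wD, show (-((0:ℕ):ℤ)) = ((0:ℕ):ℤ) by norm_num, s0]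
        rw [e]
        exact BS_add n (BS_one n) (BS_one n)
      · have e : wD n j 1 = v n j := by
          rw [wD, v_eq_sing]
          norm_num
        rw [e]
        exact BS_v n j
    | succ N ih =>
      refine ⟨ih.2, ?_⟩
      rw [show N + 1 + 1 = N + 2 from rfl, wD_key]
      exact BS_sub n (BS_mul n (BS_v n j) ih.2) ih.1
  exact (main N).1

lemma BS_wz (j : Fin n) (k : ℤ) :
    (AddMonoidAlgebra.single ((0:ℤ), (Pi.single j k : Fin n → ℤ)) 1 : A n) +
      AddMonoidAlgebra.single ((0:ℤ), (Pi.single j (-k) : Fin n → ℤ)) 1 ∈ BS n := by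
  obtain ⟨N, hN | hN⟩ := Int.eq_nat_or_neg k
  · subst hN
    exact BS_wD n j N
  · subst hN
    have h := BS_wD n j N
    rw [wD] at h
    rw [neg_neg, add_comm]
    exact h

/-! ### flip invariants lie in `BS` -/

noncomputable def Gm (m : ℤ × (Fin n → ℤ)) : A n :=
  AddMonoidAlgebra.single ((m.1, 0) : ℤ × (Fin n → ℤ)) 1 *
    ∏ j ∈ Finset.univ.filter (fun j => m.2 j ≠ 0),
      (AddMonoidAlgebra.single ((0:ℤ), (Pi.single j (m.2 j) : Fin n → ℤ)) 1 +
        AddMonoidAlgebra.single ((0:ℤ), (Pi.single j (-(m.2 j)) : Fin n → ℤ)) 1)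

def sfin (m : ℤ × (Fin n → ℤ)) : Finset (Fin n) :=
  Finset.univ.filter (fun j => m.2 j ≠ 0)

lemma Gm_def (m : ℤ × (Fin n → ℤ)) :
    Gm n m = AddMonoidAlgebra.single ((m.1, 0) : ℤ × (Fin n → ℤ)) 1 *
    ∏ j ∈ sfin n m,
      (AddMonoidAlgebra.single ((0:ℤ), (Pi.single j (m.2 j) : Fin n → ℤ)) 1 +
        AddMonoidAlgebra.single ((0:ℤ), (Pi.single j (-(m.2 j)) : Fin n → ℤ)) 1) := rfl

def et (m : ℤ × (Fin n → ℤ)) (t : Finset (Fin n)) : ℤ × (Fin n → ℤ) :=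
  (m.1, fun i => if i ∈ t then m.2 i else -(m.2 i))

lemma Gm_mem (m : ℤ × (Fin n → ℤ)) : Gm n m ∈ BS n := by
  rw [Gm_def]
  refine BS_mul n (BS_Xz n m.1) ?_
  apply Finset.prod_induction _ (fun x => x ∈ BS n) (fun a b ha hb => BS_mul n ha hb) (BS_one n)
  intro j _
  exact BS_wz n j (m.2 j)

lemma prod_single (t : Finset (Fin n)) (ψ : Fin n → (Fin n → ℤ)) :
    (∏ j ∈ t, (AddMonoidAlgebra.single ((0:ℤ), ψ j) 1 : A n)) =
      AddMonoidAlgebra.single ((0:ℤ), ∑ j ∈ t, ψ j) 1 := by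
  classical
  induction t using Finset.induction_on with
  | empty =>
    rw [Finset.prod_empty, Finset.sum_empty, AddMonoidAlgebra.one_def]
    congr 1
  | @insert a t ha ih =>
    rw [Finset.prod_insert ha, ih, AddMonoidAlgebra.single_mul_single, mul_one,
      Finset.sum_insert ha]
    congr 1

lemma sum_single_apply (t : Finset (Fin n)) (c : Fin n → ℤ) (i : Fin n) :
    (∑ j ∈ t, (Pi.single j (c j) : Fin n → ℤ)) i = if i ∈ t then c i else 0 := by
  rw [Finset.sum_apply]
  simp only [Pi.single_apply]
  exact Finset.sum_ite_eq t i c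

lemma Gm_expand (m : ℤ × (Fin n → ℤ)) :
    Gm n m = ∑ t ∈ (sfin n m).powerset, AddMonoidAlgebra.single (et n m t) 1 := by
  classical
  rw [Gm_def, Finset.prod_add, Finset.mul_sum]
  apply Finset.sum_congr rfl
  intro t ht
  rw [prod_single, prod_single, ← mul_assoc, AddMonoidAlgebra.single_mul_single,
    AddMonoidAlgebra.single_mul_single, mul_one, mul_one]
  congr 1
  refine Prod.ext (by show m.1 + 0 + 0 = m.1; ring) ?_
  show (0 : Fin n → ℤ) + (∑ j ∈ t, (Pi.single j (m.2 j) : Fin n → ℤ)) +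
    (∑ j ∈ sfin n m \ t, (Pi.single j (-(m.2 j)) : Fin n → ℤ)) = (et n m t).2
  funext i
  rw [Pi.add_apply, Pi.add_apply, Pi.zero_apply, zero_add, sum_single_apply,
    sum_single_apply]
  show _ = if i ∈ t then m.2 i else -(m.2 i)
  by_cases h1 : i ∈ t
  · have h2 : i ∉ sfin n m \ t := fun hc => (Finset.mem_sdiff.mp hc).2 h1
    rw [if_pos h1, if_neg h2, if_pos h1, add_zero]
  · by_cases h2 : i ∈ sfin n m
    · rw [if_neg h1, if_pos (Finset.mem_sdiff.mpr ⟨h2, h1⟩), if_neg h1, zero_add]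
    · have hz : m.2 i = 0 := by
        by_contra hnz
        exact h2 (Finset.mem_filter.mpr ⟨Finset.mem_univ i, hnz⟩)
      rw [if_neg h1, if_neg (fun hc => h2 (Finset.mem_sdiff.mp hc).1), if_neg h1, hz,
        add_zero, neg_zero]

lemma et_inj (m : ℤ × (Fin n → ℤ)) {t t' : Finset (Fin n)}
    (ht : t ⊆ sfin n m) (ht' : t' ⊆ sfin n m) (h : et n m t = et n m t') : t = t' := by
  ext i
  constructor
  · intro hi
    by_contra hi'
    have hv := congrFun (congrArg Prod.snd h) i
    rw [show (et n m t).2 i = if i ∈ t then m.2 i else -(m.2 i) from rfl,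
      show (et n m t').2 i = if i ∈ t' then m.2 i else -(m.2 i) from rfl,
      if_pos hi, if_neg hi'] at hv
    have hnz : m.2 i ≠ 0 := (Finset.mem_filter.mp (ht hi)).2
    omega
  · intro hi
    by_contra hi'
    have hv := congrFun (congrArg Prod.snd h) i
    rw [show (et n m t).2 i = if i ∈ t then m.2 i else -(m.2 i) from rfl,
      show (et n m t').2 i = if i ∈ t' then m.2 i else -(m.2 i) from rfl,
      if_neg hi', if_pos hi] at hv
    have hnz : m.2 i ≠ 0 := (Finset.mem_filter.mp (ht' hi)).2
    omega

lemma Gm_apply_et (m : ℤ × (Fin n → ℤ)) {t : Finset (Fin n)}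
    (ht : t ∈ (sfin n m).powerset) : (Gm n m).coeff (et n m t) = 1 := by
  rw [Gm_expand, AddMonoidAlgebra.coeff_sum, Finset.sum_apply']
  rw [Finset.sum_eq_single_of_mem t ht ?_]
  · exact Finsupp.single_eq_same
  · intro t' ht' hne
    exact Finsupp.single_eq_of_ne (fun hc => hne
      (et_inj n m (Finset.mem_powerset.mp ht') (Finset.mem_powerset.mp ht) hc.symm))

lemma Gm_apply_zero (m : ℤ × (Fin n → ℤ)) (z : ℤ × (Fin n → ℤ))
    (hz : ∀ t ∈ (sfin n m).powerset, z ≠ et n m t) : (Gm n m).coeff z = 0 := by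
  rw [Gm_expand, AddMonoidAlgebra.coeff_sum, Finset.sum_apply']
  apply Finset.sum_eq_zero
  intro t ht
  exact Finsupp.single_eq_of_ne (fun hc => hz t ht hc)

lemma et_self (m : ℤ × (Fin n → ℤ)) : et n m (sfin n m) = m := by
  refine Prod.ext rfl ?_
  funext i
  show (if i ∈ sfin n m then m.2 i else -(m.2 i)) = m.2 i
  by_cases h : i ∈ sfin n m
  · rw [if_pos h]
  · have hz : m.2 i = 0 := by
      by_contra hnz
      exact h (Finset.mem_filter.mpr ⟨Finset.mem_univ i, hnz⟩)
    rw [if_neg h, hz, neg_zero]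

lemma dc_flip_Gm (m : ℤ × (Fin n → ℤ)) (j : Fin n) :
    dc n (flipA n j) (Gm n m) = Gm n m := by
  rw [Gm_def, map_mul, map_prod, dc_single]
  congr 1
  · congr 1
    refine Prod.ext rfl ?_
    show Function.update (0 : Fin n → ℤ) j (-(0:ℤ)) = 0
    simp
  · apply Finset.prod_congr rfl
    intro i _
    rw [map_add, dc_single, dc_single]
    by_cases hij : i = j
    · subst hij
      have e1 : flipA n i ((0:ℤ), (Pi.single i (m.2 i) : Fin n → ℤ)) =
          ((0:ℤ), (Pi.single i (-(m.2 i)) : Fin n → ℤ)) := by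
        refine Prod.ext rfl ?_
        show Function.update (Pi.single i (m.2 i) : Fin n → ℤ) i
          (-((Pi.single i (m.2 i) : Fin n → ℤ) i)) = _
        rw [update_single_self]
      have e2 : flipA n i ((0:ℤ), (Pi.single i (-(m.2 i)) : Fin n → ℤ)) =
          ((0:ℤ), (Pi.single i (m.2 i) : Fin n → ℤ)) := by
        refine Prod.ext rfl ?_
        show Function.update (Pi.single i (-(m.2 i)) : Fin n → ℤ) i
          (-((Pi.single i (-(m.2 i)) : Fin n → ℤ) i)) = _
        rw [update_single_self, neg_neg]
      rw [e1, e2, add_comm]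
    · have hz : (Pi.single i (m.2 i) : Fin n → ℤ) j = 0 := by
        rw [Pi.single_apply, if_neg (fun (hc : j = i) => hij hc.symm)]
      have hz2 : (Pi.single i (-(m.2 i)) : Fin n → ℤ) j = 0 := by
        rw [Pi.single_apply, if_neg (fun (hc : j = i) => hij hc.symm)]
      have e1 : flipA n j ((0:ℤ), (Pi.single i (m.2 i) : Fin n → ℤ)) =
          ((0:ℤ), (Pi.single i (m.2 i) : Fin n → ℤ)) := by
        refine Prod.ext rfl ?_
        show Function.update (Pi.single i (m.2 i) : Fin n → ℤ) j
          (-((Pi.single i (m.2 i) : Fin n → ℤ) j)) = _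
        rw [hz, neg_zero, ← hz, Function.update_eq_self]
      have e2 : flipA n j ((0:ℤ), (Pi.single i (-(m.2 i)) : Fin n → ℤ)) =
          ((0:ℤ), (Pi.single i (-(m.2 i)) : Fin n → ℤ)) := by
        refine Prod.ext rfl ?_
        show Function.update (Pi.single i (-(m.2 i)) : Fin n → ℤ) j
          (-((Pi.single i (-(m.2 i)) : Fin n → ℤ) j)) = _
        rw [hz2, neg_zero, ← hz2, Function.update_eq_self]
      rw [e1, e2]

lemma flip_coeff (f : A n) (j : Fin n) (hf : Finsupp.equivMapDomain (flipE n j) f.coeff = f.coeff)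
    (x : ℤ × (Fin n → ℤ)) : f.coeff (flipE n j x) = f.coeff x := by
  conv_lhs => rw [← hf]
  rw [Finsupp.equivMapDomain_apply, Equiv.symm_apply_apply]

lemma orbit_coeff (f : A n) (hf : ∀ j, Finsupp.equivMapDomain (flipE n j) f.coeff = f.coeff)
    (m : ℤ × (Fin n → ℤ)) (r : Finset (Fin n)) :
    f.coeff ((m.1, fun i => if i ∈ r then -(m.2 i) else m.2 i)) = f.coeff m := by
  classical
  induction r using Finset.induction_on with
  | empty => simp
  | @insert a r ha ih =>
    have key : ((m.1, fun i => if i ∈ insert a r then -(m.2 i) else m.2 i) : ℤ × (Fin n → ℤ)) =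
        flipE n a ((m.1, fun i => if i ∈ r then -(m.2 i) else m.2 i)) := by
      rw [flipE_apply]
      refine Prod.ext rfl ?_
      funext i
      show (if i ∈ insert a r then -(m.2 i) else m.2 i) =
        Function.update (fun i => if i ∈ r then -(m.2 i) else m.2 i) a
          (-(if a ∈ r then -(m.2 a) else m.2 a)) i
      by_cases hia : i = a
      · subst hia
        rw [Function.update_self, if_pos (Finset.mem_insert_self i r), if_neg ha]
      · rw [Function.update_of_ne hia]
        show _ = if i ∈ r then -(m.2 i) else m.2 i
        by_cases hir : i ∈ r
        · rw [if_pos hir, if_pos (Finset.mem_insert_of_mem hir)]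
        · rw [if_neg hir, if_neg (fun hc => (Finset.mem_insert.mp hc).elim hia hir)]
    rw [key, flip_coeff n f a (hf a), ih]

lemma f_et (f : A n) (hf : ∀ j, Finsupp.equivMapDomain (flipE n j) f.coeff = f.coeff)
    (m : ℤ × (Fin n → ℤ)) (t : Finset (Fin n)) : f.coeff (et n m t) = f.coeff m := by
  have e : et n m t = ((m.1, fun i => if i ∈ Finset.univ \ t then -(m.2 i) else m.2 i) :
      ℤ × (Fin n → ℤ)) := by
    refine Prod.ext rfl ?_
    funext i
    show (if i ∈ t then m.2 i else -(m.2 i)) = _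
    by_cases h : i ∈ t <;> simp [h]
  rw [e, orbit_coeff n f hf m]

lemma flip_mem_BS (f : A n) (hflip : ∀ j, Finsupp.equivMapDomain (flipE n j) f.coeff = f.coeff) :
    f ∈ BS n := by
  have main : ∀ (k : ℕ) (f : A n), f.coeff.support.card ≤ k →
      (∀ j, Finsupp.equivMapDomain (flipE n j) f.coeff = f.coeff) → f ∈ BS n := by
    intro k
    induction k with
    | zero =>
      intro f hc _
      have h0 : f = 0 := by
        rw [← AddMonoidAlgebra.coeff_eq_zero, ← Finsupp.support_eq_empty]
        exact Finset.card_eq_zero.mp (Nat.le_zero.mp hc)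
      rw [h0]
      exact BS_zero n
    | succ k ih =>
      intro f hc hfl
      by_cases h0 : f = 0
      · rw [h0]; exact BS_zero n
      · obtain ⟨m, hm⟩ := Finsupp.support_nonempty_iff.mpr (show f.coeff ≠ 0 by rwa [Ne, AddMonoidAlgebra.coeff_eq_zero])
        have hval : ∀ z, (f - f.coeff m • Gm n m).coeff z = f.coeff z - f.coeff m * (Gm n m).coeff z := by
          intro z
          rw [AddMonoidAlgebra.coeff_sub, Finsupp.sub_apply, AddMonoidAlgebra.coeff_smul_apply, smul_eq_mul]
        have hsupp' : (f - f.coeff m • Gm n m).coeff.support ⊆ f.coeff.support.erase m := by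
          intro z hz
          have hz0 : (f - f.coeff m • Gm n m).coeff z ≠ 0 := Finsupp.mem_support_iff.mp hz
          by_cases horb : ∃ t ∈ (sfin n m).powerset, z = et n m t
          · obtain ⟨t, ht, rfl⟩ := horb
            exfalso
            apply hz0
            rw [hval, Gm_apply_et n m ht, mul_one, f_et n f hfl m t, sub_self]
          · push_neg at horb
            have hG0 : (Gm n m).coeff z = 0 := Gm_apply_zero n m z horb
            rw [Finset.mem_erase]
            constructor
            · intro hzm
              exact horb (sfin n m) (Finset.mem_powerset_self _) (by rw [hzm, et_self n m])
            · rw [Finsupp.mem_support_iff]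
              intro hfz
              apply hz0
              rw [hval, hfz, hG0, mul_zero, sub_zero]
        have hflip' : ∀ j, Finsupp.equivMapDomain (flipE n j) (f - f.coeff m • Gm n m).coeff =
            (f - f.coeff m • Gm n m).coeff := by
          intro j
          rw [emd_flip, map_sub, map_zsmul, dc_flip_Gm]
          have hdf : dc n (flipA n j) f = f := by
            apply AddMonoidAlgebra.coeff_injective; rw [← emd_flip]; exact hfl j
          rw [hdf]
        have hcard : (f - f.coeff m • Gm n m).coeff.support.card ≤ k := by
          have h1 := Finset.card_le_card hsupp'
          have h2 := Finset.card_erase_of_mem hm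
          have h3 : f.coeff.support.card ≤ k + 1 := hc
          have h4 : 0 < f.coeff.support.card := Finset.card_pos.mpr ⟨m, hm⟩
          omega
        have hf'BS := ih (f - f.coeff m • Gm n m) hcard hflip'
        have hsum : f = (f - f.coeff m • Gm n m) + f.coeff m • Gm n m := by ring
        rw [hsum]
        exact BS_add n hf'BS (BS_smul n (f.coeff m) (Gm_mem n m))
  exact main f.coeff.support.card f le_rfl hflip

/-! ### final assembly -/

lemma aeval_eq_Phi (p : T n) :
    MvPolynomial.aeval (fun o : Option (Fin n) => o.elim (u n) (v n)) p = Phi n p := rfl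

lemma Phi_prod :
    Phi n (∏ j : Fin n, (MvPolynomial.X none - MvPolynomial.X (some j))) =
      ∏ j : Fin n, (u n - v n j) := by
  rw [map_prod]
  apply Finset.prod_congr rfl
  intro j _
  rw [map_sub]
  simp [Phi]

lemma Jplus_sub_J {f : A n} (hf : f ∈ Jplus n) : f ∈ J n := by
  obtain ⟨p, hsym, hfe, hcond⟩ := hf
  rw [hfe, aeval_eq_Phi]
  refine ⟨?_, ?_, ?_⟩
  · intro σ
    rw [emd_perm, dc_perm_Phi, hsym σ]
  · intro j
    rw [emd_flip, dc_flip_Phi]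
  · intro j
    rw [span_eq_ker]
    have hz : MvPolynomial.rename (collapse n j)
        (MvPolynomial.pderiv none p) + MvPolynomial.rename (collapse n j)
        (MvPolynomial.pderiv (some j) p) = 0 := by
      have h0 := collapse_of_span n j _ (hcond j)
      rw [map_add, map_mul, map_mul, MvPolynomial.rename_X, MvPolynomial.rename_X,
        collapse_none, collapse_some_self] at h0
      have h1 : MvPolynomial.X none * (MvPolynomial.rename (collapse n j)
          (MvPolynomial.pderiv none p) + MvPolynomial.rename (collapse n j)
          (MvPolynomial.pderiv (some j) p)) = 0 := by
        rw [mul_add]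
        exact h0
      rcases mul_eq_zero.mp h1 with h2 | h2
      · exact absurd h2 (MvPolynomial.X_ne_zero none)
      · exact h2
    rw [D_Phi, map_add, map_mul, map_mul, eps_Phi, eps_Phi, map_sub, eps_X, eps_X',
      map_sub, eps_Y_self, eps_Y'_self]
    calc Phi n (MvPolynomial.rename (collapse n j) (MvPolynomial.pderiv none p)) *
          (X n - X' n) +
        Phi n (MvPolynomial.rename (collapse n j) (MvPolynomial.pderiv (some j) p)) *
          (X n - X' n)
        = Phi n (MvPolynomial.rename (collapse n j) (MvPolynomial.pderiv none p) +
            MvPolynomial.rename (collapse n j) (MvPolynomial.pderiv (some j) p)) *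
          (X n - X' n) := by rw [map_add]; ring
      _ = 0 := by rw [hz, map_zero, zero_mul]

lemma Jminus_sub_J {f : A n} (hf : f ∈ Jminus n) : f ∈ J n := by
  obtain ⟨q, hsym, hfe⟩ := hf
  rw [hfe, aeval_eq_Phi]
  refine ⟨?_, ?_, ?_⟩
  · intro σ
    rw [emd_perm, map_mul, map_mul, dc_perm_X, dc_perm_Phi, hsym σ, map_prod]
    congr 3
    calc (∏ j : Fin n, dc n (permA n σ) (u n - v n j))
        = ∏ j : Fin n, (u n - v n (σ j)) := by
          apply Finset.prod_congr rfl
          intro j _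
          rw [map_sub, dc_perm_u, dc_perm_v]
      _ = ∏ j : Fin n, (u n - v n j) := Equiv.prod_comp σ (fun j => u n - v n j)
  · intro j
    rw [emd_flip, map_mul, map_mul, dc_flip_X, dc_flip_Phi, map_prod]
    congr 3
    apply Finset.prod_congr rfl
    intro i _
    rw [map_sub, dc_flip_u, dc_flip_v]
  · intro j
    rw [span_eq_ker]
    have heps0 : eps n j (X n * (∏ i : Fin n, (u n - v n i)) * Phi n q) = 0 := by
      rw [map_mul, map_mul, map_prod]
      have : (∏ i : Fin n, eps n j (u n - v n i)) = 0 := by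
        apply Finset.prod_eq_zero (Finset.mem_univ j)
        rw [map_sub, eps_u, eps_v_self, sub_self]
      rw [this, mul_zero, zero_mul]
    rw [eps_D, heps0, D_zero]

lemma J_add {f g : A n} (hf : f ∈ J n) (hg : g ∈ J n) : f + g ∈ J n := by
  obtain ⟨hp1, hf1, hd1⟩ := hf
  obtain ⟨hp2, hf2, hd2⟩ := hg
  refine ⟨?_, ?_, ?_⟩
  · intro σ
    rw [emd_perm, map_add, AddMonoidAlgebra.coeff_add, ← emd_perm, ← emd_perm, hp1 σ, hp2 σ, AddMonoidAlgebra.coeff_add]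
  · intro j
    rw [emd_flip, map_add, AddMonoidAlgebra.coeff_add, ← emd_flip, ← emd_flip, hf1 j, hf2 j, AddMonoidAlgebra.coeff_add]
  · intro j
    rw [D_add]
    exact add_mem (hd1 j) (hd2 j)

lemma dc_perm_of_emd (σ : Equiv.Perm (Fin n)) (f : A n)
    (h : Finsupp.equivMapDomain (permE n σ) f.coeff = f.coeff) : dc n (permA n σ) f = f := by
  apply AddMonoidAlgebra.coeff_injective
  rw [← emd_perm]
  exact h

lemma J_decomp (f : A n) (hf : f ∈ J n) :
    ∃ a ∈ Jplus n, ∃ b ∈ Jminus n, f = a + b := by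
  obtain ⟨hperm, hflip, hD⟩ := hf
  obtain ⟨P, Q, rfl⟩ := flip_mem_BS n f hflip
  have hsymP : IsSym n P := by
    intro σ
    have h1 := dc_perm_of_emd n σ _ (hperm σ)
    rw [map_add, map_mul, dc_perm_Phi, dc_perm_Phi, dc_perm_X] at h1
    have h2 : Phi n (MvPolynomial.rename (Option.map σ) P - P) +
        X n * Phi n (MvPolynomial.rename (Option.map σ) Q - Q) = 0 := by
      rw [map_sub, map_sub]
      linear_combination h1
    exact sub_eq_zero.mp (pq_zero n _ _ h2).1
  have hsymQ : IsSym n Q := by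
    intro σ
    have h1 := dc_perm_of_emd n σ _ (hperm σ)
    rw [map_add, map_mul, dc_perm_Phi, dc_perm_Phi, dc_perm_X] at h1
    have h2 : Phi n (MvPolynomial.rename (Option.map σ) P - P) +
        X n * Phi n (MvPolynomial.rename (Option.map σ) Q - Q) = 0 := by
      rw [map_sub, map_sub]
      linear_combination h1
    exact sub_eq_zero.mp (pq_zero n _ _ h2).2
  have hkey : ∀ j : Fin n, MvPolynomial.rename (collapse n j) Q = 0 ∧
      MvPolynomial.pderiv none (MvPolynomial.rename (collapse n j) P) = 0 := by
    intro j
    have h1 : eps n j (D n j (Phi n P + X n * Phi n Q)) = 0 := (span_eq_ker n j _).mp (hD j)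
    rw [eps_D, map_add, map_mul, eps_Phi, eps_Phi, eps_X, D_add, D_mul, D_X, D_Phi, D_Phi,
      pderiv_collapse_some, pderiv_collapse_some, map_zero, zero_mul, add_zero, add_zero] at h1
    have hXX' : X' n = u n - X n := by rw [u_def]; ring
    rw [hXX'] at h1
    have hmain : X n *
        (Phi n (MvPolynomial.pderiv none (MvPolynomial.rename (collapse n j) P)) +
          Phi n (MvPolynomial.pderiv none (MvPolynomial.rename (collapse n j) P)) +
          Phi n (MvPolynomial.rename (collapse n j) Q) +
          u n * Phi n (MvPolynomial.pderiv none (MvPolynomial.rename (collapse n j) Q))) =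
        u n * Phi n (MvPolynomial.pderiv none (MvPolynomial.rename (collapse n j) P)) +
          (Phi n (MvPolynomial.pderiv none (MvPolynomial.rename (collapse n j) Q)) +
           Phi n (MvPolynomial.pderiv none (MvPolynomial.rename (collapse n j) Q))) := by
      linear_combination h1 - 2 *
        Phi n (MvPolynomial.pderiv none (MvPolynomial.rename (collapse n j) Q)) * X_sq n
    have hfix_s : dc n (negA n)
        (u n * Phi n (MvPolynomial.pderiv none (MvPolynomial.rename (collapse n j) P)) +
          (Phi n (MvPolynomial.pderiv none (MvPolynomial.rename (collapse n j) Q)) +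
           Phi n (MvPolynomial.pderiv none (MvPolynomial.rename (collapse n j) Q)))) =
        u n * Phi n (MvPolynomial.pderiv none (MvPolynomial.rename (collapse n j) P)) +
          (Phi n (MvPolynomial.pderiv none (MvPolynomial.rename (collapse n j) Q)) +
           Phi n (MvPolynomial.pderiv none (MvPolynomial.rename (collapse n j) Q))) := by
      rw [map_add, map_add, map_mul, dc_neg_u, dc_neg_Phi, dc_neg_Phi]
    have hfix_t : dc n (negA n)
        (Phi n (MvPolynomial.pderiv none (MvPolynomial.rename (collapse n j) P)) +
          Phi n (MvPolynomial.pderiv none (MvPolynomial.rename (collapse n j) P)) +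
          Phi n (MvPolynomial.rename (collapse n j) Q) +
          u n * Phi n (MvPolynomial.pderiv none (MvPolynomial.rename (collapse n j) Q))) =
        Phi n (MvPolynomial.pderiv none (MvPolynomial.rename (collapse n j) P)) +
          Phi n (MvPolynomial.pderiv none (MvPolynomial.rename (collapse n j) P)) +
          Phi n (MvPolynomial.rename (collapse n j) Q) +
          u n * Phi n (MvPolynomial.pderiv none (MvPolynomial.rename (collapse n j) Q)) := by
      rw [map_add, map_add, map_add, map_mul, dc_neg_u, dc_neg_Phi, dc_neg_Phi, dc_neg_Phi]
    obtain ⟨ht0, hs0⟩ := xfixed_cancel n _ _ hfix_s hfix_t hmain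
    have hu : Phi n (MvPolynomial.X (none : Option (Fin n))) = u n := by simp [Phi]
    have hT1 : MvPolynomial.pderiv none (MvPolynomial.rename (collapse n j) P) +
        MvPolynomial.pderiv none (MvPolynomial.rename (collapse n j) P) +
        MvPolynomial.rename (collapse n j) Q +
        MvPolynomial.X none * MvPolynomial.pderiv none (MvPolynomial.rename (collapse n j) Q)
        = 0 := by
      apply Phi_zero n
      rw [map_add, map_add, map_add, map_mul, hu]
      exact ht0
    have hS1 : MvPolynomial.X none *
        MvPolynomial.pderiv none (MvPolynomial.rename (collapse n j) P) +
        (MvPolynomial.pderiv none (MvPolynomial.rename (collapse n j) Q) +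
         MvPolynomial.pderiv none (MvPolynomial.rename (collapse n j) Q)) = 0 := by
      apply Phi_zero n
      rw [map_add, map_add, map_mul, hu]
      exact hs0
    have hODE : (MvPolynomial.X none ^ 2 - 4) *
        MvPolynomial.pderiv none (MvPolynomial.rename (collapse n j) Q) +
        MvPolynomial.X none * MvPolynomial.rename (collapse n j) Q = 0 := by
      linear_combination MvPolynomial.X (none : Option (Fin n)) * hT1 - 2 * hS1
    have hE := congrArg (E0 n) hODE
    rw [map_add, map_mul, map_mul, map_sub, map_pow, MvPolynomial.optionEquivLeft_X_none,
      E0_pderiv, map_zero, map_ofNat] at hE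
    have hg0 := ode_zero n (E0 n (MvPolynomial.rename (collapse n j) Q)) hE
    have hRQ : MvPolynomial.rename (collapse n j) Q = 0 := by
      apply (E0 n).injective
      rw [hg0, map_zero]
    refine ⟨hRQ, ?_⟩
    rw [hRQ, map_zero, add_zero, mul_zero, add_zero] at hT1
    exact add_self_eq_zero.mp hT1
  -- build the two pieces
  obtain ⟨g, hg⟩ := prod_dvd_of_collapse n Finset.univ Q (fun j _ => (hkey j).1)
  have hprod_ne : (∏ j : Fin n, (MvPolynomial.X none - MvPolynomial.X (some j) : T n)) ≠ 0 :=
    Finset.prod_ne_zero_iff.mpr (fun j _ => TX_ne n j)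
  have hsymg : IsSym n g := by
    intro σ
    have h1 := hsymQ σ
    rw [hg, map_mul] at h1
    have hps : MvPolynomial.rename (Option.map σ)
        (∏ j : Fin n, (MvPolynomial.X none - MvPolynomial.X (some j) : T n)) =
        ∏ j : Fin n, (MvPolynomial.X none - MvPolynomial.X (some j) : T n) := by
      rw [map_prod]
      calc (∏ j : Fin n, MvPolynomial.rename (Option.map σ)
            (MvPolynomial.X none - MvPolynomial.X (some j) : T n))
          = ∏ j : Fin n, (MvPolynomial.X none - MvPolynomial.X (some (σ j)) : T n) := by
            apply Finset.prod_congr rfl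
            intro i _
            rw [map_sub, MvPolynomial.rename_X, MvPolynomial.rename_X]
            rfl
        _ = _ := Equiv.prod_comp σ (fun j => MvPolynomial.X none - MvPolynomial.X (some j))
    rw [hps] at h1
    exact mul_left_cancel₀ hprod_ne h1
  refine ⟨Phi n P, ⟨P, hsymP, rfl, ?_⟩, X n * (∏ j : Fin n, (u n - v n j)) * Phi n g,
    ⟨g, hsymg, rfl⟩, ?_⟩
  · intro j
    have hz : MvPolynomial.rename (collapse n j)
        (MvPolynomial.X none * MvPolynomial.pderiv none P +
          MvPolynomial.X (some j) * MvPolynomial.pderiv (some j) P) = 0 := by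
      rw [map_add, map_mul, map_mul, MvPolynomial.rename_X, MvPolynomial.rename_X,
        collapse_none, collapse_some_self, ← mul_add, ← map_add, ← pderiv_collapse_none,
        (hkey j).2, mul_zero]
    have hmem := sub_collapse_mem n j
      (MvPolynomial.X none * MvPolynomial.pderiv none P +
        MvPolynomial.X (some j) * MvPolynomial.pderiv (some j) P)
    rwa [hz, sub_zero] at hmem
  · rw [hg, map_mul, Phi_prod]
    ring

theorem statement2' :
    (J n = {f | ∃ a ∈ Jplus n, ∃ b ∈ Jminus n, f = a + b}) ∧
    (∀ f, f ∈ Jplus n → f ∈ Jminus n → f = 0) := by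
  constructor
  · ext f
    constructor
    · intro hf
      exact J_decomp n f hf
    · rintro ⟨a, ha, b, hb, rfl⟩
      exact J_add n (Jplus_sub_J n ha) (Jminus_sub_J n hb)
  · intro f hfp hfm
    obtain ⟨p, _, hfp', _⟩ := hfp
    obtain ⟨q, _, hfm'⟩ := hfm
    have hkey : Phi n p + X n * Phi n
        (-((∏ j : Fin n, (MvPolynomial.X none - MvPolynomial.X (some j))) * q)) = 0 := by
      rw [map_neg, map_mul, Phi_prod]
      have h1 : f = Phi n p := hfp'
      have h2 : f = X n * (∏ j : Fin n, (u n - v n j)) * Phi n q := hfm'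
      rw [← h1]
      linear_combination h2
    have := (pq_zero n _ _ hkey).1
    rw [hfp', aeval_eq_Phi, this, map_zero]

/-- the ring `J(C(n))` decomposes as the direct sum `J = J⁺ ⊕ J⁻`. -/
theorem statement2 :
    (J n = {f | ∃ a ∈ Jplus n, ∃ b ∈ Jminus n, f = a + b}) ∧
    (∀ f, f ∈ Jplus n → f ∈ Jminus n → f = 0) := by
  exact statement2' n

end Stmt2
end

section
/- Consider the ring J = { f ∈ Z[x^{±1}, y^{±1}] : f is invariant under x ↦ x^{-1} and y ↦ y^{-1} independently, and x·∂f/∂x + y·∂f/∂y lies in the ideal generated by (x − y)² }. Set u = x + x^{-1}, v = y + y^{-1}. Then J = { c + (u − v)²·g(u,v) : c ∈ Z, g ∈ Z[u,v] }. -/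
namespace Stmt6

/-- the monomial `x^a y^b` in `ℤ[x^{±1}, y^{±1}]`. -/
noncomputable def e (a b : ℤ) : AddMonoidAlgebra ℤ (ℤ × ℤ) :=
  AddMonoidAlgebra.single (a, b) 1

noncomputable def X : AddMonoidAlgebra ℤ (ℤ × ℤ) := e 1 0
noncomputable def Y : AddMonoidAlgebra ℤ (ℤ × ℤ) := e 0 1
noncomputable def u : AddMonoidAlgebra ℤ (ℤ × ℤ) := e 1 0 + e (-1) 0
noncomputable def v : AddMonoidAlgebra ℤ (ℤ × ℤ) := e 0 1 + e 0 (-1)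

/-- inversion `x ↦ x^{-1}` on exponents. -/
def flipX : (ℤ × ℤ) ≃ (ℤ × ℤ) :=
  Function.Involutive.toPerm (fun m => (-m.1, m.2)) (by intro m; simp)

/-- inversion `y ↦ y^{-1}` on exponents. -/
def flipY : (ℤ × ℤ) ≃ (ℤ × ℤ) :=
  Function.Involutive.toPerm (fun m => (m.1, -m.2)) (by intro m; simp)

/-- the Euler operator `x∂/∂x + y∂/∂y`. -/
noncomputable def D (f : AddMonoidAlgebra ℤ (ℤ × ℤ)) : AddMonoidAlgebra ℤ (ℤ × ℤ) :=
  Finsupp.sum f.coeff fun m c => AddMonoidAlgebra.single m ((m.1 + m.2) * c)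

-- abbreviations
abbrev L := AddMonoidAlgebra ℤ (ℤ × ℤ)
abbrev L1 := AddMonoidAlgebra ℤ ℤ

noncomputable def ee (a : ℤ) : L1 := AddMonoidAlgebra.single a 1

lemma e_mul (a b c d : ℤ) : e a b * e c d = e (a + c) (b + d) := by
  simp [e, AddMonoidAlgebra.single_mul_single, Prod.mk_add_mk]

lemma ee_mul (a b : ℤ) : ee a * ee b = ee (a + b) := by
  unfold ee; rw [AddMonoidAlgebra.single_mul_single, mul_one]

lemma D_zero : D 0 = 0 := rfl

lemma one_eq : (1 : L) = e 0 0 := rfl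
lemma one_eq1 : (1 : L1) = ee 0 := rfl

-- D basic lemmas
lemma D_add (f g : L) : D (f + g) = D f + D g := by
  unfold D
  rw [AddMonoidAlgebra.coeff_add, Finsupp.sum_add_index]
  · intro m _; simp
  · intro m _ c d; rw [mul_add, AddMonoidAlgebra.single_add]

lemma D_single (m : ℤ × ℤ) (c : ℤ) :
    D (AddMonoidAlgebra.single m c) = AddMonoidAlgebra.single m ((m.1 + m.2) * c) := by
  unfold D
  rw [AddMonoidAlgebra.coeff_single, Finsupp.sum_single_index]
  simp

lemma D_mul (f g : L) : D (f * g) = D f * g + f * D g := by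
  induction f using AddMonoidAlgebra.induction_linear with
  | zero => simp [D_zero]
  | add f f' hf hf' => rw [add_mul, D_add, hf, hf', D_add]; ring
  | single m c =>
    induction g using AddMonoidAlgebra.induction_linear with
    | zero => simp [D_zero]
    | add g g' hg hg' => rw [mul_add, D_add, hg, hg', D_add]; ring
    | single n d =>
      rw [AddMonoidAlgebra.single_mul_single, D_single, D_single, D_single,
        AddMonoidAlgebra.single_mul_single, AddMonoidAlgebra.single_mul_single,
        ← AddMonoidAlgebra.single_add]
      congr 1
      show (m.1 + n.1 + (m.2 + n.2)) * (c * d) = (m.1 + m.2) * c * d + c * ((n.1 + n.2) * d)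
      ring


-- the substitution y := x
noncomputable def sb : L →+* L1 :=
  AddMonoidAlgebra.mapDomainRingHom ℤ ((AddMonoidHom.fst ℤ ℤ) + (AddMonoidHom.snd ℤ ℤ))

lemma sb_single (m : ℤ × ℤ) (c : ℤ) :
    sb (AddMonoidAlgebra.single m c) = AddMonoidAlgebra.single (m.1 + m.2) c := by
  unfold sb
  rw [AddMonoidAlgebra.mapDomainRingHom_apply, AddMonoidAlgebra.mapDomain_single]
  rfl

-- the map y ∂/∂y followed by y := x
noncomputable def dl (f : L) : L1 :=
  Finsupp.sum f.coeff fun m c => AddMonoidAlgebra.single (m.1 + m.2) (m.2 * c)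

lemma dl_zero : dl 0 = 0 := rfl

lemma dl_add (f g : L) : dl (f + g) = dl f + dl g := by
  unfold dl
  rw [AddMonoidAlgebra.coeff_add, Finsupp.sum_add_index]
  · intro m _; simp
  · intro m _ c d; rw [mul_add, AddMonoidAlgebra.single_add]

lemma dl_single (m : ℤ × ℤ) (c : ℤ) :
    dl (AddMonoidAlgebra.single m c) = AddMonoidAlgebra.single (m.1 + m.2) (m.2 * c) := by
  unfold dl
  rw [AddMonoidAlgebra.coeff_single, Finsupp.sum_single_index]
  simp

lemma dl_mul (f g : L) : dl (f * g) = dl f * sb g + sb f * dl g := by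
  induction f using AddMonoidAlgebra.induction_linear with
  | zero => simp [dl_zero]
  | add f f' hf hf' => rw [add_mul, dl_add, hf, hf', dl_add, map_add]; ring
  | single m c =>
    induction g using AddMonoidAlgebra.induction_linear with
    | zero => simp [dl_zero]
    | add g g' hg hg' => rw [mul_add, dl_add, hg, hg', dl_add, map_add]; ring
    | single n d =>
      rw [AddMonoidAlgebra.single_mul_single, dl_single, dl_single, dl_single,
        sb_single, sb_single, AddMonoidAlgebra.single_mul_single,
        AddMonoidAlgebra.single_mul_single]
      show AddMonoidAlgebra.single (m.1+n.1+(m.2+n.2)) _ = _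
      rw [show m.1 + m.2 + (n.1 + n.2) = m.1 + n.1 + (m.2 + n.2) by ring,
        ← AddMonoidAlgebra.single_add]
      congr 1
      show (m.2 + n.2) * (c * d) = m.2 * c * d + c * (n.2 * d)
      ring

-- flips as ring homs
noncomputable def FX : L →+* L :=
  AddMonoidAlgebra.mapDomainRingHom ℤ
    (AddMonoidHom.prodMap (-(AddMonoidHom.id ℤ)) (AddMonoidHom.id ℤ))

noncomputable def FY : L →+* L :=
  AddMonoidAlgebra.mapDomainRingHom ℤ
    (AddMonoidHom.prodMap (AddMonoidHom.id ℤ) (-(AddMonoidHom.id ℤ)))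

lemma FX_single (m : ℤ × ℤ) (c : ℤ) :
    FX (AddMonoidAlgebra.single m c) = AddMonoidAlgebra.single (-m.1, m.2) c := by
  unfold FX
  rw [AddMonoidAlgebra.mapDomainRingHom_apply, AddMonoidAlgebra.mapDomain_single]
  rfl

lemma FY_single (m : ℤ × ℤ) (c : ℤ) :
    FY (AddMonoidAlgebra.single m c) = AddMonoidAlgebra.single (m.1, -m.2) c := by
  unfold FY
  rw [AddMonoidAlgebra.mapDomainRingHom_apply, AddMonoidAlgebra.mapDomain_single]
  rfl

lemma equivFX (f : L) : Finsupp.equivMapDomain flipX f.coeff = (FX f).coeff := by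
  rw [Finsupp.equivMapDomain_eq_mapDomain]; rfl

lemma equivFY (f : L) : Finsupp.equivMapDomain flipY f.coeff = (FY f).coeff := by
  rw [Finsupp.equivMapDomain_eq_mapDomain]; rfl


noncomputable def ub : L1 := ee 1 + ee (-1)
noncomputable def Ab : L1 := ee 1 - ee (-1)

lemma e_def (a b : ℤ) : e a b = AddMonoidAlgebra.single (a, b) 1 := rfl

lemma sb_e (a b : ℤ) : sb (e a b) = ee (a + b) := by
  rw [e_def, sb_single]; rfl

lemma dl_e (a b : ℤ) : dl (e a b) = AddMonoidAlgebra.single (a + b) b := by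
  rw [e_def, dl_single]; norm_num

lemma D_e (a b : ℤ) : D (e a b) = AddMonoidAlgebra.single (a, b) (a + b) := by
  rw [e_def, D_single]; norm_num

lemma single_neg' (m : ℤ × ℤ) : AddMonoidAlgebra.single m (-1 : ℤ) = -(e m.1 m.2) := by
  rw [e_def]
  exact AddMonoidAlgebra.single_neg m 1

lemma single_neg1 (a : ℤ) : AddMonoidAlgebra.single a (-1 : ℤ) = -(ee a) :=
  AddMonoidAlgebra.single_neg a 1

lemma D_u : D u = e 1 0 - e (-1) 0 := by
  unfold u
  rw [D_add, D_e, D_e]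
  norm_num
  rw [sub_eq_add_neg, e_def, e_def]

lemma D_v : D v = e 0 1 - e 0 (-1) := by
  unfold v
  rw [D_add, D_e, D_e]
  norm_num
  rw [sub_eq_add_neg, e_def, e_def]

lemma sb_u : sb u = ub := by
  unfold u ub
  rw [map_add, sb_e, sb_e]; norm_num

lemma sb_v : sb v = ub := by
  unfold v ub
  rw [map_add, sb_e, sb_e]; norm_num

lemma dl_u : dl u = 0 := by
  unfold u
  rw [dl_add, dl_e, dl_e]
  simp

lemma dl_v : dl v = Ab := by
  unfold v Ab
  rw [dl_add, dl_e, dl_e]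
  norm_num
  rw [sub_eq_add_neg]
  rfl

lemma sb_Du : sb (D u) = Ab := by
  rw [D_u, map_sub, sb_e, sb_e]; unfold Ab; norm_num

lemma sb_Dv : sb (D v) = Ab := by
  rw [D_v, map_sub, sb_e, sb_e]; unfold Ab; norm_num

lemma dl_sub (f g : L) : dl (f - g) = dl f - dl g := by
  have := dl_add (f - g) g
  rw [sub_add_cancel] at this
  rw [this]; ring

lemma D_sub (f g : L) : D (f - g) = D f - D g := by
  have := D_add (f - g) g
  rw [sub_add_cancel] at this
  rw [this]; ring

lemma dl_Du : dl (D u) = 0 := by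
  rw [D_u, dl_sub, dl_e, dl_e]
  simp

lemma dl_Dv : dl (D v) = ub := by
  rw [D_v, dl_sub, dl_e, dl_e]
  unfold ub
  norm_num
  rfl

lemma sbD_mul (f g : L) : sb (D (f * g)) = sb (D f) * sb g + sb f * sb (D g) := by
  rw [D_mul, map_add, map_mul, map_mul]

lemma dlD_mul (f g : L) : dl (D (f * g)) =
    dl (D f) * sb g + sb (D f) * dl g + dl f * sb (D g) + sb f * dl (D g) := by
  rw [D_mul, dl_add, dl_mul, dl_mul]; ring

lemma sb_XY : sb (X - Y) = 0 := by
  unfold X Y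
  rw [map_sub, sb_e, sb_e]
  norm_num

lemma kill_ideal {h : L} (hh : h ∈ Ideal.span {(X - Y) ^ 2}) : sb h = 0 ∧ dl h = 0 := by
  obtain ⟨q, rfl⟩ := Ideal.mem_span_singleton'.mp hh
  constructor
  · rw [map_mul, map_pow, sb_XY]
    ring
  · simp [pow_two, dl_mul, map_mul, sb_XY]


noncomputable def w0 : L := e (-1) (-1)

lemma fact_d : u - v = (X - Y) * (1 - w0) := by
  simp only [X, Y, u, v, w0, one_eq, mul_sub, sub_mul, e_mul]
  norm_num
  abel

lemma fact_Dd : D (u - v) = (X - Y) * (1 + w0) := by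
  rw [D_sub, D_u, D_v]
  simp only [X, Y, w0, one_eq, mul_add, add_mul, sub_mul, e_mul]
  norm_num
  abel

lemma D_mem (G : L) : D ((u - v) ^ 2 * G) ∈ Ideal.span {(X - Y) ^ 2} := by
  rw [pow_two (u - v), D_mul, D_mul]
  apply Ideal.mem_span_singleton'.mpr
  refine ⟨(1 + w0) * ((1 - w0) * G) + (1 - w0) * ((1 + w0) * G) +
    (1 - w0) * (1 - w0) * D G, ?_⟩
  rw [fact_Dd, fact_d]
  ring

lemma smul_one_eq (c : ℤ) : (c • (1 : L)) = AddMonoidAlgebra.single ((0:ℤ), (0:ℤ)) c := by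
  rw [one_eq, e_def, AddMonoidAlgebra.smul_single]
  norm_num

lemma D_c (c : ℤ) : D (c • (1 : L)) = 0 := by
  rw [smul_one_eq, D_single]
  simp

lemma FX_e (a b : ℤ) : FX (e a b) = e (-a) b := by
  rw [e_def, FX_single]; rfl

lemma FY_e (a b : ℤ) : FY (e a b) = e a (-b) := by
  rw [e_def, FY_single]; rfl

lemma FX_u : FX u = u := by
  unfold u; rw [map_add, FX_e, FX_e]; norm_num; ring

lemma FX_v : FX v = v := by
  unfold v; rw [map_add, FX_e, FX_e]; norm_num

lemma FY_u : FY u = u := by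
  unfold u; rw [map_add, FY_e, FY_e]; norm_num

lemma FY_v : FY v = v := by
  unfold v; rw [map_add, FY_e, FY_e]; norm_num; ring

lemma FX_aeval (g : MvPolynomial (Fin 2) ℤ) :
    FX (MvPolynomial.aeval ![u, v] g) = MvPolynomial.aeval ![u, v] g := by
  have h := MvPolynomial.comp_aeval (R := ℤ) (f := ![u, v]) (RingHom.toIntAlgHom FX)
  have h2 := DFunLike.congr_fun h g
  simp only [AlgHom.comp_apply] at h2
  have h3 : (fun i => (RingHom.toIntAlgHom FX) (![u, v] i)) = ![u, v] := by
    funext i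
    fin_cases i
    · show FX u = u; exact FX_u
    · show FX v = v; exact FX_v
  rw [h3] at h2
  exact h2

lemma FY_aeval (g : MvPolynomial (Fin 2) ℤ) :
    FY (MvPolynomial.aeval ![u, v] g) = MvPolynomial.aeval ![u, v] g := by
  have h := MvPolynomial.comp_aeval (R := ℤ) (f := ![u, v]) (RingHom.toIntAlgHom FY)
  have h2 := DFunLike.congr_fun h g
  simp only [AlgHom.comp_apply] at h2
  have h3 : (fun i => (RingHom.toIntAlgHom FY) (![u, v] i)) = ![u, v] := by
    funext i
    fin_cases i
    · show FY u = u; exact FY_u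
    · show FY v = v; exact FY_v
  rw [h3] at h2
  exact h2

lemma easy_dir (c : ℤ) (g : MvPolynomial (Fin 2) ℤ) :
    (Finsupp.equivMapDomain flipX (c • 1 + (u - v) ^ 2 * MvPolynomial.aeval ![u, v] g).coeff
        = (c • 1 + (u - v) ^ 2 * MvPolynomial.aeval ![u, v] g).coeff) ∧
    (Finsupp.equivMapDomain flipY (c • 1 + (u - v) ^ 2 * MvPolynomial.aeval ![u, v] g).coeff
        = (c • 1 + (u - v) ^ 2 * MvPolynomial.aeval ![u, v] g).coeff) ∧
    D (c • 1 + (u - v) ^ 2 * MvPolynomial.aeval ![u, v] g) ∈ Ideal.span {(X - Y) ^ 2} := by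
  refine ⟨?_, ?_, ?_⟩
  · rw [equivFX, map_add, map_zsmul, map_one, map_mul, map_pow, map_sub, FX_u, FX_v, FX_aeval]
  · rw [equivFY, map_add, map_zsmul, map_one, map_mul, map_pow, map_sub, FY_u, FY_v, FY_aeval]
  · rw [D_add, D_c, zero_add]
    exact D_mem _


noncomputable def dd : L := u - v

lemma sb_dd : sb dd = 0 := by rw [dd, map_sub, sb_u, sb_v, sub_self]
lemma dl_dd : dl dd = -Ab := by rw [dd, dl_sub, dl_u, dl_v]; ring
lemma sb_Ddd : sb (D dd) = 0 := by rw [dd, D_sub, map_sub, sb_Du, sb_Dv, sub_self]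
lemma dl_Ddd : dl (D dd) = -ub := by rw [dd, D_sub, dl_sub, dl_Du, dl_Dv]; ring

lemma sb_dd_pow (n : ℕ) (hn : 1 ≤ n) : sb (dd ^ n) = 0 := by
  rw [map_pow, sb_dd, zero_pow (by omega)]

lemma sbD_dd_pow' (n : ℕ) : sb (D (dd ^ (n + 1))) = 0 := by
  induction n with
  | zero => rw [pow_one]; exact sb_Ddd
  | succ m ih =>
    rw [pow_succ, sbD_mul, ih, sb_dd, sb_dd_pow (m + 1) (by omega), sb_Ddd]
    ring

lemma sbD_dd_pow (n : ℕ) (hn : 1 ≤ n) : sb (D (dd ^ n)) = 0 := by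
  obtain ⟨m, rfl⟩ := Nat.exists_eq_add_of_le hn
  rw [add_comm]
  exact sbD_dd_pow' m

lemma dl_dd_pow (n : ℕ) (hn : 2 ≤ n) : dl (dd ^ n) = 0 := by
  obtain ⟨m, rfl⟩ := Nat.exists_eq_add_of_le hn
  rw [show 2 + m = (1 + m) + 1 by omega, pow_succ, dl_mul, sb_dd,
    sb_dd_pow (1 + m) (by omega)]
  ring

lemma dlD_dd_pow (n : ℕ) (hn : 2 ≤ n) : dl (D (dd ^ n)) = 0 := by
  obtain ⟨m, rfl⟩ := Nat.exists_eq_add_of_le hn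
  rw [show 2 + m = (1 + m) + 1 by omega, pow_succ, dlD_mul, sb_dd,
    sb_dd_pow (1 + m) (by omega), sbD_dd_pow (1 + m) (by omega), sb_Ddd]
  ring


noncomputable def Eu : Polynomial ℤ →+* L := Polynomial.eval₂RingHom (Int.castRingHom L) u
noncomputable def E1 : Polynomial ℤ →+* L1 := Polynomial.eval₂RingHom (Int.castRingHom L1) ub

lemma Eu_C (a : ℤ) : Eu (Polynomial.C a) = (a : L) := Polynomial.eval₂_C _ _
lemma Eu_X : Eu Polynomial.X = u := Polynomial.eval₂_X _ _
lemma E1_C (a : ℤ) : E1 (Polynomial.C a) = (a : L1) := Polynomial.eval₂_C _ _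
lemma E1_X : E1 Polynomial.X = ub := Polynomial.eval₂_X _ _

lemma intCast_L (a : ℤ) : ((a : ℤ) : L) = AddMonoidAlgebra.single ((0:ℤ),(0:ℤ)) a := by
  rw [← smul_one_eq, zsmul_eq_mul, mul_one]

lemma intCast_L1 (a : ℤ) : ((a : ℤ) : L1) = AddMonoidAlgebra.single (0:ℤ) a := by
  have : (a : L1) = a • (1 : L1) := by rw [zsmul_eq_mul, mul_one]
  rw [this, one_eq1, ee, AddMonoidAlgebra.smul_single]
  norm_num

-- chain rules on u
lemma sb_Eu (S : Polynomial ℤ) : sb (Eu S) = E1 S := by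
  unfold Eu E1
  rw [Polynomial.coe_eval₂RingHom, Polynomial.hom_eval₂, sb_u]
  congr 1
  exact RingHom.ext_int _ _

lemma dl_Eu (S : Polynomial ℤ) : dl (Eu S) = 0 := by
  induction S using Polynomial.induction_on with
  | C a => rw [Eu_C, intCast_L, dl_single]; simp
  | add p q hp hq => rw [map_add, dl_add, hp, hq, add_zero]
  | monomial n a ih =>
    rw [pow_succ, ← mul_assoc, map_mul, Eu_X, dl_mul, ih, dl_u]
    ring

lemma sbD_Eu (S : Polynomial ℤ) : sb (D (Eu S)) = Ab * E1 (Polynomial.derivative S) := by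
  induction S using Polynomial.induction_on with
  | C a => rw [Eu_C, intCast_L, D_single]; simp
  | add p q hp hq => rw [map_add, D_add, map_add, hp, hq, map_add, map_add]; ring
  | monomial n a ih =>
    have hder : Polynomial.derivative (Polynomial.C a * Polynomial.X ^ (n+1))
        = Polynomial.derivative (Polynomial.C a * Polynomial.X ^ n) * Polynomial.X
          + Polynomial.C a * Polynomial.X ^ n := by
      rw [show Polynomial.C a * Polynomial.X ^ (n+1)
          = (Polynomial.C a * Polynomial.X ^ n) * Polynomial.X by ring]
      rw [Polynomial.derivative_mul, Polynomial.derivative_X, mul_one]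
    rw [hder, show Polynomial.C a * Polynomial.X ^ (n+1)
        = (Polynomial.C a * Polynomial.X ^ n) * Polynomial.X by ring,
      map_mul Eu, Eu_X, sbD_mul, ih, sb_Eu, sb_Du, sb_u, map_add E1,
      map_mul E1 (Polynomial.derivative (Polynomial.C a * Polynomial.X ^ n)) Polynomial.X,
      E1_X]
    ring

lemma dlD_Eu (S : Polynomial ℤ) : dl (D (Eu S)) = 0 := by
  induction S using Polynomial.induction_on with
  | C a => rw [Eu_C, intCast_L, D_single]; simp [dl_single, dl_zero]
  | add p q hp hq => rw [map_add, D_add, dl_add, hp, hq, add_zero]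
  | monomial n a ih =>
    rw [pow_succ, ← mul_assoc, map_mul, Eu_X, dlD_mul, ih, dl_u, dl_Eu, dl_Du]
    ring


noncomputable def Pmap : Polynomial (Polynomial ℤ) →+* L := Polynomial.eval₂RingHom Eu dd

lemma Pmap_C (S : Polynomial ℤ) : Pmap (Polynomial.C S) = Eu S := Polynomial.eval₂_C _ _
lemma Pmap_X : Pmap Polynomial.X = dd := Polynomial.eval₂_X _ _

def good (R : Polynomial (Polynomial ℤ)) : Prop :=
  sb (Pmap R) = E1 (R.coeff 0)
  ∧ dl (Pmap R) = -(Ab * E1 (R.coeff 1))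
  ∧ sb (D (Pmap R)) = Ab * E1 (Polynomial.derivative (R.coeff 0))
  ∧ dl (D (Pmap R)) = -(Ab ^ 2 * E1 (Polynomial.derivative (R.coeff 1)) + ub * E1 (R.coeff 1))

lemma coeff_CXn (S : Polynomial ℤ) (n k : ℕ) :
    (Polynomial.C S * Polynomial.X ^ n).coeff k = if n = k then S else 0 := by
  rw [Polynomial.coeff_C_mul, Polynomial.coeff_X_pow]
  by_cases h : n = k
  · subst h; simp
  · rw [if_neg (fun hh => h hh.symm), if_neg h, mul_zero]

lemma good_mono (S : Polynomial ℤ) (n : ℕ) : good (Polynomial.C S * Polynomial.X ^ n) := by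
  have hP : Pmap (Polynomial.C S * Polynomial.X ^ n) = Eu S * dd ^ n := by
    rw [map_mul, Pmap_C, map_pow, Pmap_X]
  have hc0 := coeff_CXn S n 0
  have hc1 := coeff_CXn S n 1
  match n, hP, hc0, hc1 with
  | 0, hP, hc0, hc1 =>
    rw [if_pos rfl] at hc0
    rw [if_neg (by omega)] at hc1
    have hP0 : Pmap (Polynomial.C S * Polynomial.X ^ 0) = Eu S := by
      rw [hP, pow_zero, mul_one]
    refine ⟨?_, ?_, ?_, ?_⟩ <;> simp only [hP0, hc0, hc1]
    · rw [sb_Eu]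
    · rw [dl_Eu, map_zero]; ring
    · rw [sbD_Eu]
    · rw [dlD_Eu]; simp
  | 1, hP, hc0, hc1 =>
    rw [if_neg (by omega)] at hc0
    rw [if_pos rfl] at hc1
    have hP1 : Pmap (Polynomial.C S * Polynomial.X ^ 1) = Eu S * dd := by
      rw [hP, pow_one]
    refine ⟨?_, ?_, ?_, ?_⟩ <;> simp only [hP1, hc0, hc1]
    · rw [map_mul, sb_Eu, sb_dd, map_zero]; ring
    · rw [dl_mul, sb_Eu, sb_dd, dl_Eu, dl_dd]; ring
    · rw [sbD_mul, sb_Eu, sb_dd, sbD_Eu, sb_Ddd, Polynomial.derivative_zero, map_zero]; ring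
    · rw [dlD_mul, sb_Eu, sb_dd, sbD_Eu, sb_Ddd, dl_Eu, dl_dd, dlD_Eu, dl_Ddd]; ring
  | (m+2), hP, hc0, hc1 =>
    have h2 : 2 ≤ m + 2 := by omega
    have h1 : 1 ≤ m + 2 := by omega
    rw [if_neg (by omega)] at hc0
    rw [if_neg (by omega)] at hc1
    refine ⟨?_, ?_, ?_, ?_⟩ <;>
      simp only [hP, hc0, hc1, map_zero, Polynomial.derivative_zero]
    · rw [map_mul, sb_dd_pow _ h1]; ring
    · rw [dl_mul, sb_dd_pow _ h1, dl_Eu, dl_dd_pow _ h2]; ring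
    · rw [sbD_mul, sb_dd_pow _ h1, sbD_dd_pow _ h1, sb_Eu]; ring
    · rw [dlD_mul, sb_dd_pow _ h1, sbD_dd_pow _ h1, dl_Eu, dlD_Eu, dlD_dd_pow _ h2,
        dl_dd_pow _ h2]
      ring

lemma good_all (R : Polynomial (Polynomial ℤ)) : good R := by
  induction R using Polynomial.induction_on with
  | C S =>
    have := good_mono S 0
    rwa [pow_zero, mul_one] at this
  | add p q hp hq =>
    obtain ⟨p1, p2, p3, p4⟩ := hp
    obtain ⟨q1, q2, q3, q4⟩ := hq
    refine ⟨?_, ?_, ?_, ?_⟩ <;>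
      simp only [map_add, D_add, dl_add, Polynomial.coeff_add, Polynomial.derivative_add,
        p1, p2, p3, p4, q1, q2, q3, q4] <;> ring
  | monomial n a _ => exact good_mono a (n + 1)


lemma ub_pow_apply (k : ℕ) :
    (ub ^ k).coeff ((k : ℤ)) = 1 ∧ ∀ j : ℤ, (k : ℤ) < j → (ub ^ k).coeff j = 0 := by
  induction k with
  | zero =>
    constructor
    · rw [pow_zero, Nat.cast_zero, one_eq1]
      exact Finsupp.single_eq_same
    · intro j hj
      rw [pow_zero, one_eq1]
      unfold ee
      rw [AddMonoidAlgebra.coeff_single, Finsupp.single_apply, if_neg (by omega)]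
  | succ k ih =>
    have hsplit : ∀ j : ℤ, (ub ^ (k + 1)).coeff j = (ub ^ k).coeff (j - 1) + (ub ^ k).coeff (j + 1) := by
      intro j
      rw [pow_succ, show (ub : L1) = AddMonoidAlgebra.single (1:ℤ) (1:ℤ)
          + AddMonoidAlgebra.single (-1:ℤ) (1:ℤ) from rfl, mul_add, AddMonoidAlgebra.coeff_add, Finsupp.add_apply,
        AddMonoidAlgebra.coeff_mul_single_apply, AddMonoidAlgebra.coeff_mul_single_apply,
        mul_one, mul_one, neg_neg, ← sub_eq_add_neg]
    constructor
    · rw [hsplit, show ((k + 1 : ℕ) : ℤ) - 1 = (k : ℤ) by push_cast; ring, ih.1,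
        ih.2 (((k + 1 : ℕ) : ℤ) + 1) (by push_cast; omega)]
      norm_num
    · intro j hj
      rw [hsplit, ih.2 (j - 1) (by push_cast at hj ⊢; omega),
        ih.2 (j + 1) (by push_cast at hj ⊢; omega), add_zero]

lemma E1_apply_natDegree (S : Polynomial ℤ) :
    (E1 S).coeff ((S.natDegree : ℤ)) = S.coeff S.natDegree := by
  have hE : E1 S = ∑ k ∈ S.support, ((S.coeff k : ℤ) : L1) * ub ^ k := by
    show Polynomial.eval₂ (Int.castRingHom L1) ub S = _
    rw [Polynomial.eval₂_eq_sum]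
    rfl
  rw [hE, AddMonoidAlgebra.coeff_sum, Finsupp.finset_sum_apply]
  rw [Finset.sum_eq_single S.natDegree]
  · rw [intCast_L1, AddMonoidAlgebra.coeff_single_zero_mul, (ub_pow_apply S.natDegree).1,
      mul_one]
  · intro k hk hkne
    have hklt : k < S.natDegree := lt_of_le_of_ne (Polynomial.le_natDegree_of_mem_supp k hk) hkne
    rw [intCast_L1, AddMonoidAlgebra.coeff_single_zero_mul,
      (ub_pow_apply k).2 _ (by exact_mod_cast hklt), mul_zero]
  · intro h
    rw [Polynomial.notMem_support_iff.mp h]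
    simp

lemma E1_inj {S : Polynomial ℤ} (h : E1 S = 0) : S = 0 := by
  by_contra hS
  have h2 := E1_apply_natDegree S
  rw [h] at h2
  simp only [AddMonoidAlgebra.coeff_zero, Finsupp.coe_zero, Pi.zero_apply] at h2
  exact hS (Polynomial.leadingCoeff_eq_zero.mp h2.symm)

lemma Ab_ne : Ab ≠ 0 := by
  intro h
  have h1 : (Ab).coeff (1 : ℤ) = 1 := by
    show (ee 1 - ee (-1)).coeff (1 : ℤ) = 1
    unfold ee
    rw [AddMonoidAlgebra.coeff_sub, Finsupp.sub_apply, AddMonoidAlgebra.coeff_single,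
      AddMonoidAlgebra.coeff_single, Finsupp.single_eq_same, Finsupp.single_apply, if_neg (by omega)]
    ring
  rw [h] at h1
  simp at h1

lemma Ab_sq : Ab ^ 2 = ub ^ 2 - 4 := by
  have h1 : ub - Ab = 2 * ee (-1) := by unfold ub Ab; ring
  have h2 : ub + Ab = 2 * ee 1 := by unfold ub Ab; ring
  have h3 : ub ^ 2 - Ab ^ 2 = (ub - Ab) * (ub + Ab) := by ring
  rw [h1, h2] at h3
  have h4 : (2 * ee (-1)) * (2 * ee 1) = 4 := by
    rw [show (2 * ee (-1)) * (2 * ee 1) = 4 * (ee (-1) * ee 1) by ring, ee_mul]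
    norm_num
    rw [← one_eq1]
    norm_num
  rw [h4] at h3
  linear_combination -h3

lemma ode {S : Polynomial ℤ}
    (h : (Polynomial.X ^ 2 - Polynomial.C 4) * Polynomial.derivative S + Polynomial.X * S = 0) :
    S = 0 := by
  by_contra hS
  set n := S.natDegree with hn
  have hc := congrArg (fun p => Polynomial.coeff p (n + 1)) h
  simp only [Polynomial.coeff_add, Polynomial.coeff_zero, sub_mul, Polynomial.coeff_sub,
    Polynomial.coeff_X_mul] at hc
  rcases Nat.eq_zero_or_pos n with h0 | hpos
  · have hC : S = Polynomial.C (S.coeff 0) := Polynomial.eq_C_of_natDegree_eq_zero (by omega)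
    have hd : Polynomial.derivative S = 0 := by rw [hC]; simp
    rw [hd] at hc
    simp only [mul_zero, Polynomial.coeff_zero, sub_zero, zero_add] at hc
    exact hS (Polynomial.leadingCoeff_eq_zero.mp hc)
  · have hd1 : (Polynomial.X ^ 2 * Polynomial.derivative S).coeff (n + 1)
        = S.coeff n * (n : ℤ) := by
      rw [mul_comm, Polynomial.coeff_mul_X_pow', if_pos (by omega),
        show n + 1 - 2 = n - 1 by omega, Polynomial.coeff_derivative,
        Nat.sub_add_cancel hpos]
      congr 1
      omega
    have hd2 : (Polynomial.C 4 * Polynomial.derivative S).coeff (n + 1) = 0 := by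
      rw [Polynomial.coeff_C_mul, Polynomial.coeff_derivative,
        Polynomial.coeff_eq_zero_of_natDegree_lt (by omega)]
      ring
    rw [hd1, hd2] at hc
    have h5 : S.coeff n * ((n : ℤ) + 1) = 0 := by linear_combination hc
    rcases mul_eq_zero.mp h5 with h6 | h6
    · exact hS (Polynomial.leadingCoeff_eq_zero.mp h6)
    · omega


noncomputable abbrev Madj : Subalgebra ℤ L := Algebra.adjoin ℤ ({u, v} : Set L)

lemma u_mem : u ∈ Madj := Algebra.subset_adjoin (by simp)
lemma v_mem : v ∈ Madj := Algebra.subset_adjoin (by simp)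

lemma v_mul_q (b : ℤ) : v * (e 0 b + e 0 (-b))
    = (e 0 (b+1) + e 0 (-(b+1))) + (e 0 (b-1) + e 0 (-(b-1))) := by
  unfold v
  rw [add_mul, mul_add, mul_add, e_mul, e_mul, e_mul, e_mul]
  rw [show (1:ℤ) + b = b + 1 by ring, show (1:ℤ) + -b = -(b-1) by ring,
      show (-1:ℤ) + b = b - 1 by ring, show (-1:ℤ) + -b = -(b+1) by ring,
      show (0:ℤ) + 0 = 0 by ring]
  abel

lemma u_mul_p (a : ℤ) : u * (e a 0 + e (-a) 0)
    = (e (a+1) 0 + e (-(a+1)) 0) + (e (a-1) 0 + e (-(a-1)) 0) := by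
  unfold u
  rw [add_mul, mul_add, mul_add, e_mul, e_mul, e_mul, e_mul]
  rw [show (1:ℤ) + a = a + 1 by ring, show (1:ℤ) + -a = -(a-1) by ring,
      show (-1:ℤ) + a = a - 1 by ring, show (-1:ℤ) + -a = -(a+1) by ring,
      show (0:ℤ) + 0 = 0 by ring]
  abel

lemma q_mem_nat : ∀ n : ℕ, e 0 (n : ℤ) + e 0 (-(n : ℤ)) ∈ Madj := by
  intro n
  induction n using Nat.strong_induction_on with
  | _ n ih =>
    match n, ih with
    | 0, _ => rw [Nat.cast_zero, neg_zero, ← one_eq]; exact add_mem (one_mem _) (one_mem _)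
    | 1, _ => rw [Nat.cast_one]; exact v_mem
    | (m+2), ih =>
      have h1 := ih (m+1) (by omega)
      have h0 := ih m (by omega)
      push_cast at h1 ⊢
      have key2 : e 0 ((m:ℤ)+2) + e 0 (-((m:ℤ)+2))
          = v * (e 0 ((m:ℤ)+1) + e 0 (-((m:ℤ)+1))) - (e 0 (m:ℤ) + e 0 (-(m:ℤ))) := by
        have key := v_mul_q ((m:ℤ)+1)
        rw [show (m:ℤ)+1+1 = (m:ℤ)+2 by ring, show (m:ℤ)+1-1 = (m:ℤ) by ring] at key
        linear_combination -key
      rw [key2]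
      exact sub_mem (mul_mem v_mem h1) h0

lemma p_mem_nat : ∀ n : ℕ, e (n : ℤ) 0 + e (-(n : ℤ)) 0 ∈ Madj := by
  intro n
  induction n using Nat.strong_induction_on with
  | _ n ih =>
    match n, ih with
    | 0, _ => rw [Nat.cast_zero, neg_zero, ← one_eq]; exact add_mem (one_mem _) (one_mem _)
    | 1, _ => rw [Nat.cast_one]; exact u_mem
    | (m+2), ih =>
      have h1 := ih (m+1) (by omega)
      have h0 := ih m (by omega)
      push_cast at h1 ⊢
      have key2 : e ((m:ℤ)+2) 0 + e (-((m:ℤ)+2)) 0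
          = u * (e ((m:ℤ)+1) 0 + e (-((m:ℤ)+1)) 0) - (e (m:ℤ) 0 + e (-(m:ℤ)) 0) := by
        have key := u_mul_p ((m:ℤ)+1)
        rw [show (m:ℤ)+1+1 = (m:ℤ)+2 by ring, show (m:ℤ)+1-1 = (m:ℤ) by ring] at key
        linear_combination -key
      rw [key2]
      exact sub_mem (mul_mem u_mem h1) h0

lemma q_mem (b : ℤ) : e 0 b + e 0 (-b) ∈ Madj := by
  rcases Int.natAbs_eq b with h | h
  · rw [h]; exact q_mem_nat b.natAbs
  · rw [h, neg_neg, add_comm]; exact q_mem_nat b.natAbs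

lemma p_mem (a : ℤ) : e a 0 + e (-a) 0 ∈ Madj := by
  rcases Int.natAbs_eq a with h | h
  · rw [h]; exact p_mem_nat a.natAbs
  · rw [h, neg_neg, add_comm]; exact p_mem_nat a.natAbs


lemma L_add_apply (f g : L) (z : ℤ × ℤ) : (f + g).coeff z = f.coeff z + g.coeff z := rfl
lemma L_sub_apply (f g : L) (z : ℤ × ℤ) : (f - g).coeff z = f.coeff z - g.coeff z := rfl
lemma L_smul_apply (c : ℤ) (f : L) (z : ℤ × ℤ) : (c • f).coeff z = c * f.coeff z := rfl
lemma L_zero_apply (z : ℤ × ℤ) : (0 : L).coeff z = 0 := rfl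

lemma orbit (p q : ℤ) (hp : 0 ≤ p) (hq : 0 ≤ q) :
    ∃ os : L, os ∈ Madj ∧ FX os = os ∧ FY os = os ∧
      ∀ x y : ℤ, os.coeff (x, y) = if x.natAbs = p.natAbs ∧ y.natAbs = q.natAbs then 1 else 0 := by
  rcases eq_or_lt_of_le hp with hp0 | hp0 <;> rcases eq_or_lt_of_le hq with hq0 | hq0
  · refine ⟨1, one_mem _, map_one _, map_one _, ?_⟩
    intro x y
    rw [one_eq, e_def]
    rw [AddMonoidAlgebra.coeff_single, Finsupp.single_apply]
    rw [← hp0, ← hq0]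
    split_ifs with h1 h2 h2
    · rfl
    · exfalso; apply h2; rw [Prod.mk.injEq] at h1; constructor <;> omega
    · exfalso; apply h1; rw [Prod.mk.injEq]; constructor <;> omega
    · rfl
  · refine ⟨e 0 q + e 0 (-q), q_mem q, ?_, ?_, ?_⟩
    · rw [map_add, FX_e, FX_e, neg_zero]
    · rw [map_add, FY_e, FY_e, neg_neg, add_comm]
    · intro x y
      rw [L_add_apply, e_def, e_def, AddMonoidAlgebra.coeff_single, AddMonoidAlgebra.coeff_single,
        Finsupp.single_apply, Finsupp.single_apply, ← hp0]
      split_ifs with h1 h2 h2 h3 h3 h4 h4 <;>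
        first
        | rfl
        | (exfalso; simp only [Prod.mk.injEq] at *; omega)
        | (simp only [Prod.mk.injEq] at *; omega)
  · refine ⟨e p 0 + e (-p) 0, p_mem p, ?_, ?_, ?_⟩
    · rw [map_add, FX_e, FX_e, neg_neg, add_comm]
    · rw [map_add, FY_e, FY_e, neg_zero]
    · intro x y
      rw [L_add_apply, e_def, e_def, AddMonoidAlgebra.coeff_single, AddMonoidAlgebra.coeff_single,
        Finsupp.single_apply, Finsupp.single_apply, ← hq0]
      split_ifs with h1 h2 h2 h3 h3 h4 h4 <;>
        first
        | rfl
        | (exfalso; simp only [Prod.mk.injEq] at *; omega)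
        | (simp only [Prod.mk.injEq] at *; omega)
  · refine ⟨e p q + e (-p) q + e p (-q) + e (-p) (-q), ?_, ?_, ?_, ?_⟩
    · have hprod : e p q + e (-p) q + e p (-q) + e (-p) (-q)
          = (e p 0 + e (-p) 0) * (e 0 q + e 0 (-q)) := by
        rw [add_mul, mul_add, mul_add, e_mul, e_mul, e_mul, e_mul]
        rw [show (p:ℤ) + 0 = p by ring, show (-p:ℤ) + 0 = -p by ring,
          show (0:ℤ) + q = q by ring, show (0:ℤ) + -q = -q by ring]
        abel
      rw [hprod]
      exact mul_mem (p_mem p) (q_mem q)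
    · rw [map_add, map_add, map_add, FX_e, FX_e, FX_e, FX_e, neg_neg]
      abel
    · rw [map_add, map_add, map_add, FY_e, FY_e, FY_e, FY_e, neg_neg]
      abel
    · intro x y
      simp only [L_add_apply, e_def, AddMonoidAlgebra.coeff_single, Finsupp.single_apply, Prod.mk.injEq]
      split_ifs <;>
        first
        | rfl
        | (exfalso; omega)
        | omega


lemma invariant_mem : ∀ N : ℕ, ∀ f : L, f.coeff.support.card = N →
    Finsupp.equivMapDomain flipX f.coeff = f.coeff → Finsupp.equivMapDomain flipY f.coeff = f.coeff → f ∈ Madj := by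
  intro N
  induction N using Nat.strong_induction_on with
  | _ N ih =>
    intro f hN hx hy
    rcases Nat.eq_zero_or_pos N with h0 | hpos
    · rw [show f = 0 from AddMonoidAlgebra.ext
          (Finsupp.card_support_eq_zero.mp (by omega : f.coeff.support.card = 0))]
      exact zero_mem _
    · have h1 : ∀ x y : ℤ, f.coeff (-x, y) = f.coeff (x, y) := by
        intro x y
        have h := DFunLike.congr_fun hx (x, y)
        rwa [Finsupp.equivMapDomain_apply] at h
      have h2 : ∀ x y : ℤ, f.coeff (x, -y) = f.coeff (x, y) := by
        intro x y
        have h := DFunLike.congr_fun hy (x, y)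
        rwa [Finsupp.equivMapDomain_apply] at h
      have habs : ∀ x y : ℤ, f.coeff (x, y) = f.coeff ((x.natAbs : ℤ), (y.natAbs : ℤ)) := by
        intro x y
        have e1 : f.coeff ((x.natAbs : ℤ), y) = f.coeff (x, y) := by
          rcases Int.natAbs_eq x with h | h
          · rw [← h]
          · rw [show ((x.natAbs : ℤ), y) = (-x, y) by rw [show ((x.natAbs : ℤ)) = -x by omega],
              h1]
        have e2 : f.coeff ((x.natAbs : ℤ), (y.natAbs : ℤ)) = f.coeff ((x.natAbs : ℤ), y) := by
          rcases Int.natAbs_eq y with h | h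
          · rw [← h]
          · rw [show ((x.natAbs : ℤ), (y.natAbs : ℤ)) = ((x.natAbs : ℤ), -y) by
              rw [show ((y.natAbs : ℤ)) = -y by omega], h2]
        rw [← e1]
        exact e2.symm
      obtain ⟨m, hm⟩ : f.coeff.support.Nonempty := Finset.card_pos.mp (by omega)
      obtain ⟨os, hosM, hosX, hosY, hosc⟩ :=
        orbit (m.1.natAbs : ℤ) (m.2.natAbs : ℤ) (by positivity) (by positivity)
      set c : ℤ := f.coeff ((m.1.natAbs : ℤ), (m.2.natAbs : ℤ)) with hc
      have hcm : c = f.coeff m := by rw [hc, ← habs m.1 m.2]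
      have hcne : c ≠ 0 := by rw [hcm]; exact Finsupp.mem_support_iff.mp hm
      set f' : L := f - c • os with hf'
      have hcoef : ∀ x y : ℤ, f'.coeff (x, y)
          = if x.natAbs = m.1.natAbs ∧ y.natAbs = m.2.natAbs then 0 else f.coeff (x, y) := by
        intro x y
        rw [hf', L_sub_apply, L_smul_apply, hosc]
        simp only [Int.natAbs_natCast]
        split_ifs with h
        · rw [mul_one, habs x y, h.1, h.2, ← hc]
          ring
        · rw [mul_zero, sub_zero]
      have hsub : f'.coeff.support ⊆ f.coeff.support.erase ((m.1.natAbs : ℤ), (m.2.natAbs : ℤ)) := by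
        intro z hz
        have hz' : f'.coeff z ≠ 0 := Finsupp.mem_support_iff.mp hz
        have hco : f'.coeff z = if z.1.natAbs = m.1.natAbs ∧ z.2.natAbs = m.2.natAbs
            then 0 else f.coeff (z.1, z.2) := hcoef z.1 z.2
        have hcond : ¬(z.1.natAbs = m.1.natAbs ∧ z.2.natAbs = m.2.natAbs) := by
          intro hcnd
          exact hz' (by rw [hco, if_pos hcnd])
        rw [hco, if_neg hcond] at hz'
        rw [Finset.mem_erase]
        refine ⟨?_, Finsupp.mem_support_iff.mpr hz'⟩
        intro hzeq
        apply hcond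
        rw [hzeq]
        constructor <;> simp [Int.natAbs_abs]
      have hpt : ((m.1.natAbs : ℤ), (m.2.natAbs : ℤ)) ∈ f.coeff.support :=
        Finsupp.mem_support_iff.mpr (by rw [← hc]; exact hcne)
      have hcard : f'.coeff.support.card < N := by
        calc f'.coeff.support.card ≤ (f.coeff.support.erase ((m.1.natAbs : ℤ), (m.2.natAbs : ℤ))).card :=
              Finset.card_le_card hsub
        _ < f.coeff.support.card := Finset.card_erase_lt_of_mem hpt
        _ = N := hN
      have hfx' : Finsupp.equivMapDomain flipX f'.coeff = f'.coeff := by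
        rw [equivFX, hf', map_sub, map_zsmul, hosX, AddMonoidAlgebra.coeff_sub, ← equivFX, hx,
          AddMonoidAlgebra.coeff_sub]
      have hfy' : Finsupp.equivMapDomain flipY f'.coeff = f'.coeff := by
        rw [equivFY, hf', map_sub, map_zsmul, hosY, AddMonoidAlgebra.coeff_sub, ← equivFY, hy,
          AddMonoidAlgebra.coeff_sub]
      have hmem' := ih f'.coeff.support.card hcard f' rfl hfx' hfy'
      have hfeq : f = f' + c • os := by rw [hf']; ring
      rw [hfeq]
      exact add_mem hmem' (Subalgebra.smul_mem _ hosM c)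


lemma adjoin_to_Pmap {z : L} (hz : z ∈ Madj) :
    ∃ R : Polynomial (Polynomial ℤ), Pmap R = z := by
  induction hz using Algebra.adjoin_induction with
  | mem x hx =>
    rcases Set.mem_insert_iff.mp hx with h | h
    · exact ⟨Polynomial.C Polynomial.X, by rw [Pmap_C, Eu_X, h]⟩
    · rw [Set.mem_singleton_iff] at h
      refine ⟨Polynomial.C Polynomial.X - Polynomial.X, ?_⟩
      rw [map_sub, Pmap_C, Eu_X, Pmap_X, h]
      unfold dd
      ring
  | algebraMap r =>
    exact ⟨Polynomial.C (Polynomial.C r), by rw [Pmap_C, Eu_C]; exact (eq_intCast (algebraMap ℤ L) r).symm⟩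
  | add x y hx hy ihx ihy =>
    obtain ⟨R1, h1⟩ := ihx
    obtain ⟨R2, h2⟩ := ihy
    exact ⟨R1 + R2, by rw [map_add, h1, h2]⟩
  | mul x y hx hy ihx ihy =>
    obtain ⟨R1, h1⟩ := ihx
    obtain ⟨R2, h2⟩ := ihy
    exact ⟨R1 * R2, by rw [map_mul, h1, h2]⟩

lemma Eu_mem (S : Polynomial ℤ) : Eu S ∈ Madj := by
  induction S using Polynomial.induction_on with
  | C a =>
    rw [Eu_C, show ((a : ℤ) : L) = algebraMap ℤ L a from rfl]
    exact algebraMap_mem _ _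
  | add p q hp hq => rw [map_add]; exact add_mem hp hq
  | monomial n a ih =>
    rw [show Polynomial.C a * Polynomial.X ^ (n+1)
        = (Polynomial.C a * Polynomial.X ^ n) * Polynomial.X by ring, map_mul, Eu_X]
    exact mul_mem ih u_mem

lemma Pmap_mem (R : Polynomial (Polynomial ℤ)) : Pmap R ∈ Madj := by
  induction R using Polynomial.induction_on with
  | C S => rw [Pmap_C]; exact Eu_mem S
  | add p q hp hq => rw [map_add]; exact add_mem hp hq
  | monomial n a ih =>
    rw [show Polynomial.C a * Polynomial.X ^ (n+1)
        = (Polynomial.C a * Polynomial.X ^ n) * Polynomial.X by ring, map_mul, Pmap_X]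
    refine mul_mem ih ?_
    unfold dd
    exact sub_mem u_mem v_mem

lemma adjoin_to_aeval {z : L} (hz : z ∈ Madj) :
    ∃ g : MvPolynomial (Fin 2) ℤ, z = MvPolynomial.aeval ![u, v] g := by
  induction hz using Algebra.adjoin_induction with
  | mem x hx =>
    rcases Set.mem_insert_iff.mp hx with h | h
    · exact ⟨MvPolynomial.X 0, by rw [MvPolynomial.aeval_X, h]; rfl⟩
    · rw [Set.mem_singleton_iff] at h
      exact ⟨MvPolynomial.X 1, by rw [MvPolynomial.aeval_X, h]; rfl⟩
  | algebraMap r => exact ⟨MvPolynomial.C r, by rw [MvPolynomial.aeval_C]⟩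
  | add x y hx hy ihx ihy =>
    obtain ⟨g1, h1⟩ := ihx
    obtain ⟨g2, h2⟩ := ihy
    exact ⟨g1 + g2, by rw [map_add, h1, h2]⟩
  | mul x y hx hy ihx ihy =>
    obtain ⟨g1, h1⟩ := ihx
    obtain ⟨g2, h2⟩ := ihy
    exact ⟨g1 * g2, by rw [map_mul, h1, h2]⟩


/-- the ring `J(A(1,1))`:
`{f ∈ ℤ[x^{±1},y^{±1}]^{ℤ₂×ℤ₂} : x∂f/∂x + y∂f/∂y ∈ ((x−y)²)}`
equals `{c + (u−v)²·g(u,v) : c ∈ ℤ, g ∈ ℤ[u,v]}`. -/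
theorem statement6 :
    {f : AddMonoidAlgebra ℤ (ℤ × ℤ) |
        Finsupp.equivMapDomain flipX f.coeff = f.coeff ∧ Finsupp.equivMapDomain flipY f.coeff = f.coeff ∧
        D f ∈ Ideal.span {(X - Y) ^ 2}} =
    {f : AddMonoidAlgebra ℤ (ℤ × ℤ) |
        ∃ (c : ℤ) (g : MvPolynomial (Fin 2) ℤ),
          f = c • 1 + (u - v) ^ 2 * MvPolynomial.aeval ![u, v] g} := by
  ext f
  simp only [Set.mem_setOf_eq]
  constructor
  · rintro ⟨hx, hy, hD⟩
    obtain ⟨R, hR⟩ := adjoin_to_Pmap (invariant_mem f.coeff.support.card f rfl hx hy)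
    obtain ⟨hg1, hg2, hg3, hg4⟩ := good_all R
    obtain ⟨hk1, hk2⟩ := kill_ideal hD
    rw [hR] at hg3 hg4
    rw [hk1] at hg3
    rw [hk2] at hg4
    -- coeff 0 is constant
    have hder0 : Polynomial.derivative (R.coeff 0) = 0 := by
      rcases mul_eq_zero.mp hg3.symm with h | h
      · exact absurd h Ab_ne
      · exact E1_inj h
    have hc0 : R.coeff 0 = Polynomial.C ((R.coeff 0).coeff 0) :=
      Polynomial.eq_C_of_derivative_eq_zero hder0
    -- coeff 1 is zero
    have hc1 : R.coeff 1 = 0 := by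
      have he : E1 ((Polynomial.X ^ 2 - Polynomial.C 4) *
          Polynomial.derivative (R.coeff 1) + Polynomial.X * (R.coeff 1)) = 0 := by
        rw [map_add, map_mul, map_mul, map_sub, map_pow, E1_X, E1_C]
        have h4 : ((4 : ℤ) : L1) = 4 := by norm_num
        rw [h4, ← Ab_sq]
        linear_combination hg4
      exact ode (E1_inj he)
    -- divisibility
    have hdvd : Polynomial.X ^ 2 ∣ (R - Polynomial.C (R.coeff 0)) := by
      rw [Polynomial.X_pow_dvd_iff]
      intro d hd
      interval_cases d
      · rw [Polynomial.coeff_sub, Polynomial.coeff_C_zero]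
        ring
      · rw [Polynomial.coeff_sub, hc1, Polynomial.coeff_C, if_neg (by omega)]
        ring
    obtain ⟨g', hg'⟩ := hdvd
    set c0 : ℤ := (R.coeff 0).coeff 0 with hc0def
    have hRdec : R = Polynomial.C (Polynomial.C c0) + Polynomial.X ^ 2 * g' := by
      rw [← hc0]
      linear_combination hg'
    have hfdec : f = c0 • (1 : L) + (u - v) ^ 2 * Pmap g' := by
      have hPR : Pmap R = (c0 : L) + dd ^ 2 * Pmap g' := by
        conv_lhs => rw [hRdec]
        rw [map_add, Pmap_C, Eu_C, map_mul, map_pow, Pmap_X]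
      rw [← hR, hPR, zsmul_eq_mul, mul_one]
      rfl
    obtain ⟨g, hg⟩ := adjoin_to_aeval (Pmap_mem g')
    exact ⟨c0, g, by rw [hfdec, hg]⟩
  · rintro ⟨c, g, rfl⟩
    exact easy_dir c g

end Stmt6
end

section
/- In the Laurent polynomial ring Z[x^{±1}, y^{±1}] with u = x + x^{-1}, v = y + y^{-1}, the identity u − v = (x − y)(1 − 1/(xy)) holds; consequently, for any g ∈ Z[u,v], the element (u − v)²·g satisfies x·∂f/∂x + y·∂f/∂y ∈ ((x−y)²). -/
namespace Stmt7

/-- the monomial `x^a y^b` in `ℤ[x^{±1}, y^{±1}]`. -/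
noncomputable def e (a b : ℤ) : AddMonoidAlgebra ℤ (ℤ × ℤ) :=
  AddMonoidAlgebra.single (a, b) 1

noncomputable def X : AddMonoidAlgebra ℤ (ℤ × ℤ) := e 1 0
noncomputable def Y : AddMonoidAlgebra ℤ (ℤ × ℤ) := e 0 1
noncomputable def u : AddMonoidAlgebra ℤ (ℤ × ℤ) := e 1 0 + e (-1) 0
noncomputable def v : AddMonoidAlgebra ℤ (ℤ × ℤ) := e 0 1 + e 0 (-1)

/-- the Euler operator `x∂/∂x + y∂/∂y`. -/
noncomputable def D (f : AddMonoidAlgebra ℤ (ℤ × ℤ)) : AddMonoidAlgebra ℤ (ℤ × ℤ) :=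
  Finsupp.sum f.coeff fun m c => AddMonoidAlgebra.single m ((m.1 + m.2) * c)

lemma e_mul (a b c d : ℤ) : e a b * e c d = e (a + c) (b + d) := by
  simp [e, AddMonoidAlgebra.single_mul_single, Prod.mk_add_mk]

lemma D_single (m : ℤ × ℤ) (c : ℤ) :
    D (AddMonoidAlgebra.single m c) = AddMonoidAlgebra.single m ((m.1 + m.2) * c) := by
  unfold D
  rw [AddMonoidAlgebra.coeff_single, Finsupp.sum_single_index]
  simp

lemma D_add (f g : AddMonoidAlgebra ℤ (ℤ × ℤ)) : D (f + g) = D f + D g := by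
  unfold D
  rw [AddMonoidAlgebra.coeff_add]
  apply Finsupp.sum_add_index' <;> intros <;> simp [mul_add, Finsupp.single_add]

lemma D_zero : D 0 = 0 := by
  unfold D; simp

lemma D_neg (f : AddMonoidAlgebra ℤ (ℤ × ℤ)) : D (-f) = - D f := by
  have h := D_add f (-f)
  rw [add_neg_cancel, D_zero] at h
  linear_combination -h

lemma D_sub (f g : AddMonoidAlgebra ℤ (ℤ × ℤ)) : D (f - g) = D f - D g := by
  rw [sub_eq_add_neg, D_add, D_neg, sub_eq_add_neg]

lemma D_single_mul (m : ℤ × ℤ) (c : ℤ) (g : AddMonoidAlgebra ℤ (ℤ × ℤ)) :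
    D (AddMonoidAlgebra.single m c * g)
      = D (AddMonoidAlgebra.single m c) * g + AddMonoidAlgebra.single m c * D g := by
  induction g using AddMonoidAlgebra.induction with
  | zero => simp [D_zero]
  | single_add n d g' hn hd ih =>
      rw [mul_add, D_add, ih, D_add, mul_add]
      have : D (AddMonoidAlgebra.single m c * AddMonoidAlgebra.single n d)
          = D (AddMonoidAlgebra.single m c) * AddMonoidAlgebra.single n d
            + AddMonoidAlgebra.single m c * D (AddMonoidAlgebra.single n d) := by
        rw [AddMonoidAlgebra.single_mul_single, D_single, D_single, D_single,
          AddMonoidAlgebra.single_mul_single, AddMonoidAlgebra.single_mul_single,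
          ← AddMonoidAlgebra.single_add]
        congr 1
        simp [Prod.fst_add, Prod.snd_add]
        ring
      rw [this]
      ring

lemma D_mul (f g : AddMonoidAlgebra ℤ (ℤ × ℤ)) : D (f * g) = D f * g + f * D g := by
  induction f using AddMonoidAlgebra.induction with
  | zero => simp [D_zero]
  | single_add m c f' hm hc ih =>
      rw [add_mul, D_add, ih, D_add, add_mul, D_single_mul]
      ring

/-- in `ℤ[x^{±1}, y^{±1}]` one has `u − v = (x − y)(1 − (xy)^{-1})`;
consequently for any `g ∈ ℤ[u,v]` the element `f = (u − v)²·g` satisfies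
`x∂f/∂x + y∂f/∂y ∈ ((x−y)²)`. -/
theorem statement7 :
    u - v = (X - Y) * (1 - e (-1) (-1)) ∧
    ∀ g : MvPolynomial (Fin 2) ℤ,
      D ((u - v) ^ 2 * MvPolynomial.aeval ![u, v] g) ∈ Ideal.span {(X - Y) ^ 2} := by
  have h1 : u - v = (X - Y) * (1 - e (-1) (-1)) := by
    have hone : (1 : AddMonoidAlgebra ℤ (ℤ × ℤ)) = e 0 0 := rfl
    simp only [u, v, X, Y, hone]
    rw [sub_mul, mul_sub, mul_sub, e_mul, e_mul, e_mul, e_mul]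
    norm_num
    abel
  refine ⟨h1, fun g => ?_⟩
  have hd : D (u - v) = (X - Y) * (1 + e (-1) (-1)) := by
    have hone : (1 : AddMonoidAlgebra ℤ (ℤ × ℤ)) = e 0 0 := rfl
    have hu : u = AddMonoidAlgebra.single ((1 : ℤ), (0 : ℤ)) 1
        + AddMonoidAlgebra.single ((-1 : ℤ), (0 : ℤ)) 1 := rfl
    have hv : v = AddMonoidAlgebra.single ((0 : ℤ), (1 : ℤ)) 1
        + AddMonoidAlgebra.single ((0 : ℤ), (-1 : ℤ)) 1 := rfl
    rw [D_sub, hu, hv, D_add, D_add, D_single, D_single, D_single, D_single]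
    simp only [X, Y, hone]
    rw [sub_mul, mul_add, mul_add, e_mul, e_mul, e_mul, e_mul]
    norm_num
    simp only [e, Finsupp.single_neg]
    abel
  rw [Ideal.mem_span_singleton]
  set w : AddMonoidAlgebra ℤ (ℤ × ℤ) := e (-1) (-1) with hw
  refine ⟨((1 + w) * (1 - w) + (1 - w) * (1 + w)) * MvPolynomial.aeval ![u, v] g
      + (1 - w) ^ 2 * D (MvPolynomial.aeval ![u, v] g), ?_⟩
  rw [D_mul, sq, D_mul, hd, h1]
  ring
end Stmt7
end

section
/- With h̃_k as in the previous context satisfying Σ_{i=0}^n h̃_{k+n−i} a_i = 0 for all k ∈ Z (a_0 = 1, a_n = (−1)^n x_1⋯x_n), for any pairwise distinct integers k_1,…,k_n and any integer l: det(h̃_{k_r + s−1})_{r,s=1}^n · a_n^l = (−1)^{nl} · det(h̃_{k_r + l + s−1})_{r,s=1}^n. -/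
private def compC {R : Type*} [CommRing R] (n : ℕ) (a : ℕ → R) : Matrix (Fin n) (Fin n) R :=
  Matrix.of fun j s => if (s : ℕ) + 1 = n then -(a (n - (j : ℕ))) else if (j : ℕ) = (s : ℕ) + 1 then 1 else 0

private lemma compC_det {R : Type*} [CommRing R] (n : ℕ) (a : ℕ → R) (ha0 : a 0 = 1) :
    (compC n a).det = (-1) ^ n * a n := by
  cases n with
  | zero => simp [Matrix.det_fin_zero, ha0]
  | succ m =>
    rw [Matrix.det_succ_column _ (Fin.last m), Finset.sum_eq_single 0]
    · have h1 : compC (m+1) a 0 (Fin.last m) = -(a (m+1)) := by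
        simp [compC]
      have h2 : ((compC (m+1) a).submatrix (Fin.succAbove 0) (Fin.succAbove (Fin.last m))) = 1 := by
        ext i' s
        simp only [Matrix.submatrix_apply, compC, Matrix.of_apply, Fin.succAbove_last,
          Fin.succAbove_zero, Fin.coe_castSucc, Fin.val_succ]
        have : (s : ℕ) + 1 ≠ m + 1 := by omega
        rw [if_neg this]
        by_cases h : i' = s
        · simp [h, Matrix.one_apply]
        · have : (i' : ℕ) + 1 ≠ (s : ℕ) + 1 := by
            simp [Fin.ext_iff] at h; omega
          rw [if_neg this, Matrix.one_apply_ne h]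
      rw [h1, h2, Matrix.det_one]
      simp only [Fin.val_last, Fin.val_zero, zero_add, pow_succ]
      ring
    · intro i _ hi
      have hiv : (i : ℕ) ≠ 0 := by intro h; exact hi (Fin.ext (by rw [h]; simp))
      have hm : 0 < m := by have := i.isLt; omega
      have : ((compC (m+1) a).submatrix (Fin.succAbove i) (Fin.succAbove (Fin.last m))).det = 0 := by
        apply Matrix.det_eq_zero_of_row_eq_zero ⟨0, hm⟩
        intro s
        have hlt : Fin.castSucc (⟨0, hm⟩ : Fin m) < i := by
          exact Fin.lt_def.mpr (Nat.pos_of_ne_zero hiv)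
        simp only [Matrix.submatrix_apply, Fin.succAbove_last,
          Fin.succAbove_of_castSucc_lt _ _ hlt, compC, Matrix.of_apply, Fin.coe_castSucc]
        have h1 : (s : ℕ) + 1 ≠ m + 1 := by omega
        rw [if_neg h1]
        simp
      rw [this, mul_zero]
    · simp

private lemma compC_step {R : Type*} [CommRing R] (n : ℕ) (ht : ℤ → R) (a : ℕ → R)
    (ha0 : a 0 = 1)
    (hrec : ∀ k : ℤ, ∑ i : Fin (n + 1), ht (k + n - i) * a i = 0)
    (k : Fin n → ℤ) (l : ℤ) :
    (Matrix.of fun r s : Fin n => ht (k r + (l + 1) + s)) =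
      (Matrix.of fun r s : Fin n => ht (k r + l + s)) * compC n a := by
  ext r s
  rw [Matrix.mul_apply]
  simp only [Matrix.of_apply, compC]
  by_cases hs : (s : ℕ) + 1 = n
  · simp only [if_pos hs]
    have hrec' := hrec (k r + l)
    rw [Fin.sum_univ_succ] at hrec'
    simp only [Fin.val_zero, Nat.cast_zero, sub_zero, ha0, mul_one, Fin.val_succ] at hrec'
    push_cast at hrec'
    have key : ht (k r + l + n) = ∑ j : Fin n, ht (k r + l + ↑↑j) * -a (n - ↑j) := by
      have hsum : ∑ i : Fin n, ht (k r + l + ↑n - (↑↑i + 1)) * a (↑i + 1)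
          = ∑ j : Fin n, ht (k r + l + ↑↑j) * a (n - ↑j) := by
        apply Fintype.sum_equiv (Fin.revPerm)
        intro x
        have hx : (x : ℕ) < n := x.isLt
        have h1 : ((Fin.revPerm x : Fin n) : ℕ) = n - 1 - (x : ℕ) := by
          simp [Fin.rev]; omega
        rw [h1]
        have h2 : n - (n - 1 - (x : ℕ)) = (x : ℕ) + 1 := by omega
        rw [h2]
        congr 1
        have : ((n - 1 - (x : ℕ) : ℕ) : ℤ) = (n : ℤ) - 1 - (x : ℕ) := by
          omega
        rw [this]; ring
      rw [Finset.sum_congr rfl (fun j _ => by rw [mul_neg]), Finset.sum_neg_distrib, ← hsum]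
      linear_combination hrec'
    have harg : k r + (l + 1) + (s : ℤ) = k r + l + (n : ℤ) := by
      have : ((s : ℕ) : ℤ) + 1 = (n : ℤ) := by exact_mod_cast congrArg (Nat.cast : ℕ → ℤ) hs
      omega
    rw [harg, key]
  · simp only [if_neg hs]
    have hlt : (s : ℕ) + 1 < n := lt_of_le_of_ne s.isLt hs
    set j₀ : Fin n := ⟨(s : ℕ) + 1, hlt⟩ with hj₀
    have : ∀ j : Fin n, ((j : ℕ) = (s : ℕ) + 1) = (j = j₀) := by
      intro j; simp [Fin.ext_iff, hj₀]
    simp only [this]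
    rw [Finset.sum_congr rfl (fun j _ => by rw [mul_ite, mul_one, mul_zero]),
      Finset.sum_ite_eq' Finset.univ j₀]
    simp only [Finset.mem_univ, if_pos]
    congr 1
    have : ((j₀ : ℕ) : ℤ) = (s : ℤ) + 1 := by simp [hj₀]
    rw [this]; ring

/-- let `h̃ : ℤ → R` satisfy the linear recurrence
`Σ_{i=0}^n h̃_{k+n−i}·a_i = 0` for all `k ∈ ℤ`, where `a_0 = 1` and `a_n` is a unit.
Then for any pairwise distinct integers `k_1,…,k_n` and any integer `l`:
`det(h̃_{k_r+s−1})·a_n^l = (−1)^{nl}·det(h̃_{k_r+l+s−1})` (determinants of `n×n`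
matrices, rows `r`, columns `s`). -/
theorem statement12 {R : Type*} [CommRing R] (n : ℕ) (ht : ℤ → R) (a : ℕ → R)
    (ha0 : a 0 = 1) (un : Rˣ) (han : (un : R) = a n)
    (hrec : ∀ k : ℤ, ∑ i : Fin (n + 1), ht (k + n - i) * a i = 0)
    (k : Fin n → ℤ) (hk : Function.Injective k) (l : ℤ) :
    Matrix.det (Matrix.of fun r s : Fin n => ht (k r + s)) * ((un ^ l : Rˣ) : R) =
      (((-1 : Rˣ) ^ (n * l) : Rˣ) : R) *
        Matrix.det (Matrix.of fun r s : Fin n => ht (k r + l + s)) := by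
  set w : Rˣ := (-1) ^ n * un with hw
  have hwR : (w : R) = (-1) ^ n * a n := by
    simp [hw, han]
  set D : ℤ → R := fun l => Matrix.det (Matrix.of fun r s : Fin n => ht (k r + l + s)) with hD
  have hstep : ∀ m : ℤ, D (m + 1) = D m * (w : R) := by
    intro m
    simp only [hD]
    rw [compC_step n ht a ha0 hrec k m, Matrix.det_mul, compC_det n a ha0, hwR]
  have key : ∀ m : ℤ, D m = ((w ^ m : Rˣ) : R) * D 0 := by
    intro m
    induction m using Int.induction_on with
    | zero => simp
    | succ p ih =>
      rw [hstep p, ih, zpow_add_one]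
      push_cast
      ring
    | pred p ih =>
      have h := hstep (-(p : ℤ) - 1)
      rw [sub_add_cancel, ih] at h
      have : D (-(p:ℤ) - 1) = D (-(p:ℤ) - 1) * (w : R) * ((w⁻¹ : Rˣ) : R) := by
        rw [mul_assoc, Units.mul_inv, mul_one]
      rw [this, ← h, zpow_sub_one]
      push_cast
      ring
  have hM0 : Matrix.det (Matrix.of fun r s : Fin n => ht (k r + s)) = D 0 := by
    simp only [hD]
    congr 1
    ext r s
    norm_num
  have keyl : (Matrix.of fun r s : Fin n => ht (k r + l + s)).det = ((w ^ l : Rˣ) : R) * D 0 := key l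
  rw [hM0, keyl]
  have hun : ((un ^ l : Rˣ) : R) = (((-1 : Rˣ) ^ (n * l) * w ^ l : Rˣ) : R) := by
    congr 1
    rw [hw, mul_zpow, ← zpow_natCast (-1 : Rˣ) n, ← zpow_mul, ← mul_assoc, ← zpow_add,
      Even.neg_one_zpow ⟨(n : ℤ) * l, rfl⟩, one_mul]
  rw [hun]
  push_cast
  ring
end

section
/- Let W be a finite group acting linearly on a complex inner-product space V and on the weight lattice P, let ω ∈ P have a 'small' orbit (meaning for all x, y ∈ Wω with x ≠ ±y, x − y lies in the root system R of W), and let F(ν) = ∏_{α∈R⁺} (ν, α). Suppose φ = Σ_ν φ(ν) e^ν ∈ Z[P] satisfies: Alt(φ) := Σ_{w∈W} ε(w) w(φ) = 0; the support of φ lies in the affine hyperplane (ν, ω) = c with c ≠ 0; and F(ν) ≠ 0 for all ν in the support of φ. Then Alt(φ·e^{tω}) = 0 for every integer t. -/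
open RealInnerProductSpace

namespace Stmt14

variable {V : Type*} [NormedAddCommGroup V] [InnerProductSpace ℝ V] [FiniteDimensional ℝ V]
variable {W : Type*} [Group W] [Fintype W]

/-- the alternation operation `Alt(φ) = Σ_{w∈W} ε(w)·w(φ)` on the group ring `ℤ[V]`,
where `w(e^ν) = e^{wν}`. -/
noncomputable def Alt (ρ : W →* (V ≃ₗᵢ[ℝ] V)) (ε : W →* ℤˣ) (φ : V →₀ ℤ) : V →₀ ℤ :=
  ∑ w : W, (ε w : ℤ) • Finsupp.mapDomain (ρ w) φ

/-- let `W` be a finite reflection group on a real inner-product space `V`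
with `W`-stable root system `R`, positive roots `R⁺`, sign character `ε`, and `W`-stable
weight lattice `P`.  Suppose `ω ∈ P` has a small orbit (`x, y ∈ Wω`, `x ≠ ±y` implies
`x − y ∈ R`).  If `φ ∈ ℤ[P]` satisfies `Alt(φ) = 0`, its support lies in the affine
hyperplane `(ν,ω) = c` with `c ≠ 0`, and `F(ν) = ∏_{α∈R⁺}(ν,α) ≠ 0` on the support,
then `Alt(φ·e^{tω}) = 0` for every integer `t`. -/
theorem statement14
    (ρ : W →* (V ≃ₗᵢ[ℝ] V)) (R Rp : Finset V)
    (hRpR : Rp ⊆ R)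
    (hpm : ∀ α ∈ R, α ∈ Rp ∨ -α ∈ Rp)
    (hRW : ∀ (w : W), ∀ α ∈ R, ρ w α ∈ R)
    (hgen : Subgroup.closure
      {w : W | ∃ α ∈ Rp, ρ w = (Submodule.reflection (ℝ ∙ α)ᗮ : V ≃ₗᵢ[ℝ] V)} = (⊤ : Subgroup W))
    (ε : W →* ℤˣ)
    (hε : ∀ (w : W), ∀ α ∈ Rp, ρ w = (Submodule.reflection (ℝ ∙ α)ᗮ : V ≃ₗᵢ[ℝ] V) → ε w = -1)
    (P : AddSubgroup V) (hPW : ∀ (w : W), ∀ p ∈ P, ρ w p ∈ P)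
    (ω : V) (hω : ω ∈ P)
    (hsmall : ∀ x y : V, (∃ w : W, ρ w ω = x) → (∃ w : W, ρ w ω = y) →
      x ≠ y → x ≠ -y → x - y ∈ R)
    (φ : V →₀ ℤ) (hφP : ∀ ν ∈ φ.support, ν ∈ P)
    (c : ℝ) (hc : c ≠ 0)
    (hhyp : ∀ ν ∈ φ.support, ⟪ν, ω⟫ = c)
    (hF : ∀ ν ∈ φ.support, (∏ α ∈ Rp, ⟪ν, α⟫) ≠ 0)
    (hAlt : Alt ρ ε φ = 0) :
    ∀ t : ℤ, Alt ρ ε (Finsupp.mapDomain (fun v => v + t • ω) φ) = 0 := by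
  classical
  -- `ρ w⁻¹` is `(ρ w).symm`
  have hsymm : ∀ w : W, (ρ w⁻¹ : V ≃ₗᵢ[ℝ] V) = (ρ w).symm := by
    intro w
    rw [map_inv, LinearIsometryEquiv.inv_def]
  have hRW' : ∀ (w : W), ∀ α ∈ R, (ρ w).symm α ∈ R := by
    intro w α hα
    have h := hRW w⁻¹ α hα
    rwa [hsymm] at h
  -- evaluation of mapDomain along an isometry equiv
  have hmap : ∀ (e : V ≃ₗᵢ[ℝ] V) (χ : V →₀ ℤ) (y : V),
      Finsupp.mapDomain (⇑e) χ y = χ (e.symm y) := by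
    intro e χ y
    conv_lhs => rw [← e.apply_symm_apply y]
    exact Finsupp.mapDomain_apply e.injective χ _
  -- evaluation of Alt
  have alt_apply : ∀ (χ : V →₀ ℤ) (y : V),
      (Alt ρ ε χ) y = ∑ w : W, (ε w : ℤ) * χ ((ρ w).symm y) := by
    intro χ y
    rw [Alt, Finsupp.finset_sum_apply]
    refine Finset.sum_congr rfl fun w _ => ?_
    rw [Finsupp.smul_apply, smul_eq_mul, hmap]
  have hAlt' : ∀ y : V, ∑ w : W, (ε w : ℤ) * φ ((ρ w).symm y) = 0 := by
    intro y
    rw [← alt_apply, hAlt, Finsupp.coe_zero, Pi.zero_apply]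
  -- key lemma: two elements sending support points to the same place send ω to the same place
  have key : ∀ (y : V) (w w' : W), φ ((ρ w).symm y) ≠ 0 → φ ((ρ w').symm y) ≠ 0 →
      ρ w ω = ρ w' ω := by
    intro y w w' h h'
    set ν := (ρ w).symm y with hν_def
    set ν' := (ρ w').symm y with hν'_def
    have hν : ν ∈ φ.support := Finsupp.mem_support_iff.2 h
    have hν' : ν' ∈ φ.support := Finsupp.mem_support_iff.2 h'
    have ha : ⟪y, ρ w ω⟫ = c := by
      have : ⟪ρ w ν, ρ w ω⟫ = ⟪ν, ω⟫ := (ρ w).inner_map_map ν ω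
      rw [hν_def, (ρ w).apply_symm_apply] at this
      rw [this]
      exact hhyp ν hν
    have hb : ⟪y, ρ w' ω⟫ = c := by
      have : ⟪ρ w' ν', ρ w' ω⟫ = ⟪ν', ω⟫ := (ρ w').inner_map_map ν' ω
      rw [hν'_def, (ρ w').apply_symm_apply] at this
      rw [this]
      exact hhyp ν' hν'
    by_contra hne
    rcases eq_or_ne (ρ w ω) (-(ρ w' ω)) with hm | hm
    · have : c = -c := by conv_lhs => rw [← ha, hm, inner_neg_right, hb]
      exact hc (by linarith)
    · have hR : ρ w ω - ρ w' ω ∈ R := hsmall _ _ ⟨w, rfl⟩ ⟨w', rfl⟩ hne hm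
      have hperp : ⟪y, ρ w ω - ρ w' ω⟫ = 0 := by
        rw [inner_sub_right, ha, hb]; ring
      have hγR : (ρ w).symm (ρ w ω - ρ w' ω) ∈ R := hRW' w _ hR
      have h0 : ⟪ν, (ρ w).symm (ρ w ω - ρ w' ω)⟫ = 0 := by
        have := (ρ w).symm.inner_map_map y (ρ w ω - ρ w' ω)
        rw [hperp] at this
        exact this
      have hfac : ∀ β ∈ Rp, ⟪ν, β⟫ ≠ 0 := by
        intro β hβ hzero
        exact hF ν hν (Finset.prod_eq_zero hβ hzero)
      rcases hpm _ hγR with hin | hin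
      · exact hfac _ hin h0
      · exact hfac _ hin (by rw [inner_neg_right, h0, neg_zero])
  intro t
  ext x
  rw [Finsupp.coe_zero, Pi.zero_apply, alt_apply]
  -- rewrite the shifted value
  have hshift : ∀ w : W, Finsupp.mapDomain (fun v => v + t • ω) φ ((ρ w).symm x)
      = φ ((ρ w).symm x - t • ω) := by
    intro w
    have : (ρ w).symm x = ((ρ w).symm x - t • ω) + t • ω := by abel
    conv_lhs => rw [this]
    exact Finsupp.mapDomain_apply (add_left_injective (t • ω)) φ _
  simp only [hshift]
  -- the term transform: (ρ w).symm x - t•ω = (ρ w).symm (x - t • ρ w ω)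
  have hterm : ∀ w : W, (ρ w).symm x - t • ω = (ρ w).symm (x - t • ρ w ω) := by
    intro w
    rw [map_sub, map_zsmul, (ρ w).symm_apply_apply]
  set S : Finset W := Finset.univ.filter (fun w => φ ((ρ w).symm x - t • ω) ≠ 0) with hS_def
  have hmemS : ∀ w : W, w ∈ S ↔ φ ((ρ w).symm x - t • ω) ≠ 0 := by
    intro w; simp [hS_def]
  have h1 : ∑ w : W, (ε w : ℤ) * φ ((ρ w).symm x - t • ω)
      = ∑ w ∈ S, (ε w : ℤ) * φ ((ρ w).symm x - t • ω) := by
    refine (Finset.sum_subset (Finset.subset_univ S) ?_).symm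
    intro w _ hw
    rw [hmemS] at hw
    push_neg at hw
    rw [hw, mul_zero]
  rw [h1, ← Finset.sum_fiberwise_of_maps_to (g := fun w => ρ w ω)
    (t := S.image (fun w => ρ w ω)) (fun w hw => Finset.mem_image_of_mem _ hw)]
  refine Finset.sum_eq_zero fun a ha => ?_
  obtain ⟨w₀, hw₀S, hw₀a⟩ := Finset.mem_image.1 ha
  have hw₀ : φ ((ρ w₀).symm (x - t • a)) ≠ 0 := by
    rw [← hw₀a, ← hterm]
    exact (hmemS w₀).1 hw₀S
  have step1 : ∑ w ∈ S.filter (fun w => ρ w ω = a), (ε w : ℤ) * φ ((ρ w).symm x - t • ω)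
      = ∑ w ∈ S.filter (fun w => ρ w ω = a), (ε w : ℤ) * φ ((ρ w).symm (x - t • a)) := by
    refine Finset.sum_congr rfl fun w hw => ?_
    obtain ⟨-, hwa⟩ := Finset.mem_filter.1 hw
    rw [hterm, hwa]
  rw [step1]
  have step2 : ∑ w ∈ S.filter (fun w => ρ w ω = a), (ε w : ℤ) * φ ((ρ w).symm (x - t • a))
      = ∑ w : W, (ε w : ℤ) * φ ((ρ w).symm (x - t • a)) := by
    refine Finset.sum_subset (Finset.subset_univ _) ?_
    intro w _ hw
    rcases eq_or_ne (φ ((ρ w).symm (x - t • a))) 0 with h0 | h0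
    · rw [h0, mul_zero]
    · exfalso
      apply hw
      have hwa : ρ w ω = a := (key (x - t • a) w w₀ h0 hw₀).trans hw₀a
      refine Finset.mem_filter.2 ⟨(hmemS w).2 ?_, hwa⟩
      rw [hterm, hwa]
      exact h0
  rw [step2]
  exact hAlt' (x - t • a)


end Stmt14
end

section
/- Let g(h,α) be the Lie superalgebra with even part a finite-dimensional abelian Lie algebra h, odd part spanned by X, Y, subject to [h,X] = α(h)X, [h,Y] = −α(h)Y, [X,X] = [Y,Y] = 0, [X,Y] = H, where H ∈ h, α ∈ h* is nonzero, and α(H) = 0. Then every finite-dimensional irreducible g(h,α)-module V with highest weight λ (i.e., with a vector v satisfying Xv = 0, hv = λ(h)v) is: one-dimensional with supercharacter e^λ if λ(H) = 0, and two-dimensional with supercharacter e^λ − e^{λ−α} if λ(H) ≠ 0. -/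
open scoped Classical

namespace Stmt15

open Module

variable {hL : Type*} [AddCommGroup hL] [Module ℂ hL]
variable {V : Type*} [AddCommGroup V] [Module ℂ V]

/-- the weight space `V_μ = {u : ρ(h)u = μ(h)u for all h}`. -/
noncomputable def wt (ρ : hL →ₗ[ℂ] Module.End ℂ V) (μ : hL →ₗ[ℂ] ℂ) : Submodule ℂ V :=
  ⨅ h : hL, LinearMap.ker (ρ h - μ h • (LinearMap.id : Module.End ℂ V))

/-- the even part of `V` with respect to the grading involution `gr`. -/
noncomputable def evenPart (gr : Module.End ℂ V) : Submodule ℂ V :=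
  LinearMap.ker (gr - LinearMap.id)

/-- the odd part of `V` with respect to the grading involution `gr`. -/
noncomputable def oddPart (gr : Module.End ℂ V) : Submodule ℂ V :=
  LinearMap.ker (gr + LinearMap.id)

/-- the coefficient `sdim V_μ` of the supercharacter at `e^μ`. -/
noncomputable def sdimWt (gr : Module.End ℂ V) (ρ : hL →ₗ[ℂ] Module.End ℂ V)
    (μ : hL →ₗ[ℂ] ℂ) : ℤ :=
  (finrank ℂ (wt ρ μ ⊓ evenPart gr : Submodule ℂ V) : ℤ) -
    (finrank ℂ (wt ρ μ ⊓ oddPart gr : Submodule ℂ V) : ℤ)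

/-- let `g(h,α)` be the solvable Lie superalgebra with abelian even part `h`,
odd part spanned by `X, Y`, relations `[h,X] = α(h)X`, `[h,Y] = −α(h)Y`,
`[X,X] = [Y,Y] = 0`, `[X,Y] = H`, where `α ≠ 0` and `α(H) = 0`.  Every
finite-dimensional (graded-)irreducible `g(h,α)`-module `V` with highest weight `λ`
(an even vector `v ≠ 0` with `Xv = 0`, `hv = λ(h)v`) is:
one-dimensional with supercharacter `e^λ` if `λ(H) = 0`, and two-dimensional with
supercharacter `e^λ − e^{λ−α}` if `λ(H) ≠ 0`. -/
theorem statement15 [FiniteDimensional ℂ V]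
    (α : hL →ₗ[ℂ] ℂ) (hα : α ≠ 0) (H : hL) (hαH : α H = 0)
    (gr : Module.End ℂ V) (hgr : gr * gr = 1)
    (ρ : hL →ₗ[ℂ] Module.End ℂ V) (Xop Yop : Module.End ℂ V)
    -- h acts as an abelian Lie algebra of even operators
    (hcomm : ∀ h₁ h₂ : hL, ρ h₁ * ρ h₂ = ρ h₂ * ρ h₁)
    (hρeven : ∀ h : hL, ρ h * gr = gr * ρ h)
    -- X, Y are odd
    (hXodd : Xop * gr = -(gr * Xop)) (hYodd : Yop * gr = -(gr * Yop))
    -- the bracket relations of g(h,α)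
    (hHX : ∀ h : hL, ρ h * Xop - Xop * ρ h = α h • Xop)
    (hHY : ∀ h : hL, ρ h * Yop - Yop * ρ h = -(α h) • Yop)
    (hXX : Xop * Xop = 0) (hYY : Yop * Yop = 0)
    (hXY : Xop * Yop + Yop * Xop = ρ H)
    -- V is an irreducible graded module
    (hirr : ∀ U : Submodule ℂ V, (∀ u ∈ U, gr u ∈ U) → (∀ h : hL, ∀ u ∈ U, ρ h u ∈ U) →
      (∀ u ∈ U, Xop u ∈ U) → (∀ u ∈ U, Yop u ∈ U) → U = ⊥ ∨ U = ⊤)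
    -- highest weight vector of weight λ, taken even
    (lam : hL →ₗ[ℂ] ℂ) (v : V) (hv : v ≠ 0) (hvev : gr v = v)
    (hXv : Xop v = 0) (hwt : ∀ h : hL, ρ h v = lam h • v) :
    (lam H = 0 →
      finrank ℂ V = 1 ∧
        ∀ μ : hL →ₗ[ℂ] ℂ, sdimWt gr ρ μ = if μ = lam then 1 else 0) ∧
    (lam H ≠ 0 →
      finrank ℂ V = 2 ∧
        ∀ μ : hL →ₗ[ℂ] ℂ, sdimWt gr ρ μ =
          if μ = lam then 1 else if μ = lam - α then -1 else 0) := by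
  -- membership characterizations
  have mem_wt : ∀ (μ : hL →ₗ[ℂ] ℂ) (u : V), u ∈ wt ρ μ ↔ ∀ h, ρ h u = μ h • u := by
    intro μ u
    simp [wt, Submodule.mem_iInf, LinearMap.mem_ker, LinearMap.sub_apply,
      LinearMap.smul_apply, sub_eq_zero]
  have mem_even : ∀ u : V, u ∈ evenPart gr ↔ gr u = u := by
    intro u
    simp [evenPart, LinearMap.mem_ker, LinearMap.sub_apply, sub_eq_zero]
  have mem_odd : ∀ u : V, u ∈ oddPart gr ↔ gr u = -u := by
    intro u
    simp [oddPart, LinearMap.mem_ker, LinearMap.add_apply, add_eq_zero_iff_eq_neg]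
  set w := Yop v with hwdef
  have hgrw : gr w = -w := by
    have h1 := congrArg (fun f : Module.End ℂ V => f v) hYodd
    simp only [Module.End.mul_apply, LinearMap.neg_apply] at h1
    rw [hvev] at h1
    exact neg_eq_iff_eq_neg.mp h1.symm
  have hρw : ∀ h : hL, ρ h w = (lam h - α h) • w := by
    intro h
    have h1 := congrArg (fun f : Module.End ℂ V => f v) (hHY h)
    simp only [Module.End.mul_apply, LinearMap.sub_apply, LinearMap.smul_apply] at h1
    rw [hwt h, map_smul] at h1
    have h2 : ρ h w = lam h • w + (-(α h)) • w := by
      rw [← h1]; abel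
    rw [h2, sub_smul, neg_smul]; abel
  have hXw : Xop w = lam H • v := by
    have h1 := congrArg (fun f : Module.End ℂ V => f v) hXY
    simp only [Module.End.mul_apply, LinearMap.add_apply] at h1
    rw [hXv, map_zero, add_zero, hwt H] at h1
    exact h1
  have hYw : Yop w = 0 := by
    have h1 := congrArg (fun f : Module.End ℂ V => f v) hYY
    simpa only [Module.End.mul_apply, LinearMap.zero_apply] using h1
  -- the span of v and w is all of V
  set U : Submodule ℂ V := Submodule.span ℂ ({v, w} : Set V) with hUdef
  have hvU : v ∈ U := Submodule.subset_span (Set.mem_insert _ _)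
  have hwU : w ∈ U := Submodule.subset_span (Set.mem_insert_of_mem _ rfl)
  have hstab : ∀ T : Module.End ℂ V, T v ∈ U → T w ∈ U → ∀ u ∈ U, T u ∈ U := by
    intro T hTv hTw u hu
    obtain ⟨a, b, rfl⟩ := Submodule.mem_span_pair.mp hu
    rw [map_add, map_smul, map_smul]
    exact U.add_mem (U.smul_mem _ hTv) (U.smul_mem _ hTw)
  have hUtop : U = ⊤ := by
    rcases hirr U
      (hstab gr (by rw [hvev]; exact hvU) (by rw [hgrw]; exact U.neg_mem hwU))
      (fun h => hstab (ρ h) (by rw [hwt h]; exact U.smul_mem _ hvU)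
        (by rw [hρw h]; exact U.smul_mem _ hwU))
      (hstab Xop (by rw [hXv]; exact U.zero_mem) (by rw [hXw]; exact U.smul_mem _ hvU))
      (hstab Yop hwU (by rw [hYw]; exact U.zero_mem)) with h | h
    · exact absurd ((Submodule.mem_bot ℂ).mp (h ▸ hvU)) hv
    · exact h
  have hrep : ∀ u : V, ∃ a b : ℂ, a • v + b • w = u := by
    intro u
    have hu : u ∈ U := by rw [hUtop]; trivial
    exact Submodule.mem_span_pair.mp hu
  constructor
  · -- case lam H = 0
    intro hlamH
    have hw0 : w = 0 := by
      by_contra hw0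
      set U' : Submodule ℂ V := Submodule.span ℂ ({w} : Set V) with hU'def
      have hwU' : w ∈ U' := Submodule.mem_span_singleton_self w
      have hstab' : ∀ T : Module.End ℂ V, T w ∈ U' → ∀ u ∈ U', T u ∈ U' := by
        intro T hT u hu
        obtain ⟨c, rfl⟩ := Submodule.mem_span_singleton.mp hu
        rw [map_smul]
        exact U'.smul_mem _ hT
      rcases hirr U'
        (hstab' gr (by rw [hgrw]; exact U'.neg_mem hwU'))
        (fun h => hstab' (ρ h) (by rw [hρw h]; exact U'.smul_mem _ hwU'))
        (hstab' Xop (by rw [hXw, hlamH, zero_smul]; exact U'.zero_mem))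
        (hstab' Yop (by rw [hYw]; exact U'.zero_mem)) with h | h
      · exact hw0 ((Submodule.mem_bot ℂ).mp (h ▸ hwU'))
      · have hvU' : v ∈ U' := by rw [h]; trivial
        obtain ⟨c, hc⟩ := Submodule.mem_span_singleton.mp hvU'
        have h2 : gr v = -v := by
          rw [← hc, map_smul, hgrw, smul_neg]
        rw [hvev] at h2
        have h3 : (2 : ℂ) • v = 0 := by
          rw [two_smul]
          exact add_eq_zero_iff_eq_neg.mpr h2
        rcases smul_eq_zero.mp h3 with h4 | h4
        · norm_num at h4
        · exact hv h4
    have hall : ∀ u : V, ∃ a : ℂ, a • v = u := by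
      intro u
      obtain ⟨a, b, hab⟩ := hrep u
      exact ⟨a, by rw [← hab, hw0, smul_zero, add_zero]⟩
    have hgrall : ∀ u : V, gr u = u := by
      intro u
      obtain ⟨a, rfl⟩ := hall u
      rw [map_smul, hvev]
    have hwtall : ∀ (h : hL) (u : V), ρ h u = lam h • u := by
      intro h u
      obtain ⟨a, rfl⟩ := hall u
      rw [map_smul, hwt h, smul_comm]
    refine ⟨finrank_eq_one v hv hall, ?_⟩
    intro μ
    have hoddbot : oddPart gr = ⊥ := by
      rw [eq_bot_iff]
      intro u hu
      have h1 : gr u = -u := (mem_odd u).mp hu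
      rw [hgrall u] at h1
      have h3 : (2 : ℂ) • u = 0 := by
        rw [two_smul]; exact add_eq_zero_iff_eq_neg.mpr h1
      rcases smul_eq_zero.mp h3 with h4 | h4
      · norm_num at h4
      · simp [h4]
    by_cases hμ : μ = lam
    · subst hμ
      have hwttop : wt ρ μ = ⊤ := by
        rw [eq_top_iff]
        intro u _
        exact (mem_wt μ u).mpr (fun h => hwtall h u)
      have heventop : evenPart gr = ⊤ := by
        rw [eq_top_iff]
        intro u _
        exact (mem_even u).mpr (hgrall u)
      rw [if_pos rfl]
      have e1 : wt ρ μ ⊓ evenPart gr = (⊤ : Submodule ℂ V) := by rw [hwttop, heventop, top_inf_eq]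
      have e2 : wt ρ μ ⊓ oddPart gr = (⊥ : Submodule ℂ V) := by rw [hoddbot, inf_bot_eq]
      simp only [sdimWt]
      rw [e1, e2]
      simp [finrank_top, finrank_eq_one v hv hall]
    · have hμ' : ∃ h0 : hL, μ h0 ≠ lam h0 := by
        by_contra hcon
        push_neg at hcon
        exact hμ (LinearMap.ext hcon)
      obtain ⟨h0, hh0⟩ := hμ'
      have hwtbot : wt ρ μ = ⊥ := by
        rw [eq_bot_iff]
        intro u hu
        have h1 : ρ h0 u = μ h0 • u := (mem_wt μ u).mp hu h0
        rw [hwtall h0 u] at h1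
        have h2 : (lam h0 - μ h0) • u = 0 := by
          rw [sub_smul, h1, sub_self]
        rcases smul_eq_zero.mp h2 with h4 | h4
        · exact absurd (sub_eq_zero.mp h4).symm hh0
        · simp [h4]
      rw [if_neg hμ]
      have e1 : wt ρ μ ⊓ evenPart gr = (⊥ : Submodule ℂ V) := by rw [hwtbot, bot_inf_eq]
      have e2 : wt ρ μ ⊓ oddPart gr = (⊥ : Submodule ℂ V) := by rw [hwtbot, bot_inf_eq]
      simp only [sdimWt]
      rw [e1, e2]
      simp
  · -- case lam H ≠ 0
    intro hlamH
    have hw0 : w ≠ 0 := by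
      intro h
      rw [h, map_zero] at hXw
      rcases smul_eq_zero.mp hXw.symm with h4 | h4
      · exact hlamH h4
      · exact hv h4
    have hco : ∀ a b : ℂ, a • v + b • w = 0 → a = 0 ∧ b = 0 := by
      intro a b hab
      have h1 : a • v - b • w = 0 := by
        have h2 := congrArg gr hab
        rw [map_add, map_smul, map_smul, hvev, hgrw, map_zero, smul_neg] at h2
        rw [sub_eq_add_neg]
        exact h2
      have ha : a • v = 0 := by
        have h3 : (2 : ℂ) • (a • v) = 0 := by
          have h4 : (a • v + b • w) + (a • v - b • w) = (2 : ℂ) • (a • v) := by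
            rw [two_smul]; abel
          rw [hab, h1, add_zero] at h4
          exact h4.symm
        rcases smul_eq_zero.mp h3 with h4 | h4
        · norm_num at h4
        · exact h4
      have ha0 : a = 0 := by
        rcases smul_eq_zero.mp ha with h4 | h4
        · exact h4
        · exact absurd h4 hv
      refine ⟨ha0, ?_⟩
      rw [ha, zero_add] at hab
      rcases smul_eq_zero.mp hab with h4 | h4
      · exact h4
      · exact absurd h4 hw0
    have hkey : ∀ a b a' b' : ℂ, a • v + b • w = a' • v + b' • w → a = a' ∧ b = b' := by
      intro a b a' b' h
      have h2 : (a - a') • v + (b - b') • w = (a • v + b • w) - (a' • v + b' • w) := by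
        rw [sub_smul, sub_smul]; abel
      rw [h, sub_self] at h2
      obtain ⟨h3, h4⟩ := hco _ _ h2
      exact ⟨sub_eq_zero.mp h3, sub_eq_zero.mp h4⟩
    -- finrank = 2
    have hli : LinearIndependent ℂ ![v, w] :=
      LinearIndependent.pair_iff.mpr (fun s t hst => hco s t hst)
    have hrange : Set.range ![v, w] = ({v, w} : Set V) := by
      ext x
      simp [Fin.exists_fin_two]
      tauto
    have hsp : ⊤ ≤ Submodule.span ℂ (Set.range ![v, w]) := by
      rw [hrange, ← hUdef, hUtop]
    have hrank : finrank ℂ V = 2 := by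
      rw [finrank_eq_card_basis (Basis.mk hli hsp)]
      simp
    refine ⟨hrank, ?_⟩
    -- pick h0 with α h0 ≠ 0
    have hα0 : ∃ h0 : hL, α h0 ≠ 0 := by
      by_contra hcon
      push_neg at hcon
      exact hα (LinearMap.ext hcon)
    obtain ⟨h0, hh0⟩ := hα0
    have hact : ∀ (h : hL) (a b : ℂ),
        ρ h (a • v + b • w) = (a * lam h) • v + (b * (lam h - α h)) • w := by
      intro h a b
      rw [map_add, map_smul, map_smul, hwt h, hρw h, smul_smul, smul_smul]
    -- characterizations
    have hevenchar : ∀ u : V, u ∈ evenPart gr ↔ ∃ a : ℂ, a • v = u := by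
      intro u
      rw [mem_even]
      constructor
      · intro hgu
        obtain ⟨a, b, rfl⟩ := hrep u
        rw [map_add, map_smul, map_smul, hvev, hgrw, smul_neg, ← neg_smul] at hgu
        obtain ⟨_, hb⟩ := hkey _ _ _ _ hgu
        have hb0 : b = 0 := by linear_combination (-1/2 : ℂ) * hb
        exact ⟨a, by rw [hb0, zero_smul, add_zero]⟩
      · rintro ⟨a, rfl⟩
        rw [map_smul, hvev]
    have hoddchar : ∀ u : V, u ∈ oddPart gr ↔ ∃ b : ℂ, b • w = u := by
      intro u
      rw [mem_odd]
      constructor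
      · intro hgu
        obtain ⟨a, b, rfl⟩ := hrep u
        rw [map_add, map_smul, map_smul, hvev, hgrw, smul_neg, ← neg_smul,
          neg_add, ← neg_smul, ← neg_smul] at hgu
        obtain ⟨ha, _⟩ := hkey _ _ _ _ hgu
        have ha0 : a = 0 := by linear_combination (1/2 : ℂ) * ha
        exact ⟨b, by rw [ha0, zero_smul, zero_add]⟩
      · rintro ⟨b, rfl⟩
        rw [map_smul, hgrw, smul_neg]
    have hwtlam : ∀ u : V, u ∈ wt ρ lam ↔ ∃ a : ℂ, a • v = u := by
      intro u
      rw [mem_wt]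
      constructor
      · intro hu
        obtain ⟨a, b, rfl⟩ := hrep u
        have h1 := hu h0
        rw [hact, smul_add, smul_smul, smul_smul] at h1
        obtain ⟨_, hb⟩ := hkey _ _ _ _ h1
        have hb0 : b = 0 := by
          have : b * α h0 = 0 := by linear_combination -hb
          rcases mul_eq_zero.mp this with h' | h'
          · exact h'
          · exact absurd h' hh0
        exact ⟨a, by rw [hb0, zero_smul, add_zero]⟩
      · rintro ⟨a, rfl⟩
        intro h
        rw [map_smul, hwt h, smul_comm]
    have hwtla : ∀ u : V, u ∈ wt ρ (lam - α) ↔ ∃ b : ℂ, b • w = u := by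
      intro u
      rw [mem_wt]
      constructor
      · intro hu
        obtain ⟨a, b, rfl⟩ := hrep u
        have h1 := hu h0
        rw [hact, smul_add, smul_smul, smul_smul, LinearMap.sub_apply] at h1
        obtain ⟨ha, _⟩ := hkey _ _ _ _ h1
        have ha0 : a = 0 := by
          have : a * α h0 = 0 := by linear_combination ha
          rcases mul_eq_zero.mp this with h' | h'
          · exact h'
          · exact absurd h' hh0
        exact ⟨b, by rw [ha0, zero_smul, zero_add]⟩
      · rintro ⟨b, rfl⟩
        intro h
        rw [map_smul, hρw h, smul_comm, LinearMap.sub_apply]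
    have hlamne : lam ≠ lam - α := by
      intro h
      apply hα
      have h2 : lam + α = lam := by
        rw [eq_sub_iff_add_eq] at h
        exact h
      exact add_eq_left.mp h2
    intro μ
    by_cases hμ1 : μ = lam
    · subst hμ1
      have h1 : wt ρ μ ⊓ evenPart gr = Submodule.span ℂ ({v} : Set V) := by
        ext u
        rw [Submodule.mem_inf, hwtlam, hevenchar, Submodule.mem_span_singleton]
        exact ⟨fun h => h.1, fun h => ⟨h, h⟩⟩
      have h2 : wt ρ μ ⊓ oddPart gr = ⊥ := by
        rw [eq_bot_iff]
        intro u hu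
        rw [Submodule.mem_inf, hwtlam, hoddchar] at hu
        obtain ⟨⟨a, ha⟩, ⟨b, hb⟩⟩ := hu
        have h3 : a • v + (-b) • w = 0 := by
          rw [neg_smul, ha, hb]; abel
        obtain ⟨ha0, _⟩ := hco _ _ h3
        rw [← ha, ha0, zero_smul]
        simp
      rw [if_pos rfl]
      simp only [sdimWt]
      rw [h1, h2]
      simp [finrank_span_singleton hv]
    · by_cases hμ2 : μ = lam - α
      · subst hμ2
        have h1 : wt ρ (lam - α) ⊓ evenPart gr = ⊥ := by
          rw [eq_bot_iff]
          intro u hu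
          rw [Submodule.mem_inf, hwtla, hevenchar] at hu
          obtain ⟨⟨b, hb⟩, ⟨a, ha⟩⟩ := hu
          have h3 : a • v + (-b) • w = 0 := by
            rw [neg_smul, ha, hb]; abel
          obtain ⟨_, hb0⟩ := hco _ _ h3
          have hb0' : b = 0 := by linear_combination -hb0
          rw [← hb, hb0', zero_smul]
          simp
        have h2 : wt ρ (lam - α) ⊓ oddPart gr = Submodule.span ℂ ({w} : Set V) := by
          ext u
          rw [Submodule.mem_inf, hwtla, hoddchar, Submodule.mem_span_singleton]
          exact ⟨fun h => h.1, fun h => ⟨h, h⟩⟩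
        rw [if_neg hμ1, if_pos rfl]
        simp only [sdimWt]
        rw [h1, h2]
        simp [finrank_span_singleton hw0]
      · -- μ different from both weights: wt μ = ⊥
        have hμ1' : ∃ h1 : hL, μ h1 ≠ lam h1 := by
          by_contra hcon
          push_neg at hcon
          exact hμ1 (LinearMap.ext hcon)
        have hμ2' : ∃ h2 : hL, μ h2 ≠ lam h2 - α h2 := by
          by_contra hcon
          push_neg at hcon
          exact hμ2 (LinearMap.ext (fun x => by rw [hcon x, LinearMap.sub_apply]))
        obtain ⟨h1, hh1⟩ := hμ1'
        obtain ⟨h2, hh2⟩ := hμ2'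
        have hwtbot : wt ρ μ = ⊥ := by
          rw [eq_bot_iff]
          intro u hu
          rw [mem_wt] at hu
          obtain ⟨a, b, rfl⟩ := hrep u
          have e1 := hu h1
          rw [hact, smul_add, smul_smul, smul_smul] at e1
          obtain ⟨ea, _⟩ := hkey _ _ _ _ e1
          have ha0 : a = 0 := by
            have : a * (lam h1 - μ h1) = 0 := by linear_combination ea
            rcases mul_eq_zero.mp this with h' | h'
            · exact h'
            · exact absurd (sub_eq_zero.mp h').symm hh1
          have e2 := hu h2
          rw [hact, smul_add, smul_smul, smul_smul] at e2
          obtain ⟨_, eb⟩ := hkey _ _ _ _ e2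
          have hb0 : b = 0 := by
            have : b * (lam h2 - α h2 - μ h2) = 0 := by linear_combination eb
            rcases mul_eq_zero.mp this with h' | h'
            · exact h'
            · exact absurd (sub_eq_zero.mp h').symm hh2
          rw [ha0, hb0, zero_smul, zero_smul, add_zero]
          simp
        rw [if_neg hμ1, if_neg hμ2]
        have e1 : wt ρ μ ⊓ evenPart gr = (⊥ : Submodule ℂ V) := by rw [hwtbot, bot_inf_eq]
        have e2 : wt ρ μ ⊓ oddPart gr = (⊥ : Submodule ℂ V) := by rw [hwtbot, bot_inf_eq]
        simp only [sdimWt]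
        rw [e1, e2]
        simp

end Stmt15
end
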